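/- arXiv:1309.7210 — 7 statements merged into one kernel-verified Lean document; each statement's English description precedes it below -/
import Mathlib

section
/- Fix μ ∈ ℝ, σ > 0, r > 0, λ ≥ 0 with μ < r + λ, and K > 0. Set p = 1/2 − μ/σ², β = p + √(p² + 2(r+λ)/σ²), α = p − √(p² + 2(r+λ)/σ²), B = β − α, m'(y) = (2/σ²) y^{2μ/σ² − 2}, x̂ = βK/(β−1), and σ̃(y) = ((r+λ−μ)y − K(r+λ)) for y ≥ x̂ and σ̃(y) = 0 for 0 < y < x̂. Then all the integrals below converge and for every x > 0: B^{-1}[ x^{α} ∫₀^x y^{β} σ̃(y) m'(y) dy + x^{β} ∫_x^∞ y^{α} σ̃(y) m'(y) dy ] equals x − K if x ≥ x̂, and equals ((x̂ − K)/x̂^{β}) x^{β} if 0 < x ≤ x̂. -/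
set_option maxHeartbeats 1000000


open Real Set MeasureTheory

/-- Riesz representation `V̂ = R_{r+λ}σ̃` of the perpetual American call value for geometric
Brownian motion: the Green-kernel resolvent at rate `r+λ` of the density
`σ̃(y) = (r+λ−μ)y − K(r+λ)` on `[x̂,∞)` (and `0` below `x̂`) equals `x − K` above the
threshold `x̂ = βK/(β−1)` and `((x̂−K)/x̂^β) x^β` below it. -/
theorem call_value_riesz_representation
    (μ σ r lam K : ℝ) (hσ : 0 < σ) (hr : 0 < r) (hlam : 0 ≤ lam)
    (hμ : μ < r + lam) (hK : 0 < K)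
    (p β α B : ℝ)
    (hp : p = 1 / 2 - μ / σ ^ 2)
    (hβ : β = p + Real.sqrt (p ^ 2 + 2 * (r + lam) / σ ^ 2))
    (hα : α = p - Real.sqrt (p ^ 2 + 2 * (r + lam) / σ ^ 2))
    (hB : B = β - α)
    (m' : ℝ → ℝ) (hm : ∀ y : ℝ, m' y = 2 / σ ^ 2 * y ^ (2 * μ / σ ^ 2 - 2))
    (xhat : ℝ) (hxhat : xhat = β * K / (β - 1))
    (st : ℝ → ℝ)
    (hst : ∀ y : ℝ, st y = if xhat ≤ y then (r + lam - μ) * y - K * (r + lam) else 0) :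
    ∀ x : ℝ, 0 < x →
      IntegrableOn (fun y => y ^ β * st y * m' y) (Set.Ioo 0 x)
      ∧ IntegrableOn (fun y => y ^ α * st y * m' y) (Set.Ioi x)
      ∧ (xhat ≤ x →
          B⁻¹ * (x ^ α * (∫ y in Set.Ioo (0 : ℝ) x, y ^ β * st y * m' y)
              + x ^ β * (∫ y in Set.Ioi x, y ^ α * st y * m' y))
            = x - K)
      ∧ (x ≤ xhat →
          B⁻¹ * (x ^ α * (∫ y in Set.Ioo (0 : ℝ) x, y ^ β * st y * m' y)
              + x ^ β * (∫ y in Set.Ioi x, y ^ α * st y * m' y))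
            = (xhat - K) / xhat ^ β * x ^ β) := by
  have hσ2 : (0:ℝ) < σ ^ 2 := by positivity
  have hrl : (0:ℝ) < r + lam := by linarith
  have h2' : (0:ℝ) < 2 * (r + lam) / σ ^ 2 := div_pos (by linarith) hσ2
  have hpos : (0:ℝ) < p ^ 2 + 2 * (r + lam) / σ ^ 2 :=
    add_pos_of_nonneg_of_pos (sq_nonneg p) h2'
  have hsq : Real.sqrt (p ^ 2 + 2 * (r + lam) / σ ^ 2) ^ 2
      = p ^ 2 + 2 * (r + lam) / σ ^ 2 := Real.sq_sqrt hpos.le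
  have hs0 : 0 < Real.sqrt (p ^ 2 + 2 * (r + lam) / σ ^ 2) := Real.sqrt_pos.2 hpos
  have hsum : α + β = 2 * p := by rw [hα, hβ]; ring
  have hαβ : α * β = -(2 * (r + lam) / σ ^ 2) := by
    rw [hα, hβ]; linear_combination -hsq
  have hq : 2 * μ / σ ^ 2 = 1 - (α + β) := by rw [hsum, hp]; ring
  have hA : 2 * (r + lam - μ) / σ ^ 2 = (1 - α) * (β - 1) := by
    linear_combination hαβ - hq
  have hμσ : 2 * μ / σ ^ 2 < 2 * (r + lam) / σ ^ 2 := by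
    rw [div_eq_mul_inv, div_eq_mul_inv]
    exact mul_lt_mul_of_pos_right (by linarith) (inv_pos.2 hσ2)
  have h1p : 2 * μ / σ ^ 2 = 1 - 2 * p := by rw [hq, hsum]
  have hβ1 : 1 < β := by rw [hβ]; nlinarith [hsq, hs0, h1p, hμσ]
  have hα0 : α < 0 := by rw [hα]; nlinarith [hsq, hs0, h2']
  have hβ1' : β - 1 ≠ 0 := by intro h; nlinarith
  have H : (β - 1) * xhat = β * K := by rw [hxhat]; field_simp
  have hxhatK : K < xhat := by nlinarith [hβ1, hK]
  have hxhat0 : 0 < xhat := hK.trans hxhatK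
  have hB0 : 0 < B := by rw [hB]; linarith
  have hBne : B ≠ 0 := ne_of_gt hB0
  have hαne : α ≠ 0 := ne_of_lt hα0
  have h1α : (1:ℝ) - α ≠ 0 := by linarith
  have hβne : β ≠ 0 := by linarith
  have hexp : 2 * μ / σ ^ 2 - 2 = -α - β - 1 := by linarith
  -- pointwise identities on [xhat, ∞)
  have key1 : ∀ y : ℝ, xhat ≤ y →
      y ^ β * st y * m' y = (1 - α) * (β - 1) * y ^ (-α) + α * β * K * y ^ (-α - 1) := by
    intro y hy
    have hy0 : 0 < y := lt_of_lt_of_le hxhat0 hy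
    rw [hst, if_pos hy, hm, hexp]
    have e1 : y ^ β * y ^ (-α - β - 1) = y ^ (-α - 1) := by
      rw [← Real.rpow_add hy0]; congr 1; ring
    have e2 : y ^ (-α - 1) * y = y ^ (-α) := by
      rw [← Real.rpow_add_one (ne_of_gt hy0)]; congr 1; ring
    calc y ^ β * ((r + lam - μ) * y - K * (r + lam)) * (2 / σ ^ 2 * y ^ (-α - β - 1))
        = (2 * (r + lam - μ) / σ ^ 2) * (y ^ β * y ^ (-α - β - 1) * y)
          - (2 * (r + lam) / σ ^ 2) * K * (y ^ β * y ^ (-α - β - 1)) := by ring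
      _ = (2 * (r + lam - μ) / σ ^ 2) * (y ^ (-α - 1) * y)
          - (2 * (r + lam) / σ ^ 2) * K * y ^ (-α - 1) := by rw [e1]
      _ = (2 * (r + lam - μ) / σ ^ 2) * y ^ (-α)
          - (2 * (r + lam) / σ ^ 2) * K * y ^ (-α - 1) := by rw [e2]
      _ = (1 - α) * (β - 1) * y ^ (-α) + α * β * K * y ^ (-α - 1) := by
          linear_combination y ^ (-α) * hA - K * y ^ (-α - 1) * hαβ
  have key2 : ∀ y : ℝ, xhat ≤ y →
      y ^ α * st y * m' y = (1 - α) * (β - 1) * y ^ (-β) + α * β * K * y ^ (-β - 1) := by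
    intro y hy
    have hy0 : 0 < y := lt_of_lt_of_le hxhat0 hy
    rw [hst, if_pos hy, hm, hexp]
    have e1 : y ^ α * y ^ (-α - β - 1) = y ^ (-β - 1) := by
      rw [← Real.rpow_add hy0]; congr 1; ring
    have e2 : y ^ (-β - 1) * y = y ^ (-β) := by
      rw [← Real.rpow_add_one (ne_of_gt hy0)]; congr 1; ring
    calc y ^ α * ((r + lam - μ) * y - K * (r + lam)) * (2 / σ ^ 2 * y ^ (-α - β - 1))
        = (2 * (r + lam - μ) / σ ^ 2) * (y ^ α * y ^ (-α - β - 1) * y)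
          - (2 * (r + lam) / σ ^ 2) * K * (y ^ α * y ^ (-α - β - 1)) := by ring
      _ = (2 * (r + lam - μ) / σ ^ 2) * (y ^ (-β - 1) * y)
          - (2 * (r + lam) / σ ^ 2) * K * y ^ (-β - 1) := by rw [e1]
      _ = (2 * (r + lam - μ) / σ ^ 2) * y ^ (-β)
          - (2 * (r + lam) / σ ^ 2) * K * y ^ (-β - 1) := by rw [e2]
      _ = (1 - α) * (β - 1) * y ^ (-β) + α * β * K * y ^ (-β - 1) := by
          linear_combination y ^ (-β) * hA - K * y ^ (-β - 1) * hαβ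
  -- indicator representations
  have hfβ : (fun y : ℝ => y ^ β * st y * m' y)
      = (Ici xhat).indicator
          (fun y => (1 - α) * (β - 1) * y ^ (-α) + α * β * K * y ^ (-α - 1)) := by
    funext y
    by_cases hy : xhat ≤ y
    · rw [Set.indicator_of_mem (mem_Ici.mpr hy)]; exact key1 y hy
    · rw [Set.indicator_of_notMem (fun h => hy (mem_Ici.mp h)), hst, if_neg hy]; ring
  have hfα : (fun y : ℝ => y ^ α * st y * m' y)
      = (Ici xhat).indicator
          (fun y => (1 - α) * (β - 1) * y ^ (-β) + α * β * K * y ^ (-β - 1)) := by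
    funext y
    by_cases hy : xhat ≤ y
    · rw [Set.indicator_of_mem (mem_Ici.mpr hy)]; exact key2 y hy
    · rw [Set.indicator_of_notMem (fun h => hy (mem_Ici.mp h)), hst, if_neg hy]; ring
  -- continuity of the density on [xhat, ∞)
  have hcont : ∀ e : ℝ, ContinuousOn (fun y : ℝ => y ^ e) (Ici xhat) := fun e =>
    ContinuousOn.rpow_const continuousOn_id
      (fun y hy => Or.inl (ne_of_gt (lt_of_lt_of_le hxhat0 hy)))
  have hgβcont : ContinuousOn
      (fun y : ℝ => (1 - α) * (β - 1) * y ^ (-α) + α * β * K * y ^ (-α - 1)) (Ici xhat) :=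
    (continuousOn_const.mul (hcont (-α))).add (continuousOn_const.mul (hcont (-α - 1)))
  -- integrability of the tail density on Ioi c for c > 0
  have hIoi : ∀ c : ℝ, 0 < c → IntegrableOn
      (fun y : ℝ => (1 - α) * (β - 1) * y ^ (-β) + α * β * K * y ^ (-β - 1)) (Ioi c) := by
    intro c hc
    exact ((integrableOn_Ioi_rpow_of_lt (by linarith) hc).const_mul _).add
      ((integrableOn_Ioi_rpow_of_lt (by linarith) hc).const_mul _)
  intro x hx
  rw [hfβ, hfα]
  have hIooInt : IntegrableOn
      ((Ici xhat).indicator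
        (fun y => (1 - α) * (β - 1) * y ^ (-α) + α * β * K * y ^ (-α - 1))) (Ioo 0 x) := by
    rw [IntegrableOn, integrable_indicator_iff measurableSet_Ici, IntegrableOn,
      Measure.restrict_restrict measurableSet_Ici]
    have hsub : Ici xhat ∩ Ioo 0 x ⊆ Icc xhat (max xhat x) := by
      rintro y ⟨h1, _, h3⟩
      exact ⟨h1, le_max_of_le_right h3.le⟩
    exact ((hgβcont.mono Icc_subset_Ici_self).integrableOn_Icc).mono_set hsub
  have hIoiInt : IntegrableOn
      ((Ici xhat).indicator
        (fun y => (1 - α) * (β - 1) * y ^ (-β) + α * β * K * y ^ (-β - 1))) (Ioi x) := by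
    rw [IntegrableOn, integrable_indicator_iff measurableSet_Ici, IntegrableOn,
      Measure.restrict_restrict measurableSet_Ici]
    have hsub : Ici xhat ∩ Ioi x ⊆ Ioi (min xhat x) := by
      rintro y ⟨_, h2⟩
      exact lt_of_le_of_lt (min_le_right _ _) (mem_Ioi.mp h2)
    exact (hIoi _ (lt_min hxhat0 hx)).mono_set hsub
  refine ⟨hIooInt, hIoiInt, ?_, ?_⟩
  · -- case xhat ≤ x
    intro hxx
    have I1 : (∫ y in Ioo (0:ℝ) x,
        (Ici xhat).indicator
          (fun y => (1 - α) * (β - 1) * y ^ (-α) + α * β * K * y ^ (-α - 1)) y)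
        = (β - 1) * (x ^ (1 - α) - xhat ^ (1 - α)) - β * K * (x ^ (-α) - xhat ^ (-α)) := by
      rw [integral_indicator measurableSet_Ici, Measure.restrict_restrict measurableSet_Ici]
      have hset : Ici xhat ∩ Ioo 0 x = Ico xhat x := by
        ext y
        simp only [mem_inter_iff, mem_Ici, mem_Ioo, mem_Ico]
        constructor
        · rintro ⟨h1, _, h3⟩; exact ⟨h1, h3⟩
        · rintro ⟨h1, h2⟩; exact ⟨h1, hxhat0.trans_le h1, h2⟩
      rw [hset, integral_Ico_eq_integral_Ioo, ← integral_Ioc_eq_integral_Ioo,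
        ← intervalIntegral.integral_of_le hxx]
      have ia : IntervalIntegrable (fun y : ℝ => y ^ (-α)) volume xhat x :=
        intervalIntegral.intervalIntegrable_rpow' (by linarith)
      have ib : IntervalIntegrable (fun y : ℝ => y ^ (-α - 1)) volume xhat x :=
        intervalIntegral.intervalIntegrable_rpow' (by linarith)
      rw [intervalIntegral.integral_add (ia.const_mul _) (ib.const_mul _),
        intervalIntegral.integral_const_mul, intervalIntegral.integral_const_mul,
        integral_rpow (Or.inl (by linarith)), integral_rpow (Or.inl (by linarith)),
        show -α - 1 + 1 = -α by ring, show -α + 1 = 1 - α by ring]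
      field_simp [hαne, h1α]
      ring
    have I2 : (∫ y in Ioi x,
        (Ici xhat).indicator
          (fun y => (1 - α) * (β - 1) * y ^ (-β) + α * β * K * y ^ (-β - 1)) y)
        = (1 - α) * x ^ (1 - β) + α * K * x ^ (-β) := by
      rw [integral_indicator measurableSet_Ici, Measure.restrict_restrict measurableSet_Ici]
      have hset : Ici xhat ∩ Ioi x = Ioi x :=
        inter_eq_self_of_subset_right (fun y hy => le_trans hxx (le_of_lt hy))
      rw [hset]
      rw [integral_add ((integrableOn_Ioi_rpow_of_lt (by linarith) hx).const_mul _)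
        ((integrableOn_Ioi_rpow_of_lt (by linarith) hx).const_mul _),
        integral_const_mul, integral_const_mul,
        integral_Ioi_rpow_of_lt (by linarith) hx, integral_Ioi_rpow_of_lt (by linarith) hx,
        show -β - 1 + 1 = -β by ring, show -β + 1 = 1 - β by ring]
      have h1β : (1:ℝ) - β ≠ 0 := by intro h; nlinarith
      field_simp [hαne, h1α, hβne, h1β]
      ring
    rw [I1, I2]
    have P1 : x ^ α * x ^ (1 - α) = x := by
      rw [← Real.rpow_add hx, show α + (1 - α) = 1 by ring, Real.rpow_one]
    have P2 : x ^ α * x ^ (-α) = 1 := by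
      rw [← Real.rpow_add hx, show α + -α = 0 by ring, Real.rpow_zero]
    have P3 : x ^ β * x ^ (1 - β) = x := by
      rw [← Real.rpow_add hx, show β + (1 - β) = 1 by ring, Real.rpow_one]
    have P4 : x ^ β * x ^ (-β) = 1 := by
      rw [← Real.rpow_add hx, show β + -β = 0 by ring, Real.rpow_zero]
    have Q : xhat ^ (1 - α) = xhat * xhat ^ (-α) := by
      rw [show (1:ℝ) - α = -α + 1 by ring, Real.rpow_add_one (ne_of_gt hxhat0)]; ring
    rw [Q, inv_mul_eq_div, div_eq_iff hBne]
    linear_combination (β - 1) * P1 - β * K * P2 + (1 - α) * P3 + α * K * P4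
      - (x ^ α * xhat ^ (-α)) * H - (x - K) * hB
  · -- case x ≤ xhat
    intro hxx
    have I1 : (∫ y in Ioo (0:ℝ) x,
        (Ici xhat).indicator
          (fun y => (1 - α) * (β - 1) * y ^ (-α) + α * β * K * y ^ (-α - 1)) y) = 0 := by
      rw [integral_indicator measurableSet_Ici, Measure.restrict_restrict measurableSet_Ici]
      have hset : Ici xhat ∩ Ioo 0 x = (∅ : Set ℝ) := by
        rw [eq_empty_iff_forall_notMem]
        rintro y ⟨h1, _, h3⟩
        exact absurd (lt_of_lt_of_le h3 (hxx.trans h1)) (lt_irrefl y)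
      rw [hset]
      simp
    have I2 : (∫ y in Ioi x,
        (Ici xhat).indicator
          (fun y => (1 - α) * (β - 1) * y ^ (-β) + α * β * K * y ^ (-β - 1)) y)
        = (1 - α) * xhat ^ (1 - β) + α * K * xhat ^ (-β) := by
      rw [integral_indicator measurableSet_Ici, Measure.restrict_restrict measurableSet_Ici]
      have h1 : (Ici xhat : Set ℝ) =ᵐ[volume] Ioi xhat := Ioi_ae_eq_Ici.symm
      have hseteq : (Ioi xhat ∩ Ioi x : Set ℝ) = Ioi xhat := by
        rw [Set.Ioi_inter_Ioi, max_eq_left hxx]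
      have hae : (Ici xhat ∩ Ioi x : Set ℝ) =ᵐ[volume] Ioi xhat :=
        (h1.inter Filter.EventuallyEq.rfl).trans (by rw [hseteq]; exact Filter.EventuallyEq.rfl)
      rw [setIntegral_congr_set hae]
      rw [integral_add ((integrableOn_Ioi_rpow_of_lt (by linarith) hxhat0).const_mul _)
        ((integrableOn_Ioi_rpow_of_lt (by linarith) hxhat0).const_mul _),
        integral_const_mul, integral_const_mul,
        integral_Ioi_rpow_of_lt (by linarith) hxhat0,
        integral_Ioi_rpow_of_lt (by linarith) hxhat0,
        show -β - 1 + 1 = -β by ring, show -β + 1 = 1 - β by ring]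
      have h1β : (1:ℝ) - β ≠ 0 := by intro h; nlinarith
      field_simp [hαne, h1α, hβne, h1β]
      ring
    rw [I1, I2]
    have P5 : xhat ^ β * xhat ^ (-β) = 1 := by
      rw [← Real.rpow_add hxhat0, show β + -β = 0 by ring, Real.rpow_zero]
    have Q2 : xhat ^ (1 - β) = xhat * xhat ^ (-β) := by
      rw [show (1:ℝ) - β = -β + 1 by ring, Real.rpow_add_one (ne_of_gt hxhat0)]; ring
    have hxhatβne : xhat ^ β ≠ 0 := (Real.rpow_pos_of_pos hxhat0 β).ne'
    rw [Q2, inv_mul_eq_div, div_mul_eq_mul_div, div_eq_div_iff hBne hxhatβne]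
    linear_combination (((1 - α) * xhat + α * K) * x ^ β) * P5
      - (xhat - K) * x ^ β * hB - x ^ β * H
end

section
/- Fix μ ∈ ℝ, σ > 0, r > 0 and λ > 0 with μ < r, and K > 0. Set p = 1/2 − μ/σ², b = p + √(p² + 2r/σ²), a = p − √(p² + 2r/σ²), B_r = b − a, β = p + √(p² + 2(r+λ)/σ²), m'(y) = (2/σ²) y^{2μ/σ² − 2}, x̂ = βK/(β−1), and σ̃(y) = ((r+λ−μ)y − K(r+λ)) for y ≥ x̂, σ̃(y) = 0 for 0 < y < x̂. Then all the integrals below converge and: (i) for every x ≥ x̂, B_r^{-1}[ x^{a} ∫₀^x y^{b} σ̃(y) m'(y) dy + x^{b} ∫_x^∞ y^{a} σ̃(y) m'(y) dy ] = ((r+λ−μ)/(r−μ)) x − (K(r+λ)/r) + c₃ x^{a}, where c₃ = −B_r^{-1} ∫₀^{x̂} y^{b} ((r+λ−μ)y − K(r+λ)) m'(y) dy; and (ii) for every 0 < x ≤ x̂, B_r^{-1}[ x^{a} ∫₀^x y^{b} σ̃(y) m'(y) dy + x^{b} ∫_x^∞ y^{a} σ̃(y) m'(y) dy ] = c₄ x^{b},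 where c₄ = B_r^{-1} ∫_{x̂}^∞ y^{a} ((r+λ−μ)y − K(r+λ)) m'(y) dy. -/
open Real Set MeasureTheory

lemma rpow_intOn_Ioo {t : ℝ} (ht : -1 < t) (c d : ℝ) :
    IntegrableOn (fun y : ℝ => y ^ t) (Set.Ioo c d) := by
  rcases le_or_gt c d with h | h
  · exact ((intervalIntegrable_iff_integrableOn_Ioc_of_le h).1
      (intervalIntegral.intervalIntegrable_rpow' ht)).mono_set Set.Ioo_subset_Ioc_self
  · rw [Set.Ioo_eq_empty (by exact fun hh => absurd hh (not_lt.2 h.le))]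
    exact integrableOn_empty

lemma rpow_intOn_Ico {t : ℝ} (ht : -1 < t) (c d : ℝ) :
    IntegrableOn (fun y : ℝ => y ^ t) (Set.Ico c d) :=
  (integrableOn_Ico_iff_integrableOn_Ioo (by simp)).2 (rpow_intOn_Ioo ht c d)

open intervalIntegral in
lemma rpow_int_Ioo {t : ℝ} (ht : -1 < t) {c d : ℝ} (hcd : c ≤ d) :
    ∫ y in Set.Ioo c d, y ^ t = (d ^ (t + 1) - c ^ (t + 1)) / (t + 1) := by
  rw [← integral_Ioc_eq_integral_Ioo, ← intervalIntegral.integral_of_le hcd,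
    integral_rpow (Or.inl ht)]

set_option maxHeartbeats 2000000 in
/-- The value `V^∞ = R_r σ̃` of the infinite stopping problem for the American call on
geometric Brownian motion with exponential refraction rate `λ`: the Green-kernel resolvent
at rate `r` of the density `σ̃(y) = (r+λ−μ)y − K(r+λ)` on `[x̂,∞)` (and `0` below) equals
`c₁x + c₂ + c₃x^a` above the threshold `x̂` and `c₄x^b` below it. -/
theorem infinite_call_value_representation
    (μ σ r lam K : ℝ) (hσ : 0 < σ) (hr : 0 < r) (hlam : 0 < lam)
    (hμ : μ < r) (hK : 0 < K)
    (p b a Br β : ℝ)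
    (hp : p = 1 / 2 - μ / σ ^ 2)
    (hb : b = p + Real.sqrt (p ^ 2 + 2 * r / σ ^ 2))
    (ha : a = p - Real.sqrt (p ^ 2 + 2 * r / σ ^ 2))
    (hBr : Br = b - a)
    (hβ : β = p + Real.sqrt (p ^ 2 + 2 * (r + lam) / σ ^ 2))
    (m' : ℝ → ℝ) (hm : ∀ y : ℝ, m' y = 2 / σ ^ 2 * y ^ (2 * μ / σ ^ 2 - 2))
    (xhat : ℝ) (hxhat : xhat = β * K / (β - 1))
    (st : ℝ → ℝ)
    (hst : ∀ y : ℝ, st y = if xhat ≤ y then (r + lam - μ) * y - K * (r + lam) else 0)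
    (c₃ c₄ : ℝ)
    (hc₃ : c₃ = -(Br⁻¹ *
      ∫ y in Set.Ioo (0 : ℝ) xhat, y ^ b * ((r + lam - μ) * y - K * (r + lam)) * m' y))
    (hc₄ : c₄ = Br⁻¹ *
      ∫ y in Set.Ioi xhat, y ^ a * ((r + lam - μ) * y - K * (r + lam)) * m' y) :
    IntegrableOn (fun y => y ^ b * ((r + lam - μ) * y - K * (r + lam)) * m' y) (Set.Ioo 0 xhat)
    ∧ IntegrableOn (fun y => y ^ a * ((r + lam - μ) * y - K * (r + lam)) * m' y) (Set.Ioi xhat)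
    ∧ ∀ x : ℝ, 0 < x →
        IntegrableOn (fun y => y ^ b * st y * m' y) (Set.Ioo 0 x)
        ∧ IntegrableOn (fun y => y ^ a * st y * m' y) (Set.Ioi x)
        ∧ (xhat ≤ x →
            Br⁻¹ * (x ^ a * (∫ y in Set.Ioo (0 : ℝ) x, y ^ b * st y * m' y)
                + x ^ b * (∫ y in Set.Ioi x, y ^ a * st y * m' y))
              = (r + lam - μ) / (r - μ) * x - K * (r + lam) / r + c₃ * x ^ a)
        ∧ (x ≤ xhat →
            Br⁻¹ * (x ^ a * (∫ y in Set.Ioo (0 : ℝ) x, y ^ b * st y * m' y)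
                + x ^ b * (∫ y in Set.Ioi x, y ^ a * st y * m' y))
              = c₄ * x ^ b) := by
  have hσ2 : (0:ℝ) < σ ^ 2 := by positivity
  -- facts about the square roots
  have hargpos : 0 < p ^ 2 + 2 * r / σ ^ 2 :=
    add_pos_of_nonneg_of_pos (sq_nonneg p) (div_pos (by linarith) hσ2)
  have hargβpos : 0 < p ^ 2 + 2 * (r + lam) / σ ^ 2 :=
    add_pos_of_nonneg_of_pos (sq_nonneg p) (div_pos (by linarith) hσ2)
  have hq0 : 0 < Real.sqrt (p ^ 2 + 2 * r / σ ^ 2) := Real.sqrt_pos.2 hargpos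
  have hqsq : Real.sqrt (p ^ 2 + 2 * r / σ ^ 2) ^ 2 = p ^ 2 + 2 * r / σ ^ 2 :=
    Real.sq_sqrt hargpos.le
  have hqβ0 : 0 < Real.sqrt (p ^ 2 + 2 * (r + lam) / σ ^ 2) := Real.sqrt_pos.2 hargβpos
  have hqβsq : Real.sqrt (p ^ 2 + 2 * (r + lam) / σ ^ 2) ^ 2 = p ^ 2 + 2 * (r + lam) / σ ^ 2 :=
    Real.sq_sqrt hargβpos.le
  have hkey : Real.sqrt (p ^ 2 + 2 * r / σ ^ 2) ^ 2 - (1 - p) ^ 2 = 2 * (r - μ) / σ ^ 2 := by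
    rw [hqsq, hp]; ring
  have hkeyβ : Real.sqrt (p ^ 2 + 2 * (r + lam) / σ ^ 2) ^ 2 - (1 - p) ^ 2
      = 2 * ((r + lam) - μ) / σ ^ 2 := by
    rw [hqβsq, hp]; ring
  have hrμdiv : (0:ℝ) < 2 * (r - μ) / σ ^ 2 := div_pos (by linarith) hσ2
  have hrμβdiv : (0:ℝ) < 2 * ((r + lam) - μ) / σ ^ 2 := div_pos (by linarith) hσ2
  have hb1 : 1 < b := by
    rw [hb]; by_contra hcon; push_neg at hcon
    have h1p : Real.sqrt (p ^ 2 + 2 * r / σ ^ 2) ≤ 1 - p := by linarith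
    nlinarith [hq0, hkey, hrμdiv]
  have hβ1 : 1 < β := by
    rw [hβ]; by_contra hcon; push_neg at hcon
    have h1p : Real.sqrt (p ^ 2 + 2 * (r + lam) / σ ^ 2) ≤ 1 - p := by linarith
    nlinarith [hqβ0, hkeyβ, hrμβdiv]
  have ha0 : a < 0 := by
    rw [ha]
    have hpq : p < Real.sqrt (p ^ 2 + 2 * r / σ ^ 2) := by
      by_contra hcon; push_neg at hcon
      nlinarith [hq0, hqsq, div_pos (by linarith : (0:ℝ) < 2 * r) hσ2]
    linarith
  have hxh0 : 0 < xhat := by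
    rw [hxhat]; exact div_pos (mul_pos (by linarith) hK) (by linarith)
  have hab2 : a + b = 2 * p := by rw [ha, hb]; ring
  have hab : a * b = -(2 * r / σ ^ 2) := by rw [ha, hb]; linear_combination -hqsq
  have hab' : a * b * σ ^ 2 = -(2 * r) := by
    rw [hab, neg_mul, div_mul_cancel₀ _ (ne_of_gt hσ2)]
  have hpμ : μ = (1 / 2 - p) * σ ^ 2 := by
    rw [hp, show (1 / 2 - (1 / 2 - μ / σ ^ 2) : ℝ) = μ / σ ^ 2 by ring,
      div_mul_cancel₀ _ (ne_of_gt hσ2)]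
  have hr2 : r = -(a * b) * σ ^ 2 / 2 := by linear_combination (1/2 : ℝ) * hab'
  have hrμ2 : r - μ = (1 - a) * (b - 1) * σ ^ 2 / 2 := by
    linear_combination (-(σ ^ 2) / 2) * hab2 + (1/2 : ℝ) * hab' + (-1 : ℝ) * hpμ
  -- exponent identities
  have heb : ∀ y : ℝ, 0 < y → y ^ b * y ^ (2 * μ / σ ^ 2 - 2) = y ^ (-a - 1) := by
    intro y hy
    rw [← Real.rpow_add hy]
    congr 1
    rw [ha, hb, hp]; ring
  have hea : ∀ y : ℝ, 0 < y → y ^ a * y ^ (2 * μ / σ ^ 2 - 2) = y ^ (-b - 1) := by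
    intro y hy
    rw [← Real.rpow_add hy]
    congr 1
    rw [ha, hb, hp]; ring
  -- pointwise identities with the combos
  have hptb : ∀ y : ℝ, 0 < y → y ^ b * ((r + lam - μ) * y - K * (r + lam)) * m' y
      = (2 / σ ^ 2 * (r + lam - μ)) * y ^ (-a) - (2 / σ ^ 2 * (K * (r + lam))) * y ^ (-a - 1) := by
    intro y hy
    have h2 : y ^ (-a) = y * y ^ (-a - 1) := by
      have h3 := Real.rpow_add hy 1 (-a - 1)
      rw [Real.rpow_one, show (1 + (-a - 1) : ℝ) = -a by ring] at h3
      exact h3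
    rw [hm y, h2, ← heb y hy]; ring
  have hpta : ∀ y : ℝ, 0 < y → y ^ a * ((r + lam - μ) * y - K * (r + lam)) * m' y
      = (2 / σ ^ 2 * (r + lam - μ)) * y ^ (-b) - (2 / σ ^ 2 * (K * (r + lam))) * y ^ (-b - 1) := by
    intro y hy
    have h2 : y ^ (-b) = y * y ^ (-b - 1) := by
      have h3 := Real.rpow_add hy 1 (-b - 1)
      rw [Real.rpow_one, show (1 + (-b - 1) : ℝ) = -b by ring] at h3
      exact h3
    rw [hm y, h2, ← hea y hy]; ring
  -- integrability of the combos
  have hgbInt : ∀ c d : ℝ, IntegrableOn (fun y : ℝ =>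
      (2 / σ ^ 2 * (r + lam - μ)) * y ^ (-a) - (2 / σ ^ 2 * (K * (r + lam))) * y ^ (-a - 1))
      (Set.Ioo c d) := fun c d =>
    ((rpow_intOn_Ioo (by linarith) c d).const_mul _).sub
      ((rpow_intOn_Ioo (by linarith) c d).const_mul _)
  have hgbIntIco : ∀ c d : ℝ, IntegrableOn (fun y : ℝ =>
      (2 / σ ^ 2 * (r + lam - μ)) * y ^ (-a) - (2 / σ ^ 2 * (K * (r + lam))) * y ^ (-a - 1))
      (Set.Ico c d) := fun c d =>
    ((rpow_intOn_Ico (by linarith) c d).const_mul _).sub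
      ((rpow_intOn_Ico (by linarith) c d).const_mul _)
  have hgaIntIoi : ∀ c : ℝ, 0 < c → IntegrableOn (fun y : ℝ =>
      (2 / σ ^ 2 * (r + lam - μ)) * y ^ (-b) - (2 / σ ^ 2 * (K * (r + lam))) * y ^ (-b - 1))
      (Set.Ioi c) := fun c hc =>
    ((integrableOn_Ioi_rpow_of_lt (by linarith) hc).const_mul _).sub
      ((integrableOn_Ioi_rpow_of_lt (by linarith) hc).const_mul _)
  have hgaIntIci : IntegrableOn (fun y : ℝ =>
      (2 / σ ^ 2 * (r + lam - μ)) * y ^ (-b) - (2 / σ ^ 2 * (K * (r + lam))) * y ^ (-b - 1))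
      (Set.Ici xhat) :=
    (hgaIntIoi (xhat / 2) (by linarith)).mono_set
      (fun y hy => lt_of_lt_of_le (by linarith : xhat / 2 < xhat) hy)
  -- integral values of the combos
  have hgbVal : ∀ {c d : ℝ}, c ≤ d → ∫ y in Set.Ioo c d,
      ((2 / σ ^ 2 * (r + lam - μ)) * y ^ (-a) - (2 / σ ^ 2 * (K * (r + lam))) * y ^ (-a - 1))
      = (2 / σ ^ 2 * (r + lam - μ)) * ((d ^ (-a + 1) - c ^ (-a + 1)) / (-a + 1))
        - (2 / σ ^ 2 * (K * (r + lam))) * ((d ^ (-a - 1 + 1) - c ^ (-a - 1 + 1)) / (-a - 1 + 1)) := by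
    intro c d hcd
    rw [integral_sub ((rpow_intOn_Ioo (by linarith) c d).const_mul _)
        ((rpow_intOn_Ioo (by linarith) c d).const_mul _),
      integral_const_mul, integral_const_mul,
      rpow_int_Ioo (by linarith) hcd, rpow_int_Ioo (by linarith) hcd]
  have hgaVal : ∀ {c : ℝ}, 0 < c → ∫ y in Set.Ioi c,
      ((2 / σ ^ 2 * (r + lam - μ)) * y ^ (-b) - (2 / σ ^ 2 * (K * (r + lam))) * y ^ (-b - 1))
      = (2 / σ ^ 2 * (r + lam - μ)) * (-c ^ (-b + 1) / (-b + 1))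
        - (2 / σ ^ 2 * (K * (r + lam))) * (-c ^ (-b - 1 + 1) / (-b - 1 + 1)) := by
    intro c hc
    rw [integral_sub ((integrableOn_Ioi_rpow_of_lt (by linarith) hc).const_mul _)
        ((integrableOn_Ioi_rpow_of_lt (by linarith) hc).const_mul _),
      integral_const_mul, integral_const_mul,
      integral_Ioi_rpow_of_lt (by linarith) hc, integral_Ioi_rpow_of_lt (by linarith) hc]
  -- pointwise facts about st
  have hstb : ∀ y : ℝ, xhat ≤ y → y ^ b * st y * m' y
      = (2 / σ ^ 2 * (r + lam - μ)) * y ^ (-a) - (2 / σ ^ 2 * (K * (r + lam))) * y ^ (-a - 1) := by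
    intro y hy
    rw [hst y, if_pos hy]; exact hptb y (lt_of_lt_of_le hxh0 hy)
  have hstb0 : ∀ y : ℝ, y < xhat → y ^ b * st y * m' y = 0 := by
    intro y hy; rw [hst y, if_neg (not_le.2 hy)]; ring
  have hsta : ∀ y : ℝ, xhat ≤ y → y ^ a * st y * m' y
      = (2 / σ ^ 2 * (r + lam - μ)) * y ^ (-b) - (2 / σ ^ 2 * (K * (r + lam))) * y ^ (-b - 1) := by
    intro y hy
    rw [hst y, if_pos hy]; exact hpta y (lt_of_lt_of_le hxh0 hy)
  have hsta0 : ∀ y : ℝ, y < xhat → y ^ a * st y * m' y = 0 := by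
    intro y hy; rw [hst y, if_neg (not_le.2 hy)]; ring
  have hzero : ∀ s : Set ℝ, IntegrableOn (fun _ : ℝ => (0:ℝ)) s volume := fun s =>
    integrableOn_zero
  refine ⟨?_, ?_, ?_⟩
  · exact (hgbInt 0 xhat).congr_fun (fun y hy => (hptb y hy.1).symm) measurableSet_Ioo
  · exact (hgaIntIoi xhat hxh0).congr_fun
      (fun y hy => (hpta y (lt_trans hxh0 hy)).symm) measurableSet_Ioi
  intro x hx
  refine ⟨?_, ?_, ?_, ?_⟩
  · -- integrability on Ioo 0 x
    rcases le_or_gt x xhat with hxx | hxx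
    · exact (hzero _).congr_fun
        (fun y hy => (hstb0 y (lt_of_lt_of_le hy.2 hxx)).symm) measurableSet_Ioo
    · have hsplit : Set.Ioo (0:ℝ) x = Set.Ioo 0 xhat ∪ Set.Ico xhat x := by
        ext y
        simp only [Set.mem_Ioo, Set.mem_union, Set.mem_Ico]
        constructor
        · rintro ⟨h1, h2⟩
          rcases lt_or_ge y xhat with h | h
          exacts [Or.inl ⟨h1, h⟩, Or.inr ⟨h, h2⟩]
        · rintro (⟨h1, h2⟩ | ⟨h1, h2⟩)
          exacts [⟨h1, lt_trans h2 hxx⟩, ⟨lt_of_lt_of_le hxh0 h1, h2⟩]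
      rw [hsplit]
      apply IntegrableOn.union
      · exact (hzero _).congr_fun
          (fun y hy => (hstb0 y hy.2).symm) measurableSet_Ioo
      · exact (hgbIntIco xhat x).congr_fun (fun y hy => (hstb y hy.1).symm) measurableSet_Ico
  · -- integrability on Ioi x
    rcases le_or_gt xhat x with hxx | hxx
    · exact (hgaIntIoi x hx).congr_fun
        (fun y hy => (hsta y (le_of_lt (lt_of_le_of_lt hxx hy))).symm) measurableSet_Ioi
    · have hsplit : Set.Ioi x = Set.Ioo x xhat ∪ Set.Ici xhat := by
        ext y
        simp only [Set.mem_Ioi, Set.mem_union, Set.mem_Ioo, Set.mem_Ici]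
        constructor
        · intro h
          rcases lt_or_ge y xhat with h2 | h2
          exacts [Or.inl ⟨h, h2⟩, Or.inr h2]
        · rintro (⟨h1, _⟩ | h1)
          exacts [h1, lt_of_lt_of_le hxx h1]
      rw [hsplit]
      apply IntegrableOn.union
      · exact (hzero _).congr_fun
          (fun y hy => (hsta0 y hy.2).symm) measurableSet_Ioo
      · exact hgaIntIci.congr_fun (fun y hy => (hsta y hy).symm) measurableSet_Ici
  · -- the identity above the threshold
    intro hxx
    have hsplit : Set.Ioo (0:ℝ) x = Set.Ioo 0 xhat ∪ Set.Ico xhat x := by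
      ext y
      simp only [Set.mem_Ioo, Set.mem_union, Set.mem_Ico]
      constructor
      · rintro ⟨h1, h2⟩
        rcases lt_or_ge y xhat with h | h
        exacts [Or.inl ⟨h1, h⟩, Or.inr ⟨h, h2⟩]
      · rintro (⟨h1, h2⟩ | ⟨h1, h2⟩)
        exacts [⟨h1, lt_of_lt_of_le h2 hxx⟩, ⟨lt_of_lt_of_le hxh0 h1, h2⟩]
    have hdisj : Disjoint (Set.Ioo (0:ℝ) xhat) (Set.Ico xhat x) := by
      rw [Set.disjoint_left]
      intro y h1 h2
      exact absurd h2.1 (not_le.2 h1.2)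
    have i1 : IntegrableOn (fun y => y ^ b * st y * m' y) (Set.Ioo (0:ℝ) xhat) :=
      (hzero _).congr_fun
        (fun y hy => (hstb0 y hy.2).symm) measurableSet_Ioo
    have i2 : IntegrableOn (fun y => y ^ b * st y * m' y) (Set.Ico xhat x) :=
      (hgbIntIco xhat x).congr_fun (fun y hy => (hstb y hy.1).symm) measurableSet_Ico
    have e0 : ∫ y in Set.Ioo (0:ℝ) xhat, y ^ b * st y * m' y = 0 := by
      rw [setIntegral_congr_fun measurableSet_Ioo
        (g := fun _ : ℝ => (0:ℝ)) (fun y hy => hstb0 y hy.2)]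
      simp
    have e1 : ∫ y in Set.Ico xhat x, y ^ b * st y * m' y
        = (2 / σ ^ 2 * (r + lam - μ)) * ((x ^ (-a + 1) - xhat ^ (-a + 1)) / (-a + 1))
          - (2 / σ ^ 2 * (K * (r + lam)))
            * ((x ^ (-a - 1 + 1) - xhat ^ (-a - 1 + 1)) / (-a - 1 + 1)) := by
      rw [setIntegral_congr_fun measurableSet_Ico (fun y hy => hstb y hy.1),
        integral_Ico_eq_integral_Ioo, hgbVal hxx]
    have hI1 : ∫ y in Set.Ioo (0:ℝ) x, y ^ b * st y * m' y
        = (2 / σ ^ 2 * (r + lam - μ)) * ((x ^ (-a + 1) - xhat ^ (-a + 1)) / (-a + 1))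
          - (2 / σ ^ 2 * (K * (r + lam)))
            * ((x ^ (-a - 1 + 1) - xhat ^ (-a - 1 + 1)) / (-a - 1 + 1)) := by
      rw [hsplit, setIntegral_union hdisj measurableSet_Ico i1 i2, e0, e1, zero_add]
    have hI2 : ∫ y in Set.Ioi x, y ^ a * st y * m' y
        = (2 / σ ^ 2 * (r + lam - μ)) * (-x ^ (-b + 1) / (-b + 1))
          - (2 / σ ^ 2 * (K * (r + lam))) * (-x ^ (-b - 1 + 1) / (-b - 1 + 1)) := by
      rw [setIntegral_congr_fun measurableSet_Ioi
        (fun y hy => hsta y (le_of_lt (lt_of_le_of_lt hxx hy))), hgaVal hx]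
    have hc3v : c₃ = -(Br⁻¹ *
        ((2 / σ ^ 2 * (r + lam - μ)) * ((xhat ^ (-a + 1) - (0:ℝ) ^ (-a + 1)) / (-a + 1))
          - (2 / σ ^ 2 * (K * (r + lam)))
            * ((xhat ^ (-a - 1 + 1) - (0:ℝ) ^ (-a - 1 + 1)) / (-a - 1 + 1)))) := by
      rw [hc₃, setIntegral_congr_fun measurableSet_Ioo (fun y hy => hptb y hy.1),
        hgbVal hxh0.le]
    rw [hI1, hI2, hc3v, hBr]
    rw [show (-a - 1 + 1 : ℝ) = -a by ring, show (-b - 1 + 1 : ℝ) = -b by ring,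
      show (-a + 1 : ℝ) = 1 + -a by ring, show (-b + 1 : ℝ) = 1 + -b by ring]
    rw [Real.zero_rpow (by linarith : (1 + -a : ℝ) ≠ 0),
      Real.zero_rpow (by linarith : (-a : ℝ) ≠ 0)]
    have exa : x ^ a = (x ^ (-a))⁻¹ := by rw [← Real.rpow_neg hx.le, neg_neg]
    have exb : x ^ b = (x ^ (-b))⁻¹ := by rw [← Real.rpow_neg hx.le, neg_neg]
    rw [exa, exb]
    simp only [Real.rpow_add hx, Real.rpow_add hxh0, Real.rpow_one]
    rw [hrμ2]
    rw [hr2]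
    have h1 : a ≠ 0 := ne_of_lt ha0
    have h2 : b ≠ 0 := by linarith
    have h3 : (1:ℝ) + -a ≠ 0 := by linarith
    have h4 : (1:ℝ) + -b ≠ 0 := by linarith
    have h5 : (1:ℝ) - a ≠ 0 := by linarith
    have h6 : b - 1 ≠ 0 := by linarith
    have h7 : -a ≠ 0 := by linarith
    have h8 : -b ≠ 0 := by linarith
    have h9 : b - a ≠ 0 := by linarith
    have hu : x ^ (-a) ≠ 0 := ne_of_gt (Real.rpow_pos_of_pos hx _)
    have hv : x ^ (-b) ≠ 0 := ne_of_gt (Real.rpow_pos_of_pos hx _)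
    have hσ' : σ ≠ 0 := ne_of_gt hσ
    field_simp
    ring
  · -- the identity below the threshold
    intro hxx
    have hI1 : ∫ y in Set.Ioo (0:ℝ) x, y ^ b * st y * m' y = 0 := by
      rw [setIntegral_congr_fun measurableSet_Ioo
        (g := fun _ : ℝ => (0:ℝ)) (fun y hy => hstb0 y (lt_of_lt_of_le hy.2 hxx))]
      simp
    have hI2 : ∫ y in Set.Ioi x, y ^ a * st y * m' y
        = ∫ y in Set.Ioi xhat, y ^ a * ((r + lam - μ) * y - K * (r + lam)) * m' y := by
      rcases eq_or_lt_of_le hxx with he | hlt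
      · rw [he]
        exact setIntegral_congr_fun measurableSet_Ioi
          (fun y hy => by rw [hst y, if_pos (le_of_lt (Set.mem_Ioi.mp hy))])
      · have hsplit : Set.Ioi x = Set.Ioo x xhat ∪ Set.Ici xhat := by
          ext y
          simp only [Set.mem_Ioi, Set.mem_union, Set.mem_Ioo, Set.mem_Ici]
          constructor
          · intro h
            rcases lt_or_ge y xhat with h2 | h2
            exacts [Or.inl ⟨h, h2⟩, Or.inr h2]
          · rintro (⟨h1, _⟩ | h1)
            exacts [h1, lt_of_lt_of_le hlt h1]
        have hdisj : Disjoint (Set.Ioo x xhat) (Set.Ici xhat) := by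
          rw [Set.disjoint_left]
          intro y h1 h2
          exact absurd h2 (not_le.2 h1.2)
        have j1 : IntegrableOn (fun y => y ^ a * st y * m' y) (Set.Ioo x xhat) :=
          (hzero _).congr_fun
            (fun y hy => (hsta0 y hy.2).symm) measurableSet_Ioo
        have j2 : IntegrableOn (fun y => y ^ a * st y * m' y) (Set.Ici xhat) :=
          hgaIntIci.congr_fun (fun y hy => (hsta y hy).symm) measurableSet_Ici
        rw [hsplit, setIntegral_union hdisj measurableSet_Ici j1 j2]
        have e0 : ∫ y in Set.Ioo x xhat, y ^ a * st y * m' y = 0 := by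
          rw [setIntegral_congr_fun measurableSet_Ioo
            (g := fun _ : ℝ => (0:ℝ)) (fun y hy => hsta0 y hy.2)]
          simp
        have e1 : ∫ y in Set.Ici xhat, y ^ a * st y * m' y
            = ∫ y in Set.Ici xhat, y ^ a * ((r + lam - μ) * y - K * (r + lam)) * m' y :=
          setIntegral_congr_fun measurableSet_Ici (fun y hy => by rw [hst y, if_pos (Set.mem_Ici.mp hy)])
        rw [e0, e1, zero_add, integral_Ici_eq_integral_Ioi]
    rw [hI1, hI2, hc₄]
    ring
end

section
/- Let μ ∈ ℝ, σ > 0, r > 0 and x > 0. Set p = 1/2 − μ/σ², b = p + √(p² + 2r/σ²), a = p − √(p² + 2r/σ²), B_r = b − a, and m'(y) = (2/σ²) y^{2μ/σ² − 2}. For every measurable f : (0,∞) → [0,∞], with γ_t the centered Gaussian measure on ℝ with variance t (and γ_0 = δ_0), the following identity holds in [0,∞]: ∫₀^∞ e^{−rt} ( ∫_ℝ f( x·exp((μ − σ²/2)t + σz) ) dγ_t(z) ) dt = B_r^{-1}[ x^{a} ∫₀^x y^{b} f(y) m'(y) dy + x^{b} ∫_x^∞ y^{a} f(y) m'(y) dy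 ]. -/
open Real Set MeasureTheory ProbabilityTheory ENNReal

theorem lintegral_image_eq_lintegral_abs_deriv_mul' {s : Set ℝ} {f : ℝ → ℝ} {f' : ℝ → ℝ}
    (hs : MeasurableSet s) (hf' : ∀ x ∈ s, HasDerivWithinAt f (f' x) s x)
    (hf : InjOn f s) (g : ℝ → ℝ≥0∞) :
    ∫⁻ x in f '' s, g x = ∫⁻ x in s, ENNReal.ofReal |f' x| * g (f x) := by
  simpa only [ContinuousLinearMap.det_toSpanSingleton] using
    lintegral_image_eq_lintegral_abs_det_fderiv_mul volume hs
      (fun x hx => (hf' x hx).hasFDerivWithinAt) hf g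

theorem glasser_aux (sA sB T E : ℝ) (hA : sA ≠ 0) (hT : T ≠ 0) :
    (sA*(2*T)⁻¹ + sB*((2*T)⁻¹/T^2)) * E
      = sA/2 * (T⁻¹ * E + sB/sA * (T^2*T)⁻¹ * E) := by
  field_simp

theorem glasser (A B : ℝ) (hA : 0 < A) (hB : 0 < B) :
    ∫⁻ t in Ioi (0:ℝ), ENNReal.ofReal ((√t)⁻¹ * rexp (-(A*t + B/t)))
      = ENNReal.ofReal (√(π/A) * rexp (-(2*√(A*B)))) := by
  set sA := √A with hsA
  set sB := √B with hsB
  have hsA0 : 0 < sA := Real.sqrt_pos.2 hA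
  have hsB0 : 0 < sB := Real.sqrt_pos.2 hB
  have hA2 : sA^2 = A := Real.sq_sqrt hA.le
  have hB2 : sB^2 = B := Real.sq_sqrt hB.le
  have hAB : √(A*B) = sA*sB := Real.sqrt_mul hA.le B
  set c := sA*sB with hc
  have hc0 : 0 < c := mul_pos hsA0 hsB0
  set J := ∫⁻ t in Ioi (0:ℝ), ENNReal.ofReal ((√t)⁻¹ * rexp (-(A*t + B/t))) with hJ
  -- Step A: inversion t ↦ B/(A t)
  have hinv : J = ∫⁻ t in Ioi (0:ℝ),
      ENNReal.ofReal ((sB/sA) * (t*√t)⁻¹ * rexp (-(A*t + B/t))) := by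
    have himg : (fun t => B/(A*t)) '' Ioi 0 = Ioi (0:ℝ) := by
      ext v
      constructor
      · rintro ⟨t, ht, rfl⟩
        exact div_pos hB (mul_pos hA ht)
      · intro hv
        exact ⟨B/(A*v), div_pos hB (mul_pos hA hv), by field_simp⟩
    have hder : ∀ t ∈ Ioi (0:ℝ), HasDerivWithinAt (fun t => B/(A*t))
        ((B/A) * (-(t^2)⁻¹)) (Ioi 0) t := by
      intro t ht
      have hfun : (fun t : ℝ => B/(A*t)) = fun t => (B/A) * t⁻¹ := by
        funext s
        rw [← div_div, div_eq_mul_inv]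
      have h1 : HasDerivAt (fun t : ℝ => (B/A) * t⁻¹) ((B/A) * (-(t^2)⁻¹)) t :=
        (hasDerivAt_inv (ne_of_gt ht)).const_mul (B/A)
      rw [hfun]
      exact h1.hasDerivWithinAt
    have := lintegral_image_eq_lintegral_abs_deriv_mul' measurableSet_Ioi hder
      (fun t1 h1 t2 h2 heq => by
        have h1' : (0:ℝ) < t1 := h1
        have h2' : (0:ℝ) < t2 := h2
        field_simp at heq
        exact heq.symm)
      (fun t => ENNReal.ofReal ((√t)⁻¹ * rexp (-(A*t + B/t))))
    rw [himg] at this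
    rw [hJ, this]
    apply setLIntegral_congr_fun measurableSet_Ioi
    intro t ht
    beta_reduce
    have ht0 : (0:ℝ) < t := ht
    obtain ⟨T, hT0, rfl⟩ : ∃ T : ℝ, 0 < T ∧ t = T^2 :=
      ⟨√t, Real.sqrt_pos.2 ht0, (Real.sq_sqrt ht0.le).symm⟩
    have hsT : √(T^2) = T := Real.sqrt_sq hT0.le
    have habs : |B/A * (-((T^2)^2)⁻¹)| = B/(A*(T^2)^2) := by
      rw [mul_neg, abs_neg, abs_of_nonneg (by positivity)]
      field_simp
    rw [habs, ← ENNReal.ofReal_mul (by positivity)]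
    congr 1
    have harg1 : A*(B/(A*T^2)) = B/T^2 := by field_simp
    have harg2 : B/(B/(A*T^2)) = A*T^2 := by
      rw [div_div_eq_mul_div, mul_comm, mul_div_assoc, div_self (ne_of_gt hB), mul_one]
    have hsq : √(B/(A*T^2)) = sB/(sA*T) := by
      rw [Real.sqrt_div hB.le, Real.sqrt_mul hA.le, ← hsA, ← hsB, hsT]
    rw [harg1, harg2, hsq, hsT]
    rw [show B/T^2 + A*T^2 = A*T^2 + B/T^2 by ring]
    rw [← hA2, ← hB2]
    field_simp
  -- Step B+C: substitution u = sA √t - sB / √t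
  set u : ℝ → ℝ := fun t => sA*√t - sB/√t with hu
  have himgu : u '' Ioi 0 = univ := by
    apply eq_univ_of_forall
    intro v
    set s := √(v^2+4*c) with hs
    have hs2 : s^2 = v^2+4*c := Real.sq_sqrt (by nlinarith [hc0, sq_nonneg v])
    have hvs : 0 < v + s := by
      have : |v| < s := by
        rw [hs, ← Real.sqrt_sq_eq_abs]
        exact Real.sqrt_lt_sqrt (sq_nonneg v) (by linarith)
      cases abs_lt.1 this with
      | intro h1 h2 => linarith
    refine ⟨((v+s)/(2*sA))^2, pow_pos (div_pos hvs (by positivity)) 2, ?_⟩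
    have hsqt : √(((v+s)/(2*sA))^2) = (v+s)/(2*sA) :=
      Real.sqrt_sq (div_nonneg hvs.le (by positivity))
    simp only [hu, hsqt]
    have hne : v + s ≠ 0 := ne_of_gt hvs
    have hne2 : sA ≠ 0 := ne_of_gt hsA0
    field_simp
    nlinarith [hs2, hc]
  have hmono : StrictMonoOn u (Ioi 0) := by
    intro t1 h1 t2 h2 hlt
    have h1' : (0:ℝ) < t1 := h1
    have h2' : (0:ℝ) < t2 := h2
    have hs1 : 0 < √t1 := Real.sqrt_pos.2 h1'
    have hs2 : 0 < √t2 := Real.sqrt_pos.2 h2'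
    have hss : √t1 < √t2 := Real.sqrt_lt_sqrt h1'.le hlt
    have hd : sB/√t2 < sB/√t1 := by
      apply div_lt_div_of_pos_left hsB0 hs1 hss
    simp only [hu]
    nlinarith
  have hderu : ∀ t ∈ Ioi (0:ℝ), HasDerivWithinAt u
      (sA*(2*√t)⁻¹ + sB*((2*√t)⁻¹/(√t)^2)) (Ioi 0) t := by
    intro t ht
    have ht0 : (0:ℝ) < t := ht
    have h1 : HasDerivAt (fun t : ℝ => √t) (1/(2*√t)) t :=
      Real.hasDerivAt_sqrt (ne_of_gt ht0)
    have h2 : HasDerivAt (fun t : ℝ => sA*√t) (sA*(1/(2*√t))) t := h1.const_mul sA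
    have hst : √t ≠ 0 := ne_of_gt (Real.sqrt_pos.2 ht0)
    have h3 : HasDerivAt (fun t : ℝ => (√t)⁻¹) (-(1/(2*√t))/(√t)^2) t := h1.inv hst
    have h4 : HasDerivAt (fun t : ℝ => sB*(√t)⁻¹) (sB*(-(1/(2*√t))/(√t)^2)) t :=
      h3.const_mul sB
    have h5 := h2.sub h4
    have heq : sA*(1/(2*√t)) - sB*(-(1/(2*√t))/(√t)^2)
        = sA*(2*√t)⁻¹ + sB*((2*√t)⁻¹/(√t)^2) := by
      field_simp
      ring
    rw [heq] at h5
    have h6 : HasDerivAt u (sA*(2*√t)⁻¹ + sB*((2*√t)⁻¹/(√t)^2)) t := by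
      apply h5.congr_of_eventuallyEq
      filter_upwards with s
      simp only [hu, div_eq_mul_inv, Pi.sub_apply]
    exact h6.hasDerivWithinAt
  have key := lintegral_image_eq_lintegral_abs_deriv_mul' measurableSet_Ioi hderu
    hmono.injOn (fun v => ENNReal.ofReal (rexp (-v^2) * rexp (-(2*c))))
  rw [himgu] at key
  -- LHS of key
  have hgauss : ∫⁻ v in (univ : Set ℝ), ENNReal.ofReal (rexp (-v^2) * rexp (-(2*c)))
      = ENNReal.ofReal (√π * rexp (-(2*c))) := by
    rw [Measure.restrict_univ]
    have hpt : ∀ v : ℝ, ENNReal.ofReal (rexp (-v^2) * rexp (-(2*c)))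
        = ENNReal.ofReal (rexp (-(2*c))) * ENNReal.ofReal (rexp (-v^2)) := by
      intro v
      rw [← ENNReal.ofReal_mul (by positivity)]
      ring_nf
    simp_rw [hpt]
    rw [lintegral_const_mul _ (by fun_prop)]
    have hig : Integrable (fun v : ℝ => rexp (-v^2)) := by
      simpa using integrable_exp_neg_mul_sq (one_pos)
    rw [← ofReal_integral_eq_lintegral_ofReal hig (by filter_upwards with v; positivity)]
    have hgi : ∫ v : ℝ, rexp (-v^2) = √π := by
      have := integral_gaussian 1
      simpa using this
    rw [hgi, ← ENNReal.ofReal_mul (by positivity)]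
    ring_nf
  -- RHS of key equals ofReal(sA/2) * (J + J)
  have hsum : J + J = ∫⁻ t in Ioi (0:ℝ),
      (ENNReal.ofReal ((√t)⁻¹ * rexp (-(A*t + B/t)))
        + ENNReal.ofReal ((sB/sA) * (t*√t)⁻¹ * rexp (-(A*t + B/t)))) := by
    rw [lintegral_add_left (by fun_prop), ← hJ, ← hinv]
  have hrhs : ∫⁻ t in Ioi (0:ℝ), ENNReal.ofReal |sA*(2*√t)⁻¹ + sB*((2*√t)⁻¹/(√t)^2)|
        * ENNReal.ofReal (rexp (-(u t)^2) * rexp (-(2*c)))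
      = ENNReal.ofReal (sA/2) * (J + J) := by
    rw [hsum, ← lintegral_const_mul _ (by fun_prop)]
    apply setLIntegral_congr_fun measurableSet_Ioi
    intro t ht
    beta_reduce
    have ht0 : (0:ℝ) < t := ht
    obtain ⟨T, hT0, rfl⟩ : ∃ T : ℝ, 0 < T ∧ t = T^2 :=
      ⟨√t, Real.sqrt_pos.2 ht0, (Real.sq_sqrt ht0.le).symm⟩
    have hsT : √(T^2) = T := Real.sqrt_sq hT0.le
    have hD : |sA*(2*√(T^2))⁻¹ + sB*((2*√(T^2))⁻¹/(√(T^2))^2)|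
        = sA*(2*T)⁻¹ + sB*((2*T)⁻¹/T^2) := by
      rw [hsT, abs_of_nonneg (by positivity)]
    have hexp : rexp (-(u (T^2))^2) * rexp (-(2*c)) = rexp (-(A*T^2 + B/T^2)) := by
      rw [← Real.exp_add]
      congr 1
      have huv : (u (T^2))^2 = A*T^2 + B/T^2 - 2*c := by
        simp only [hu, hsT, hc]
        rw [← hA2, ← hB2]
        field_simp
        ring
      rw [huv]; ring
    rw [hD, hexp, hsT, ← ENNReal.ofReal_mul (by positivity),
      ← ENNReal.ofReal_add (by positivity) (by positivity),
      ← ENNReal.ofReal_mul (by positivity)]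
    congr 1
    rw [← hA2, ← hB2]
    have hT : (T:ℝ) ≠ 0 := ne_of_gt hT0
    have hsA' : sA ≠ 0 := ne_of_gt hsA0
    generalize rexp (-(sA^2*T^2 + sB^2/T^2)) = E
    exact glasser_aux sA sB T E hsA' hT
  rw [hgauss, hrhs] at key
  -- solve for J
  have h2J : ENNReal.ofReal (sA/2) * (J + J) = ENNReal.ofReal sA * J := by
    rw [show J + J = 2 * J from (two_mul J).symm, ← mul_assoc]
    congr 1
    rw [← ENNReal.ofReal_ofNat 2, ← ENNReal.ofReal_mul (by positivity)]
    norm_num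
  rw [h2J] at key
  have hfin : ENNReal.ofReal sA ≠ 0 := by simp [hsA0, ne_of_gt]
  have hfin2 : ENNReal.ofReal sA ≠ ⊤ := ENNReal.ofReal_ne_top
  have goal : ENNReal.ofReal sA * ENNReal.ofReal (√(π/A) * rexp (-(2*√(A*B))))
      = ENNReal.ofReal (√π * rexp (-(2*c))) := by
    rw [← ENNReal.ofReal_mul (by positivity)]
    congr 1
    rw [hAB]
    have hdiv : √(π/A) = √π/sA := by
      rw [Real.sqrt_div pi_pos.le, hsA]
    rw [hdiv]
    field_simp
  rw [← goal] at key
  exact (ENNReal.mul_right_inj hfin hfin2).1 key.symm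

theorem gbm_kernel (m σ r u : ℝ) (hσ : 0 < σ) (hr : 0 < r) (hu : u ≠ 0) :
    ∫⁻ t in Ioi (0:ℝ), ENNReal.ofReal
        (rexp (-(r*t)) * ((√(2*π*t))⁻¹ * rexp (-((u - m*t)^2) / (2*σ^2*t))))
      = ENNReal.ofReal ((σ / √(m^2+2*r*σ^2)) * rexp ((m*u - |u| * √(m^2+2*r*σ^2))/σ^2)) := by
  set Δ := √(m^2+2*r*σ^2) with hΔ
  have hq : 0 < m^2+2*r*σ^2 := by positivity
  have hΔ0 : 0 < Δ := Real.sqrt_pos.2 hq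
  have hΔ2 : Δ^2 = m^2+2*r*σ^2 := Real.sq_sqrt hq.le
  set A := (m^2+2*r*σ^2)/(2*σ^2) with hA'
  set B := u^2/(2*σ^2) with hB'
  have hA : 0 < A := by positivity
  have hu2 : 0 < u^2 := lt_of_le_of_ne (sq_nonneg u) (Ne.symm (pow_ne_zero 2 hu))
  have hB : 0 < B := div_pos hu2 (by positivity)
  have hs2π : (0:ℝ) < √(2*π) := Real.sqrt_pos.2 (by positivity)
  have step1 : ∫⁻ t in Ioi (0:ℝ), ENNReal.ofReal
        (rexp (-(r*t)) * ((√(2*π*t))⁻¹ * rexp (-((u - m*t)^2) / (2*σ^2*t))))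
      = ENNReal.ofReal ((√(2*π))⁻¹ * rexp (m*u/σ^2)) *
          ∫⁻ t in Ioi (0:ℝ), ENNReal.ofReal ((√t)⁻¹ * rexp (-(A*t+B/t))) := by
    rw [← lintegral_const_mul _ (by fun_prop)]
    apply setLIntegral_congr_fun measurableSet_Ioi
    intro t ht
    beta_reduce
    have ht0 : (0:ℝ) < t := ht
    have hst : 0 < √t := Real.sqrt_pos.2 ht0
    rw [← ENNReal.ofReal_mul (by positivity)]
    congr 1
    rw [Real.sqrt_mul (by positivity : (0:ℝ) ≤ 2*π) t, mul_inv]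
    have hexp : rexp (-(r*t)) * rexp (-((u - m*t)^2) / (2*σ^2*t))
        = rexp (m*u/σ^2) * rexp (-(A*t+B/t)) := by
      rw [← Real.exp_add, ← Real.exp_add]
      congr 1
      rw [hA', hB']
      field_simp
      ring
    calc rexp (-(r*t)) * ((√(2*π))⁻¹ * (√t)⁻¹ * rexp (-((u - m*t)^2) / (2*σ^2*t)))
        = (√(2*π))⁻¹ * (√t)⁻¹ *
            (rexp (-(r*t)) * rexp (-((u - m*t)^2) / (2*σ^2*t))) := by ring
      _ = (√(2*π))⁻¹ * (√t)⁻¹ * (rexp (m*u/σ^2) * rexp (-(A*t+B/t))) := by rw [hexp]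
      _ = (√(2*π))⁻¹ * rexp (m*u/σ^2) * ((√t)⁻¹ * rexp (-(A*t+B/t))) := by ring
  rw [step1, glasser A B hA hB, ← ENNReal.ofReal_mul (by positivity)]
  congr 1
  have h1 : √(A*B) = Δ * |u|/(2*σ^2) := by
    have hAB : A*B = (Δ * |u|/(2*σ^2))^2 := by
      rw [hA', hB', div_pow, mul_pow, hΔ2, sq_abs]
      ring
    rw [hAB]
    exact Real.sqrt_sq (by positivity)
  have h2 : √(π/A) = √(2*π)*σ/Δ := by
    have hπA : π/A = (√(2*π)*σ/Δ)^2 := by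
      rw [hA', div_pow, mul_pow, Real.sq_sqrt (by positivity : (0:ℝ) ≤ 2*π), hΔ2]
      field_simp
    rw [hπA]
    exact Real.sqrt_sq (by positivity)
  rw [h1, h2]
  have he : rexp (m*u/σ^2) * rexp (-(2*(Δ * |u|/(2*σ^2))))
      = rexp ((m*u - |u| * Δ)/σ^2) := by
    rw [← Real.exp_add]
    congr 1
    field_simp
    ring
  calc (√(2*π))⁻¹ * rexp (m*u/σ^2) * (√(2*π)*σ/Δ * rexp (-(2*(Δ * |u|/(2*σ^2)))))
      = ((√(2*π))⁻¹ * √(2*π)) * (σ/Δ)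
          * (rexp (m*u/σ^2) * rexp (-(2*(Δ * |u|/(2*σ^2))))) := by ring
    _ = σ/Δ * rexp ((m*u - |u| * Δ)/σ^2) := by
        rw [inv_mul_cancel₀ (ne_of_gt hs2π), he]; ring

theorem gbm_scalar_lt (μ σ x y Δ : ℝ) (hσ : 0 < σ) (hx : 0 < x) (hy : 0 < y)
    (hyx : y < x) (hΔ0 : 0 < Δ) :
    (σ*y)⁻¹ * (σ/Δ * rexp (((μ - σ^2/2)*(Real.log (y/x)) - |Real.log (y/x)| * Δ)/σ^2))
      = (2*Δ/σ^2)⁻¹ * (x ^ (-(((μ - σ^2/2)+Δ)/σ^2)) *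
          (y ^ ((Δ-(μ - σ^2/2))/σ^2) * (2/σ^2 * y ^ (2*μ/σ^2 - 2)))) := by
  have hu0 : Real.log (y/x) < 0 := Real.log_neg (div_pos hy hx) ((div_lt_one hx).2 hyx)
  rw [abs_of_neg hu0]
  set m := μ - σ^2/2 with hm
  set c := (m+Δ)/σ^2 with hcd
  have h1 : (m*(Real.log (y/x)) - -(Real.log (y/x))*Δ)/σ^2 = Real.log (y/x) * c := by
    rw [hcd]; ring
  rw [h1, ← Real.rpow_def_of_pos (div_pos hy hx) c]
  rw [Real.div_rpow hy.le hx.le, Real.rpow_neg hx.le]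
  have h2 : y ^ ((Δ-m)/σ^2) * y ^ (2*μ/σ^2 - 2) = y ^ (c - 1) := by
    rw [← Real.rpow_add hy]
    congr 1
    rw [hcd, hm]; field_simp; ring
  have h3 : y ^ (c-1) = y ^ c / y := by
    rw [Real.rpow_sub hy, Real.rpow_one]
  have h4 : y ^ ((Δ-m)/σ^2) * (2/σ^2 * y ^ (2*μ/σ^2-2)) = 2/σ^2 * (y ^ c / y) := by
    rw [← h3, ← h2]; ring
  rw [h4]
  have hxc : 0 < x ^ c := Real.rpow_pos_of_pos hx c
  field_simp

theorem gbm_scalar_gt (μ σ x y Δ : ℝ) (hσ : 0 < σ) (hx : 0 < x) (hy : 0 < y)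
    (hxy : x < y) (hΔ0 : 0 < Δ) :
    (σ*y)⁻¹ * (σ/Δ * rexp (((μ - σ^2/2)*(Real.log (y/x)) - |Real.log (y/x)| * Δ)/σ^2))
      = (2*Δ/σ^2)⁻¹ * (x ^ ((Δ-(μ - σ^2/2))/σ^2) *
          (y ^ (-(((μ - σ^2/2)+Δ)/σ^2)) * (2/σ^2 * y ^ (2*μ/σ^2 - 2)))) := by
  have hu0 : 0 < Real.log (y/x) := Real.log_pos ((one_lt_div hx).2 hxy)
  rw [abs_of_pos hu0]
  set m := μ - σ^2/2 with hm
  set c := (m-Δ)/σ^2 with hcd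
  have h1 : (m*(Real.log (y/x)) - (Real.log (y/x))*Δ)/σ^2 = Real.log (y/x) * c := by
    rw [hcd]; ring
  rw [h1, ← Real.rpow_def_of_pos (div_pos hy hx) c]
  rw [Real.div_rpow hy.le hx.le]
  have hbx : ((Δ-m)/σ^2) = -c := by rw [hcd]; ring
  rw [hbx, Real.rpow_neg hx.le]
  have h2 : y ^ (-((m+Δ)/σ^2)) * y ^ (2*μ/σ^2 - 2) = y ^ (c - 1) := by
    rw [← Real.rpow_add hy]
    congr 1
    rw [hcd, hm]; field_simp; ring
  have h3 : y ^ (c-1) = y ^ c / y := by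
    rw [Real.rpow_sub hy, Real.rpow_one]
  have h4 : y ^ (-((m+Δ)/σ^2)) * (2/σ^2 * y ^ (2*μ/σ^2-2)) = 2/σ^2 * (y ^ c / y) := by
    rw [← h3, ← h2]; ring
  rw [h4]
  have hxc : 0 < x ^ c := Real.rpow_pos_of_pos hx c
  field_simp

theorem gbm_step1 (μ σ x r : ℝ) (hσ : 0 < σ) (hx : 0 < x)
    (f : ℝ → ℝ≥0∞) (hf : Measurable f) (t : ℝ) (ht0 : 0 < t) :
    ENNReal.ofReal (rexp (-r*t)) *
        ∫⁻ z, f (x * rexp ((μ - σ^2/2)*t + σ*z)) ∂(gaussianReal 0 (Real.toNNReal t))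
      = ∫⁻ y in Ioi (0:ℝ), ENNReal.ofReal
          (rexp (-(r*t)) * ((√(2*π*t))⁻¹ *
            rexp (-((Real.log (y/x) - (μ - σ^2/2)*t)^2) / (2*σ^2*t))) * (σ*y)⁻¹) * f y := by
  set m := μ - σ^2/2 with hm
  have hvne : (Real.toNNReal t) ≠ 0 := by
    intro h
    exact absurd (Real.toNNReal_eq_zero.1 h) (not_le.2 ht0)
  have hvt : ((Real.toNNReal t : ℝ)) = t := Real.coe_toNNReal t ht0.le
  have himg : (fun z : ℝ => x * rexp (m*t + σ*z)) '' univ = Ioi (0:ℝ) := by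
    rw [image_univ]
    ext v
    simp only [mem_range, mem_Ioi]
    constructor
    · rintro ⟨z, rfl⟩; positivity
    · intro hv
      refine ⟨(Real.log (v/x) - m*t)/σ, ?_⟩
      rw [show m*t + σ*((Real.log (v/x) - m*t)/σ) = Real.log (v/x) by field_simp; ring,
        Real.exp_log (div_pos hv hx)]
      field_simp
  have hder : ∀ z ∈ (univ : Set ℝ), HasDerivWithinAt (fun z : ℝ => x * rexp (m*t + σ*z))
      (x * (rexp (m*t + σ*z) * σ)) univ z := by
    intro z _
    have h1 : HasDerivAt (fun z : ℝ => m*t + σ*z) σ z := by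
      simpa using ((hasDerivAt_id z).const_mul σ).const_add (m*t)
    have h2 := (Real.hasDerivAt_exp (m*t + σ*z)).comp z h1
    exact (h2.const_mul x).hasDerivWithinAt
  have hinj : InjOn (fun z : ℝ => x * rexp (m*t + σ*z)) univ := by
    intro z1 _ z2 _ h
    simp only at h
    have h2 := Real.exp_injective (mul_left_cancel₀ (ne_of_gt hx) h)
    have : σ*z1 = σ*z2 := by linarith
    exact mul_left_cancel₀ (ne_of_gt hσ) this
  have hcv := lintegral_image_eq_lintegral_abs_deriv_mul' MeasurableSet.univ hder hinj
    (fun y => ENNReal.ofReal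
        (rexp (-(r*t)) * ((√(2*π*t))⁻¹ *
          rexp (-((Real.log (y/x) - m*t)^2) / (2*σ^2*t))) * (σ*y)⁻¹) * f y)
  rw [himg, Measure.restrict_univ] at hcv
  have hgm : Measurable (fun z : ℝ => f (x * rexp (m*t + σ*z))) := hf.comp (by fun_prop)
  rw [hcv, gaussianReal_of_var_ne_zero 0 hvne,
    lintegral_withDensity_eq_lintegral_mul _ (measurable_gaussianPDF _ _) hgm]
  simp only [Pi.mul_apply]
  rw [← lintegral_const_mul _ (show Measurable (fun z : ℝ => gaussianPDF 0 (Real.toNNReal t) z * f (x * rexp (m*t + σ*z))) from ((measurable_gaussianPDF 0 (Real.toNNReal t)).mul hgm))]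
  apply lintegral_congr
  intro z
  simp only [Pi.mul_apply, gaussianPDF_def, gaussianPDFReal, hvt]
  have hE : 0 < rexp (m*t + σ*z) := Real.exp_pos _
  have habs : |x * (rexp (m*t + σ*z) * σ)| = x * (rexp (m*t + σ*z) * σ) :=
    abs_of_pos (by positivity)
  rw [habs, mul_div_cancel_left₀ _ (ne_of_gt hx), Real.log_exp,
    show m*t + σ*z - m*t = σ*z by ring]
  rw [← mul_assoc, ← mul_assoc, ← ENNReal.ofReal_mul (by positivity),
    ← ENNReal.ofReal_mul (by positivity)]
  congr 1
  rw [show (-(σ*z)^2/(2*σ^2*t) : ℝ) = -(z-0)^2/(2*t) by field_simp; ring,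
    show (-r*t : ℝ) = -(r*t) by ring]
  field_simp

theorem gbm_k_meas (r u m σ : ℝ) : Measurable (fun t : ℝ =>
    rexp (-(r*t)) * ((√(2*π*t))⁻¹ * rexp (-((u - m*t)^2) / (2*σ^2*t)))) := by
  apply Measurable.mul
  · exact ((measurable_id.const_mul r).neg).exp
  · apply Measurable.mul
    · exact (Real.continuous_sqrt.measurable.comp (measurable_id.const_mul (2*π))).inv
    · exact ((((measurable_const.sub (measurable_id.const_mul m)).pow_const 2).neg.div
        (measurable_id.const_mul (2*σ^2)))).exp

theorem gbm_W_meas (r x m σ : ℝ) : Measurable (fun q : ℝ × ℝ =>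
    rexp (-(r*q.1)) * ((√(2*π*q.1))⁻¹ *
      rexp (-((Real.log (q.2/x) - m*q.1)^2) / (2*σ^2*q.1))) * (σ*q.2)⁻¹) := by
  apply Measurable.mul
  · apply Measurable.mul
    · exact ((measurable_fst.const_mul r).neg).exp
    · apply Measurable.mul
      · exact (Real.continuous_sqrt.measurable.comp (measurable_fst.const_mul (2*π))).inv
      · exact ((((Real.measurable_log.comp (measurable_snd.div_const x)).sub
          (measurable_fst.const_mul m)).pow_const 2).neg.div
            (measurable_fst.const_mul (2*σ^2))).exp
  · exact (measurable_snd.const_mul σ).inv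

/-- The resolvent of geometric Brownian motion, written via the Gaussian law of `W_t`, equals
the classical Green-kernel representation in terms of the fundamental solutions `x^b`, `x^a`,
the Wronskian `B_r = b − a` and the speed density `m'`; identity in `[0,∞]`. -/
theorem gbm_resolvent_green_kernel
    (μ σ r x : ℝ) (hσ : 0 < σ) (hr : 0 < r) (hx : 0 < x)
    (p b a B : ℝ)
    (hp : p = 1 / 2 - μ / σ ^ 2)
    (hb : b = p + Real.sqrt (p ^ 2 + 2 * r / σ ^ 2))
    (ha : a = p - Real.sqrt (p ^ 2 + 2 * r / σ ^ 2))
    (hB : B = b - a)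
    (m' : ℝ → ℝ) (hm : ∀ y : ℝ, m' y = 2 / σ ^ 2 * y ^ (2 * μ / σ ^ 2 - 2))
    (f : ℝ → ℝ≥0∞) (hf : Measurable f) :
    ∫⁻ t in Set.Ioi (0 : ℝ), ENNReal.ofReal (Real.exp (-r * t)) *
        ∫⁻ z, f (x * Real.exp ((μ - σ ^ 2 / 2) * t + σ * z)) ∂(gaussianReal 0 (Real.toNNReal t))
      = ENNReal.ofReal B⁻¹ *
          (ENNReal.ofReal (x ^ a) *
              (∫⁻ y in Set.Ioo (0 : ℝ) x, ENNReal.ofReal (y ^ b * m' y) * f y)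
            + ENNReal.ofReal (x ^ b) *
              (∫⁻ y in Set.Ioi x, ENNReal.ofReal (y ^ a * m' y) * f y)) := by
  have hmfun : m' = fun y => 2 / σ ^ 2 * y ^ (2 * μ / σ ^ 2 - 2) := funext hm
  subst hmfun
  have hσ2 : (0:ℝ) < σ^2 := by positivity
  set m := μ - σ ^ 2 / 2 with hm'
  set Δ := √(m^2+2*r*σ^2) with hΔd
  have hq : (0:ℝ) < m^2+2*r*σ^2 := by positivity
  have hΔ0 : 0 < Δ := Real.sqrt_pos.2 hq
  have hΔ2 : Δ^2 = m^2+2*r*σ^2 := Real.sq_sqrt hq.le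
  have hsq : √(p^2 + 2*r/σ^2) = Δ/σ^2 := by
    rw [show p^2 + 2*r/σ^2 = (Δ/σ^2)^2 by
      rw [div_pow, hΔ2, hp, hm']; field_simp; ring]
    exact Real.sqrt_sq (by positivity)
  have hbv : b = (Δ-m)/σ^2 := by rw [hb, hsq, hp, hm']; field_simp; ring
  have hav : a = -((m+Δ)/σ^2) := by rw [ha, hsq, hp, hm']; field_simp; ring
  have hBv : B = 2*Δ/σ^2 := by rw [hB, hbv, hav]; ring
  -- kernel evaluation per y
  have hker : ∀ y : ℝ, 0 < y → y ≠ x →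
      (∫⁻ t in Ioi (0:ℝ), ENNReal.ofReal (rexp (-(r*t)) * ((√(2*π*t))⁻¹ *
          rexp (-((Real.log (y/x) - m*t)^2) / (2*σ^2*t))) * (σ*y)⁻¹) * f y)
        = ENNReal.ofReal ((σ*y)⁻¹ * (σ/Δ *
            rexp ((m*(Real.log (y/x)) - |Real.log (y/x)| * Δ)/σ^2))) * f y := by
    intro y hy0 hyx
    have hu : Real.log (y/x) ≠ 0 :=
      Real.log_ne_zero_of_pos_of_ne_one (div_pos hy0 hx) (by
        intro h
        exact hyx (by rwa [div_eq_one_iff_eq (ne_of_gt hx)] at h))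
    have hpt : ∀ t : ℝ, ENNReal.ofReal (rexp (-(r*t)) * ((√(2*π*t))⁻¹ *
          rexp (-((Real.log (y/x) - m*t)^2) / (2*σ^2*t))) * (σ*y)⁻¹) * f y
        = (ENNReal.ofReal ((σ*y)⁻¹) * f y) * ENNReal.ofReal (rexp (-(r*t)) * ((√(2*π*t))⁻¹ *
            rexp (-((Real.log (y/x) - m*t)^2) / (2*σ^2*t)))) := by
      intro t
      rw [ENNReal.ofReal_mul (by positivity)]
      ring
    simp_rw [hpt]
    rw [lintegral_const_mul'' _ ((gbm_k_meas r (Real.log (y/x)) m σ).ennreal_ofReal.aemeasurable)]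
    rw [gbm_kernel m σ r (Real.log (y/x)) hσ hr hu, ← hΔd]
    rw [show ENNReal.ofReal ((σ*y)⁻¹ * (σ/Δ *
        rexp ((m*(Real.log (y/x)) - |Real.log (y/x)| * Δ)/σ^2)))
      = ENNReal.ofReal ((σ*y)⁻¹) * ENNReal.ofReal (σ/Δ *
        rexp ((m*(Real.log (y/x)) - |Real.log (y/x)| * Δ)/σ^2)) from
      ENNReal.ofReal_mul (by positivity)]
    ring
  -- measurability for Tonelli
  have hWm : Measurable (fun q : ℝ × ℝ => ENNReal.ofReal
      (rexp (-(r*q.1)) * ((√(2*π*q.1))⁻¹ *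
        rexp (-((Real.log (q.2/x) - m*q.1)^2) / (2*σ^2*q.1))) * (σ*q.2)⁻¹) * f q.2) := by
    exact ((gbm_W_meas r x m σ).ennreal_ofReal).mul (hf.comp measurable_snd)
  calc ∫⁻ t in Set.Ioi (0 : ℝ), ENNReal.ofReal (Real.exp (-r * t)) *
        ∫⁻ z, f (x * Real.exp (m * t + σ * z)) ∂(gaussianReal 0 (Real.toNNReal t))
      = ∫⁻ t in Ioi (0:ℝ), ∫⁻ y in Ioi (0:ℝ), ENNReal.ofReal
          (rexp (-(r*t)) * ((√(2*π*t))⁻¹ *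
            rexp (-((Real.log (y/x) - m*t)^2) / (2*σ^2*t))) * (σ*y)⁻¹) * f y := by
        apply setLIntegral_congr_fun measurableSet_Ioi
        intro t ht
        exact gbm_step1 μ σ x r hσ hx f hf t ht
    _ = ∫⁻ y in Ioi (0:ℝ), ∫⁻ t in Ioi (0:ℝ), ENNReal.ofReal
          (rexp (-(r*t)) * ((√(2*π*t))⁻¹ *
            rexp (-((Real.log (y/x) - m*t)^2) / (2*σ^2*t))) * (σ*y)⁻¹) * f y :=
        lintegral_lintegral_swap hWm.aemeasurable
    _ = (∫⁻ y in Ioo (0:ℝ) x, ∫⁻ t in Ioi (0:ℝ), ENNReal.ofReal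
          (rexp (-(r*t)) * ((√(2*π*t))⁻¹ *
            rexp (-((Real.log (y/x) - m*t)^2) / (2*σ^2*t))) * (σ*y)⁻¹) * f y)
        + ∫⁻ y in Ioi x, ∫⁻ t in Ioi (0:ℝ), ENNReal.ofReal
          (rexp (-(r*t)) * ((√(2*π*t))⁻¹ *
            rexp (-((Real.log (y/x) - m*t)^2) / (2*σ^2*t))) * (σ*y)⁻¹) * f y := by
        rw [← Ioo_union_Ici_eq_Ioi hx, lintegral_union measurableSet_Ici
          ((Set.Iio_disjoint_Ici le_rfl).mono_left Set.Ioo_subset_Iio_self)]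
        congr 1
        exact setLIntegral_congr (Ioi_ae_eq_Ici (a := x)).symm
    _ = ENNReal.ofReal B⁻¹ *
          (ENNReal.ofReal (x ^ a) *
              (∫⁻ y in Set.Ioo (0 : ℝ) x, ENNReal.ofReal (y ^ b * (2 / σ ^ 2 * y ^ (2 * μ / σ ^ 2 - 2))) * f y)
            + ENNReal.ofReal (x ^ b) *
              (∫⁻ y in Set.Ioi x, ENNReal.ofReal (y ^ a * (2 / σ ^ 2 * y ^ (2 * μ / σ ^ 2 - 2))) * f y)) := by
        rw [mul_add]
        congr 1
        · -- region y < x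
          rw [← lintegral_const_mul' _ _ ENNReal.ofReal_ne_top,
            ← lintegral_const_mul' _ _ ENNReal.ofReal_ne_top]
          apply setLIntegral_congr_fun measurableSet_Ioo
          intro y hy
          beta_reduce
          obtain ⟨hy0, hyx⟩ := hy
          rw [hker y hy0 (ne_of_lt hyx), hm', hav, hbv, hBv,
            gbm_scalar_lt μ σ x y Δ hσ hx hy0 hyx hΔ0,
            ENNReal.ofReal_mul (by positivity),
            ENNReal.ofReal_mul (Real.rpow_nonneg hx.le _)]
          ring
        · -- region y > x
          rw [← lintegral_const_mul' _ _ ENNReal.ofReal_ne_top,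
            ← lintegral_const_mul' _ _ ENNReal.ofReal_ne_top]
          apply setLIntegral_congr_fun measurableSet_Ioi
          intro y hy
          beta_reduce
          have hxy : x < y := hy
          rw [hker y (lt_trans hx hxy) (ne_of_gt hxy), hm', hav, hbv, hBv,
            gbm_scalar_gt μ σ x y Δ hσ hx (lt_trans hx hxy) hxy hΔ0,
            ENNReal.ofReal_mul (by positivity),
            ENNReal.ofReal_mul (Real.rpow_nonneg hx.le _)]
          ring
end

section
/- In the setting described in the context, for every 0 < x ≤ x* one has λ(G V)(x) = V(x) + (γ/(γ+κ)) x^{β} ∫_{x*}^∞ y^{−κ} (d/dy)( H(y) y^{−b} ) dy, where (G V)(x) = (2S)^{-1}[ x^{α} ∫₀^x y^{β} V(y) m'(y) dy + x^{β} ∫_x^∞ y^{α} V(y) m'(y) dy ] with S = √(p² + 2(r+λ)/σ²) (so 2S = β − α), and all the integrals converge. -/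
open Real Set MeasureTheory Filter

/-- Below the exercise threshold `x*`, the Green-kernel resolvent at rate `r+λ` of the value
function `V` (a multiple of `y^b` below `x*`, equal to `H` above) satisfies
`λ(GV)(x) = V(x) + (γ/(γ+κ)) x^β ∫_{x*}^∞ y^{−κ} (H(y)y^{−b})' dy`. -/
theorem resolvent_of_value_below_threshold
    (μ σ r lam : ℝ) (hσ : 0 < σ) (hr : 0 < r) (hlam : 0 < lam)
    (p s S b β α κ γ : ℝ)
    (hp : p = 1 / 2 - μ / σ ^ 2)
    (hs : s = Real.sqrt (p ^ 2 + 2 * r / σ ^ 2))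
    (hS : S = Real.sqrt (p ^ 2 + 2 * (r + lam) / σ ^ 2))
    (hb : b = p + s) (hβ : β = p + S) (hα : α = p - S)
    (hκ : κ = S - s) (hγ : γ = S + s)
    (m' : ℝ → ℝ) (hm : ∀ y : ℝ, m' y = 2 / σ ^ 2 * y ^ (2 * μ / σ ^ 2 - 2))
    (xs : ℝ) (hxs : 0 < xs)
    (H : ℝ → ℝ)
    (hHcont : ContinuousOn H (Set.Ioi 0))
    (hHdiff : ContDiffOn ℝ 1 H (Set.Ici xs))
    (h : ℝ → ℝ) (hh : ∀ y : ℝ, h y = H y * y ^ (-b))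
    (hint1 : IntegrableOn (fun y => y ^ (-κ) * |deriv h y|) (Set.Ioi xs))
    (hlim : Tendsto (fun y => y ^ (-κ) * h y) atTop (nhds 0))
    (hint2 : IntegrableOn (fun y => y ^ α * |H y| * m' y) (Set.Ioi xs))
    (V : ℝ → ℝ)
    (hV : ∀ y : ℝ, V y = if y ≤ xs then H xs / xs ^ b * y ^ b else H y)
    (GV : ℝ → ℝ)
    (hGV : ∀ x : ℝ, GV x = (2 * S)⁻¹ *
      (x ^ α * (∫ y in Set.Ioo (0 : ℝ) x, y ^ β * V y * m' y)
        + x ^ β * (∫ y in Set.Ioi x, y ^ α * V y * m' y))) :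
    ∀ x : ℝ, 0 < x → x ≤ xs →
      IntegrableOn (fun y => y ^ β * V y * m' y) (Set.Ioo 0 x)
      ∧ IntegrableOn (fun y => y ^ α * V y * m' y) (Set.Ioi x)
      ∧ IntegrableOn (fun y => y ^ (-κ) * deriv h y) (Set.Ioi xs)
      ∧ lam * GV x
          = V x + γ / (γ + κ) * x ^ β * ∫ y in Set.Ioi xs, y ^ (-κ) * deriv h y := by
  intro x hx hxxs
  have hσ2 : (0:ℝ) < σ ^ 2 := by positivity
  have hsarg : (0:ℝ) < p ^ 2 + 2 * r / σ ^ 2 := by positivity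
  have hSarg : (0:ℝ) < p ^ 2 + 2 * (r + lam) / σ ^ 2 := by positivity
  have hs0 : 0 < s := by rw [hs]; exact Real.sqrt_pos.mpr hsarg
  have hS0 : 0 < S := by rw [hS]; exact Real.sqrt_pos.mpr hSarg
  have hrlt : p ^ 2 + 2 * r / σ ^ 2 < p ^ 2 + 2 * (r + lam) / σ ^ 2 := by
    have h1 : 2 * (r + lam) / σ ^ 2 = 2 * r / σ ^ 2 + 2 * lam / σ ^ 2 := by ring
    have h2 : (0:ℝ) < 2 * lam / σ ^ 2 := by positivity
    linarith
  have hsS : s < S := by rw [hs, hS]; exact Real.sqrt_lt_sqrt hsarg.le hrlt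
  have hps : |p| < s := by
    rw [hs, ← Real.sqrt_sq_eq_abs]
    have h2 : (0:ℝ) < 2 * r / σ ^ 2 := by positivity
    exact Real.sqrt_lt_sqrt (sq_nonneg p) (by linarith)
  have hb0 : 0 < b := by have := neg_abs_le p; rw [hb]; linarith
  have hκ0 : 0 < κ := by rw [hκ]; linarith
  have hγ0 : 0 < γ := by rw [hγ]; linarith
  have hγκ0 : 0 < γ + κ := by linarith
  have hs2 : s ^ 2 = p ^ 2 + 2 * r / σ ^ 2 := by rw [hs]; exact Real.sq_sqrt hsarg.le
  have hS2 : S ^ 2 = p ^ 2 + 2 * (r + lam) / σ ^ 2 := by rw [hS]; exact Real.sq_sqrt hSarg.le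
  have hγκ : γ * κ = 2 * lam / σ ^ 2 := by rw [hγ, hκ]; linear_combination hS2 - hs2
  have h2S : 2 * S = γ + κ := by rw [hγ, hκ]; ring
  have hexp : 2 * μ / σ ^ 2 - 2 = -1 - 2 * p := by rw [hp]; ring
  have hfun : h = fun y : ℝ => H y * y ^ (-b) := funext hh
  set c := H xs / xs ^ b with hc
  have hcx : h xs = c := by
    rw [hh xs, Real.rpow_neg hxs.le]
    exact (div_eq_mul_inv _ _).symm
  have hm'pos : ∀ y : ℝ, 0 < y → 0 < m' y := by
    intro y hy; rw [hm y]; positivity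
  -- key exponent computation
  have keyexp : ∀ y : ℝ, 0 < y → ∀ A : ℝ,
      y ^ α * A * (2 / σ ^ 2 * y ^ (-1 - 2 * p)) = 2 / σ ^ 2 * (y ^ (-κ - 1) * (A * y ^ (-b))) := by
    intro y hy A
    have e1 : y ^ (-κ - 1) * y ^ (-b) = y ^ (α + (-1 - 2 * p)) := by
      rw [← Real.rpow_add hy]; congr 1; rw [hα, hκ, hb]; ring
    calc y ^ α * A * (2 / σ ^ 2 * y ^ (-1 - 2 * p))
        = 2 / σ ^ 2 * (y ^ (α + (-1 - 2 * p)) * A) := by rw [Real.rpow_add hy]; ring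
      _ = 2 / σ ^ 2 * (y ^ (-κ - 1) * (A * y ^ (-b))) := by rw [← e1]; ring
  -- pointwise identities
  have key1 : ∀ y ∈ Ioo (0:ℝ) x, y ^ β * V y * m' y = (c * (2 / σ ^ 2)) * y ^ (γ - 1) := by
    intro y hy
    have hy0 : 0 < y := hy.1
    have hyxs : y ≤ xs := le_trans hy.2.le hxxs
    rw [hV y, if_pos hyxs, hm y, hexp]
    rw [show (γ - 1 : ℝ) = β + b + (-1 - 2 * p) by rw [hβ, hb, hγ]; ring]
    rw [Real.rpow_add hy0, Real.rpow_add hy0]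
    ring
  have key2 : ∀ y ∈ Ioc x xs, y ^ α * V y * m' y = (c * (2 / σ ^ 2)) * y ^ (-κ - 1) := by
    intro y hy
    have hy0 : 0 < y := hx.trans hy.1
    rw [hV y, if_pos hy.2, hm y, hexp]
    rw [show (-κ - 1 : ℝ) = α + b + (-1 - 2 * p) by rw [hα, hb, hκ]; ring]
    rw [Real.rpow_add hy0, Real.rpow_add hy0]
    ring
  have key3 : ∀ y ∈ Ioi xs, y ^ α * V y * m' y = 2 / σ ^ 2 * (y ^ (-κ - 1) * h y) := by
    intro y hy
    have hy0 : 0 < y := hxs.trans hy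
    rw [hV y, if_neg (not_le.mpr hy), hm y, hexp, hh y]
    exact keyexp y hy0 (H y)
  have keyabs : ∀ y ∈ Ioi xs, y ^ α * |H y| * m' y = 2 / σ ^ 2 * (y ^ (-κ - 1) * |h y|) := by
    intro y hy
    have hy0 : 0 < y := hxs.trans hy
    rw [hh y, abs_mul, abs_of_pos (Real.rpow_pos_of_pos hy0 _), hm y, hexp]
    exact keyexp y hy0 |H y|
  -- integrability on Ioo 0 x
  have IArpow : IntegrableOn (fun y : ℝ => y ^ (γ - 1)) (Ioo 0 x) := by
    have h1 : IntervalIntegrable (fun y : ℝ => y ^ (γ - 1)) volume 0 x :=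
      intervalIntegral.intervalIntegrable_rpow' (by linarith)
    exact ((intervalIntegrable_iff_integrableOn_Ioc_of_le hx.le).mp h1).mono_set Ioo_subset_Ioc_self
  have IA : IntegrableOn (fun y => y ^ β * V y * m' y) (Ioo 0 x) :=
    IntegrableOn.congr_fun (IArpow.const_mul _) (fun y hy => (key1 y hy).symm) measurableSet_Ioo
  -- integrability on Ioc x xs
  have IB1rpow : IntegrableOn (fun y : ℝ => y ^ (-κ - 1)) (Ioc x xs) := by
    have h1 : IntervalIntegrable (fun y : ℝ => y ^ (-κ - 1)) volume x xs :=
      intervalIntegral.intervalIntegrable_rpow (Or.inr (notMem_uIcc_of_lt hx hxs))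
    exact (intervalIntegrable_iff_integrableOn_Ioc_of_le hxxs).mp h1
  have IB1 : IntegrableOn (fun y => y ^ α * V y * m' y) (Ioc x xs) :=
    IntegrableOn.congr_fun (IB1rpow.const_mul _) (fun y hy => (key2 y hy).symm) measurableSet_Ioc
  -- integrability on Ioi xs
  have hsub : Ioi xs ⊆ Ioi (0:ℝ) := fun y hy => hxs.trans hy
  have hcontF : ContinuousOn (fun y : ℝ => 2 / σ ^ 2 * (y ^ (-κ - 1) * (H y * y ^ (-b)))) (Ioi xs) := by
    apply continuousOn_const.mul
    apply ContinuousOn.mul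
    · exact continuousOn_id.rpow_const (fun y hy => Or.inl (ne_of_gt (hxs.trans hy)))
    · exact (hHcont.mono hsub).mul
        (continuousOn_id.rpow_const (fun y hy => Or.inl (ne_of_gt (hxs.trans hy))))
  have IB2 : IntegrableOn (fun y => y ^ α * V y * m' y) (Ioi xs) := by
    have hmeas : AEStronglyMeasurable (fun y => y ^ α * V y * m' y) (volume.restrict (Ioi xs)) := by
      apply (hcontF.aestronglyMeasurable measurableSet_Ioi).congr
      filter_upwards [ae_restrict_mem measurableSet_Ioi] with y hy
      rw [← hh y]
      exact (key3 y hy).symm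
    refine hint2.mono' hmeas ?_
    filter_upwards [ae_restrict_mem measurableSet_Ioi] with y hy
    have hy0 : 0 < y := hxs.trans hy
    rw [hV y, if_neg (not_le.mpr hy), Real.norm_eq_abs, abs_mul, abs_mul,
      abs_of_pos (Real.rpow_pos_of_pos hy0 _), abs_of_pos (hm'pos y hy0)]
  have IBall : IntegrableOn (fun y => y ^ α * V y * m' y) (Ioi x) := by
    rw [← Ioc_union_Ioi_eq_Ioi hxxs]; exact IB1.union IB2
  -- integrability of y^{-κ} deriv h on Ioi xs
  have I4 : IntegrableOn (fun y => y ^ (-κ) * deriv h y) (Ioi xs) := by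
    have hmeas : AEStronglyMeasurable (fun y => y ^ (-κ) * deriv h y) (volume.restrict (Ioi xs)) := by
      refine AEStronglyMeasurable.mul ?_ (measurable_deriv h).aestronglyMeasurable
      exact ((continuousOn_id.rpow_const
        (fun y hy => Or.inl (ne_of_gt (hxs.trans hy)))).aestronglyMeasurable measurableSet_Ioi)
    refine hint1.mono' hmeas ?_
    filter_upwards [ae_restrict_mem measurableSet_Ioi] with y hy
    have hy0 : 0 < y := hxs.trans hy
    rw [Real.norm_eq_abs, abs_mul, abs_of_pos (Real.rpow_pos_of_pos hy0 _)]
  -- integrability of y^{-κ-1} h on Ioi xs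
  have I5 : IntegrableOn (fun y => y ^ (-κ - 1) * h y) (Ioi xs) := by
    have hcontG : ContinuousOn (fun y : ℝ => y ^ (-κ - 1) * h y) (Ioi xs) := by
      rw [hfun]
      exact (continuousOn_id.rpow_const (fun y hy => Or.inl (ne_of_gt (hxs.trans hy)))).mul
        ((hHcont.mono hsub).mul
          (continuousOn_id.rpow_const (fun y hy => Or.inl (ne_of_gt (hxs.trans hy)))))
    refine (hint2.const_mul (σ ^ 2 / 2)).mono'
      (hcontG.aestronglyMeasurable measurableSet_Ioi) ?_
    filter_upwards [ae_restrict_mem measurableSet_Ioi] with y hy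
    have hy0 : 0 < y := hxs.trans hy
    rw [keyabs y hy, Real.norm_eq_abs, abs_mul, abs_of_pos (Real.rpow_pos_of_pos hy0 _)]
    have e : σ ^ 2 / 2 * (2 / σ ^ 2 * (y ^ (-κ - 1) * |h y|)) = y ^ (-κ - 1) * |h y| := by
      field_simp
    rw [e]
  -- integration by parts on Ioi xs
  have hdiffh : ∀ y ∈ Ioi xs, HasDerivAt h (deriv h y) y := by
    intro y hy
    have hy0 : 0 < y := hxs.trans hy
    have hH : DifferentiableAt ℝ H y :=
      (hHdiff.contDiffAt (Ici_mem_nhds hy)).differentiableAt one_ne_zero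
    have hdiff : DifferentiableAt ℝ h y := by
      rw [hfun]
      exact hH.mul (Real.hasDerivAt_rpow_const (p := -b) (Or.inl hy0.ne')).differentiableAt
    exact hdiff.hasDerivAt
  have hderivF : ∀ y ∈ Ioi xs, HasDerivAt (fun y => y ^ (-κ) * h y)
      (y ^ (-κ) * deriv h y + (-κ) * (y ^ (-κ - 1) * h y)) y := by
    intro y hy
    have hy0 : 0 < y := hxs.trans hy
    have h1 := (Real.hasDerivAt_rpow_const (x := y) (p := -κ) (Or.inl hy0.ne')).mul (hdiffh y hy)
    exact h1.congr_deriv (by ring)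
  have hcontW : ContinuousWithinAt (fun y : ℝ => y ^ (-κ) * h y) (Ici xs) xs := by
    apply ContinuousAt.continuousWithinAt
    have hHat : ContinuousAt H xs := hHcont.continuousAt (Ioi_mem_nhds hxs)
    rw [hfun]
    exact (Real.continuousAt_rpow_const xs (-κ) (Or.inl hxs.ne')).mul
      (hHat.mul (Real.continuousAt_rpow_const xs (-b) (Or.inl hxs.ne')))
  have hf'int : IntegrableOn
      (fun y => y ^ (-κ) * deriv h y + (-κ) * (y ^ (-κ - 1) * h y)) (Ioi xs) :=
    I4.add (I5.const_mul (-κ))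
  have hIBP : ∫ y in Ioi xs, (y ^ (-κ) * deriv h y + (-κ) * (y ^ (-κ - 1) * h y))
      = 0 - xs ^ (-κ) * h xs := by
    simpa using
      MeasureTheory.integral_Ioi_of_hasDerivAt_of_tendsto hcontW hderivF hf'int hlim
  set I := ∫ y in Ioi xs, y ^ (-κ) * deriv h y with hIdef
  set J := ∫ y in Ioi xs, y ^ (-κ - 1) * h y with hJdef
  have hsplit : ∫ y in Ioi xs, (y ^ (-κ) * deriv h y + (-κ) * (y ^ (-κ - 1) * h y))
      = I + (-κ) * J := by
    rw [integral_add I4 (I5.const_mul (-κ)), integral_const_mul]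
  have hJrel : κ * J = I + xs ^ (-κ) * c := by
    rw [hsplit, hcx] at hIBP
    linarith
  -- values of the integrals
  have hintA : ∫ y in Ioo (0:ℝ) x, y ^ β * V y * m' y = c * (2 / σ ^ 2) * (x ^ γ / γ) := by
    rw [setIntegral_congr_fun measurableSet_Ioo key1, integral_const_mul]
    congr 1
    rw [← integral_Ioc_eq_integral_Ioo, ← intervalIntegral.integral_of_le hx.le,
      integral_rpow (Or.inl (by linarith))]
    rw [show γ - 1 + 1 = γ by ring, Real.zero_rpow hγ0.ne']
    ring
  have hintB1 : ∫ y in Ioc x xs, y ^ α * V y * m' y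
      = c * (2 / σ ^ 2) * ((xs ^ (-κ) - x ^ (-κ)) / (-κ)) := by
    rw [setIntegral_congr_fun measurableSet_Ioc key2, integral_const_mul]
    congr 1
    rw [← intervalIntegral.integral_of_le hxxs,
      integral_rpow (Or.inr ⟨by intro heq; exact absurd (by linarith : κ = 0) hκ0.ne',
        notMem_uIcc_of_lt hx hxs⟩)]
    rw [show -κ - 1 + 1 = -κ by ring]
  have hintB2 : ∫ y in Ioi xs, y ^ α * V y * m' y = 2 / σ ^ 2 * J := by
    rw [setIntegral_congr_fun measurableSet_Ioi key3, integral_const_mul, hJdef]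
  have hintB : ∫ y in Ioi x, y ^ α * V y * m' y
      = c * (2 / σ ^ 2) * ((xs ^ (-κ) - x ^ (-κ)) / (-κ)) + 2 / σ ^ 2 * J := by
    rw [← Ioc_union_Ioi_eq_Ioi hxxs,
      setIntegral_union (Ioc_disjoint_Ioi le_rfl) measurableSet_Ioi IB1 IB2, hintB1, hintB2]
  refine ⟨IA, IBall, I4, ?_⟩
  rw [hGV x, hintA, hintB, hV x, if_pos hxxs]
  have hxb1 : x ^ α * x ^ γ = x ^ b := by
    rw [← Real.rpow_add hx]; congr 1; rw [hα, hγ, hb]; ring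
  have hxb2 : x ^ β * x ^ (-κ) = x ^ b := by
    rw [← Real.rpow_add hx]; congr 1; rw [hβ, hκ, hb]; ring
  have hJval : J = (I + xs ^ (-κ) * c) / κ := by
    rw [eq_div_iff hκ0.ne']; linarith
  rw [hJval, ← h2S]
  have hγκ' : γ * κ * σ ^ 2 = 2 * lam := by rw [hγκ]; field_simp
  have hlam' : lam = γ * κ * σ ^ 2 / 2 := by linarith
  have hxa : x ^ α = x ^ b / x ^ γ := eq_div_of_mul_eq (Real.rpow_pos_of_pos hx γ).ne' hxb1
  have hxbeta : x ^ β = x ^ b / x ^ (-κ) := eq_div_of_mul_eq (Real.rpow_pos_of_pos hx (-κ)).ne' hxb2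
  have hxγ := (Real.rpow_pos_of_pos hx γ).ne'
  have hxκ := (Real.rpow_pos_of_pos hx (-κ)).ne'
  rw [hxa, hxbeta, hlam']
  field_simp
  linear_combination (-(c * x ^ (-κ))) * h2S
end

section
/- In the setting described in the context, for every x ≥ x* one has λ(G V)(x) = H(x) + (γ/(γ+κ)) x^{β} ∫_x^∞ y^{−κ} (d/dy)( H(y) y^{−b} ) dy − (κ/(γ+κ)) x^{α} ∫_{x*}^x y^{γ} (d/dy)( H(y) y^{−b} ) dy, where (G V)(x) = (2S)^{-1}[ x^{α} ∫₀^x y^{β} V(y) m'(y) dy + x^{β} ∫_x^∞ y^{α} V(y) m'(y) dy ] with S = √(p² + 2(r+λ)/σ²) (so 2S = β − α), and all the integrals converge. -/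
open Real Set MeasureTheory Filter

private lemma final_algebra (lam σ2 γ κ P Q R K Xb hxv A B : ℝ) (hσ2 : σ2 ≠ 0) (hγ : γ ≠ 0)
    (hκ : κ ≠ 0) (hγκ' : γ + κ ≠ 0) (e1 : P * R = Xb) (e2 : Q * K = Xb)
    (e3 : γ * κ = lam * (2 / σ2)) :
    lam * ((γ + κ)⁻¹ * (P * (2 / σ2 / γ * (R * hxv - A)) + Q * (2 / σ2 / κ * (K * hxv + B))))
      = Xb * hxv + γ / (γ + κ) * Q * B - κ / (γ + κ) * P * A := by
  have hlam2 : lam = γ * κ * σ2 / 2 := by field_simp at e3; linarith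
  subst e1
  rw [hlam2]
  field_simp
  linear_combination (γ * hxv) * e2

/-- Above the exercise threshold `x*`, the Green-kernel resolvent at rate `r+λ` of the value
function `V` (a multiple of `y^b` below `x*`, equal to `H` above) satisfies
`λ(GV)(x) = H(x) + (γ/(γ+κ)) x^β ∫_x^∞ y^{−κ}(H(y)y^{−b})' dy
− (κ/(γ+κ)) x^α ∫_{x*}^x y^{γ}(H(y)y^{−b})' dy`. -/
theorem resolvent_of_value_above_threshold
    (μ σ r lam : ℝ) (hσ : 0 < σ) (hr : 0 < r) (hlam : 0 < lam)
    (p s S b β α κ γ : ℝ)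
    (hp : p = 1 / 2 - μ / σ ^ 2)
    (hs : s = Real.sqrt (p ^ 2 + 2 * r / σ ^ 2))
    (hS : S = Real.sqrt (p ^ 2 + 2 * (r + lam) / σ ^ 2))
    (hb : b = p + s) (hβ : β = p + S) (hα : α = p - S)
    (hκ : κ = S - s) (hγ : γ = S + s)
    (m' : ℝ → ℝ) (hm : ∀ y : ℝ, m' y = 2 / σ ^ 2 * y ^ (2 * μ / σ ^ 2 - 2))
    (xs : ℝ) (hxs : 0 < xs)
    (H : ℝ → ℝ)
    (hHcont : ContinuousOn H (Set.Ioi 0))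
    (hHdiff : ContDiffOn ℝ 1 H (Set.Ici xs))
    (h : ℝ → ℝ) (hh : ∀ y : ℝ, h y = H y * y ^ (-b))
    (hint1 : IntegrableOn (fun y => y ^ (-κ) * |deriv h y|) (Set.Ioi xs))
    (hlim : Tendsto (fun y => y ^ (-κ) * h y) atTop (nhds 0))
    (hint2 : IntegrableOn (fun y => y ^ α * |H y| * m' y) (Set.Ioi xs))
    (V : ℝ → ℝ)
    (hV : ∀ y : ℝ, V y = if y ≤ xs then H xs / xs ^ b * y ^ b else H y)
    (GV : ℝ → ℝ)
    (hGV : ∀ x : ℝ, GV x = (2 * S)⁻¹ *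
      (x ^ α * (∫ y in Set.Ioo (0 : ℝ) x, y ^ β * V y * m' y)
        + x ^ β * (∫ y in Set.Ioi x, y ^ α * V y * m' y))) :
    ∀ x : ℝ, xs ≤ x →
      IntegrableOn (fun y => y ^ β * V y * m' y) (Set.Ioo 0 x)
      ∧ IntegrableOn (fun y => y ^ α * V y * m' y) (Set.Ioi x)
      ∧ IntegrableOn (fun y => y ^ (-κ) * deriv h y) (Set.Ioi x)
      ∧ IntegrableOn (fun y => y ^ γ * deriv h y) (Set.Ioo xs x)
      ∧ lam * GV x
          = H x + γ / (γ + κ) * x ^ β * (∫ y in Set.Ioi x, y ^ (-κ) * deriv h y)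
            - κ / (γ + κ) * x ^ α * ∫ y in Set.Ioo xs x, y ^ γ * deriv h y := by
  intro x hx
  have hσ2 : (0:ℝ) < σ ^ 2 := by positivity
  have hx0 : 0 < x := lt_of_lt_of_le hxs hx
  have hs0 : 0 ≤ s := hs ▸ Real.sqrt_nonneg _
  have hS0 : 0 ≤ S := hS ▸ Real.sqrt_nonneg _
  have hssq : s ^ 2 = p ^ 2 + 2 * r / σ ^ 2 := by
    rw [hs, Real.sq_sqrt (by positivity)]
  have hSsq : S ^ 2 = p ^ 2 + 2 * (r + lam) / σ ^ 2 := by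
    rw [hS, Real.sq_sqrt (by positivity)]
  have hsS : s < S := by
    rw [hs, hS]
    apply Real.sqrt_lt_sqrt (by positivity)
    have h1 : 2 * r / σ ^ 2 < 2 * (r + lam) / σ ^ 2 := by
      apply div_lt_div_of_pos_right ?_ hσ2
      linarith
    linarith
  have hκ0 : 0 < κ := by rw [hκ]; linarith
  have hS1 : 0 < S := lt_of_le_of_lt hs0 hsS
  have hγ0 : 0 < γ := by rw [hγ]; linarith
  have hγκ0 : 0 < γ + κ := by linarith
  have hγκ : γ * κ = lam * (2 / σ ^ 2) := by
    have e : (S + s) * (S - s) = S ^ 2 - s ^ 2 := by ring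
    rw [hγ, hκ, e, hssq, hSsq]; ring
  have h2S : 2 * S = γ + κ := by rw [hγ, hκ]; ring
  -- pointwise rpow identities
  have key1 : ∀ y : ℝ, 0 < y → y ^ β * H y * m' y = 2 / σ ^ 2 * (y ^ (γ - 1) * h y) := by
    intro y hy
    rw [hm, hh]
    have e : y ^ β * y ^ (2 * μ / σ ^ 2 - 2) = y ^ (γ - 1) * y ^ (-b) := by
      rw [← Real.rpow_add hy, ← Real.rpow_add hy]
      congr 1
      rw [hβ, hγ, hb, hp]; ring
    linear_combination (2 / σ ^ 2 * H y) * e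
  have key2 : ∀ y : ℝ, 0 < y → y ^ α * H y * m' y = 2 / σ ^ 2 * (y ^ (-κ - 1) * h y) := by
    intro y hy
    rw [hm, hh]
    have e : y ^ α * y ^ (2 * μ / σ ^ 2 - 2) = y ^ (-κ - 1) * y ^ (-b) := by
      rw [← Real.rpow_add hy, ← Real.rpow_add hy]
      congr 1
      rw [hα, hκ, hb, hp]; ring
    linear_combination (2 / σ ^ 2 * H y) * e
  have key0 : ∀ y : ℝ, 0 < y →
      y ^ β * (H xs / xs ^ b * y ^ b) * m' y = 2 / σ ^ 2 * h xs * y ^ (γ - 1) := by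
    intro y hy
    rw [hm, hh]
    have e1 : y ^ β * y ^ b * y ^ (2 * μ / σ ^ 2 - 2) = y ^ (γ - 1) := by
      rw [← Real.rpow_add hy, ← Real.rpow_add hy]
      congr 1
      rw [hβ, hb, hγ, hp]; ring
    have e2 : H xs / xs ^ b = H xs * xs ^ (-b) := by
      rw [Real.rpow_neg hxs.le, div_eq_mul_inv]
    rw [e2]
    linear_combination (2 / σ ^ 2 * (H xs * xs ^ (-b))) * e1
  -- V = H above xs
  have hVH : ∀ y : ℝ, xs ≤ y → V y = H y := by
    intro y hy
    rw [hV]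
    split_ifs with hc
    · have hyx : y = xs := le_antisymm hc hy
      rw [hyx, div_mul_cancel₀ _ (Real.rpow_pos_of_pos hxs b).ne']
    · rfl
  -- continuity facts on Ioi 0
  have hsub1 : Set.Ici xs ⊆ Set.Ioi (0:ℝ) := fun y hy => lt_of_lt_of_le hxs hy
  have hrc : ∀ c : ℝ, ContinuousOn (fun y : ℝ => y ^ c) (Set.Ioi (0:ℝ)) := by
    intro c y hy
    exact (Real.continuousAt_rpow_const y c (Or.inl (ne_of_gt hy))).continuousWithinAt
  have hm'c : ContinuousOn m' (Set.Ioi (0:ℝ)) := by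
    have : ContinuousOn (fun y : ℝ => 2 / σ ^ 2 * y ^ (2 * μ / σ ^ 2 - 2)) (Set.Ioi (0:ℝ)) :=
      (continuousOn_const.mul (hrc _))
    exact this.congr fun y _ => hm y
  have hhc : ContinuousOn h (Set.Ioi (0:ℝ)) := by
    have : ContinuousOn (fun y : ℝ => H y * y ^ (-b)) (Set.Ioi (0:ℝ)) := hHcont.mul (hrc _)
    exact this.congr fun y _ => hh y
  -- differentiability of h above xs
  have hder : ∀ y ∈ Set.Ioi xs, HasDerivAt h (deriv h y) y := by
    intro y hy
    have hy0 : 0 < y := lt_trans hxs hy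
    have h1 : DifferentiableAt ℝ H y :=
      ((hHdiff.differentiableOn one_ne_zero) y (Set.mem_Ici.2 (le_of_lt (Set.mem_Ioi.1 hy)))).differentiableAt (Ici_mem_nhds hy)
    have h2 : DifferentiableAt ℝ (fun z : ℝ => z ^ (-b)) y :=
      (Real.hasDerivAt_rpow_const (p := -b) (Or.inl hy0.ne')).differentiableAt
    have h3 : DifferentiableAt ℝ h y := by
      have := h1.mul h2
      exact this.congr_of_eventuallyEq (by
        filter_upwards [] with z
        exact (hh z))
    exact h3.hasDerivAt
  -- derivWithin
  have hcd1 : ContDiffOn ℝ 1 h (Set.Ici xs) := by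
    have hr1 : ContDiffOn ℝ 1 (fun y : ℝ => y ^ (-b)) (Set.Ici xs) := by
      intro y hy
      exact (Real.contDiffAt_rpow_const_of_ne (ne_of_gt (hsub1 hy))).contDiffWithinAt
    have : ContDiffOn ℝ 1 (fun y : ℝ => H y * y ^ (-b)) (Set.Ici xs) := hHdiff.mul hr1
    exact this.congr fun y _ => hh y
  set g : ℝ → ℝ := derivWithin h (Set.Ici xs) with hg
  have hgc : ContinuousOn g (Set.Ici xs) :=
    hcd1.continuousOn_derivWithin (uniqueDiffOn_Ici xs) le_rfl
  have hgd : ∀ y ∈ Set.Ioi xs, g y = deriv h y := fun y hy =>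
    derivWithin_of_mem_nhds (Ici_mem_nhds hy)
  -- integrability (a): y^(-κ) * deriv h on Ioi xs
  have Ia : IntegrableOn (fun y => y ^ (-κ) * deriv h y) (Set.Ioi xs) := by
    have hms : AEStronglyMeasurable (fun y : ℝ => y ^ (-κ) * deriv h y)
        (volume.restrict (Set.Ioi xs)) := by
      refine AEStronglyMeasurable.mul ?_ ((measurable_deriv h).aestronglyMeasurable)
      exact ((hrc (-κ)).mono (fun y hy => lt_trans hxs hy)).aestronglyMeasurable measurableSet_Ioi
    refine hint1.mono' hms ?_
    filter_upwards [ae_restrict_mem measurableSet_Ioi] with y hy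
    have hy0 : 0 < y := lt_trans hxs hy
    rw [Real.norm_eq_abs, abs_mul, abs_of_nonneg (Real.rpow_nonneg hy0.le _)]
  -- integrability (b): y^(-κ-1) * h on Ioi xs
  have Ib : IntegrableOn (fun y => y ^ (-κ - 1) * h y) (Set.Ioi xs) := by
    have hgint : IntegrableOn (fun y => σ ^ 2 / 2 * (y ^ α * |H y| * m' y)) (Set.Ioi xs) :=
      hint2.const_mul _
    have hms : AEStronglyMeasurable (fun y : ℝ => y ^ (-κ - 1) * h y)
        (volume.restrict (Set.Ioi xs)) := by
      have : ContinuousOn (fun y : ℝ => y ^ (-κ - 1) * h y) (Set.Ioi (0:ℝ)) := (hrc _).mul hhc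
      exact ((this.mono (fun y hy => lt_trans hxs hy)).aestronglyMeasurable measurableSet_Ioi)
    refine hgint.mono' hms ?_
    filter_upwards [ae_restrict_mem measurableSet_Ioi] with y hy
    have hy0 : 0 < y := lt_trans hxs hy
    have habs : |y ^ α * |H y| * m' y| = y ^ α * |H y| * m' y := by
      apply abs_of_nonneg
      apply mul_nonneg (mul_nonneg (Real.rpow_nonneg hy0.le _) (abs_nonneg _))
      rw [hm]
      positivity
    have e : y ^ α * |H y| * m' y = 2 / σ ^ 2 * (y ^ (-κ - 1) * |h y|) := by
      rw [hm, hh, abs_mul, abs_of_nonneg (Real.rpow_nonneg hy0.le (-b))]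
      have e2 : y ^ α * y ^ (2 * μ / σ ^ 2 - 2) = y ^ (-κ - 1) * y ^ (-b) := by
        rw [← Real.rpow_add hy0, ← Real.rpow_add hy0]
        congr 1
        rw [hα, hκ, hb, hp]; ring
      linear_combination (2 / σ ^ 2 * |H y|) * e2
    rw [Real.norm_eq_abs, abs_mul, abs_of_nonneg (Real.rpow_nonneg hy0.le _), e]
    rw [show σ ^ 2 / 2 * (2 / σ ^ 2 * (y ^ (-κ - 1) * |h y|)) = y ^ (-κ - 1) * |h y| by
      field_simp]
  -- integrability on Ioo xs x of y^γ * deriv h  (goal 4)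
  have If1 : IntegrableOn (fun y => y ^ γ * deriv h y) (Set.Ioo xs x) := by
    have hcont : ContinuousOn (fun y : ℝ => y ^ γ * g y) (Set.Icc xs x) :=
      (((hrc γ).mono (fun y hy => lt_of_lt_of_le hxs hy.1)).mul
        (hgc.mono Icc_subset_Ici_self))
    have hi : IntegrableOn (fun y => y ^ γ * g y) (Set.Icc xs x) :=
      hcont.integrableOn_compact isCompact_Icc
    refine IntegrableOn.congr_fun (hi.mono_set Ioo_subset_Icc_self) ?_ measurableSet_Ioo
    intro y hy
    beta_reduce
    rw [hgd y hy.1]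
  -- integrability of y^(γ-1) * h on Ioo xs x
  have If0 : IntegrableOn (fun y => y ^ (γ - 1) * h y) (Set.Ioo xs x) := by
    have hcont : ContinuousOn (fun y : ℝ => y ^ (γ - 1) * h y) (Set.Icc xs x) :=
      ((hrc _).mul hhc).mono (fun y hy => lt_of_lt_of_le hxs hy.1)
    exact (hcont.integrableOn_compact isCompact_Icc).mono_set Ioo_subset_Icc_self
  -- FTC on [xs, x]
  have hftc1 : ∫ y in Set.Ioo xs x, (γ * y ^ (γ - 1) * h y + y ^ γ * deriv h y)
      = x ^ γ * h x - xs ^ γ * h xs := by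
    have hint : IntegrableOn (fun y => γ * y ^ (γ - 1) * h y + y ^ γ * deriv h y)
        (Set.Ioo xs x) := by
      have h0 := (If0.const_mul γ).add If1
      exact IntegrableOn.congr_fun h0 (fun y _ => by simp only [Pi.add_apply]; ring) measurableSet_Ioo
    have := intervalIntegral.integral_eq_sub_of_hasDerivAt_of_le hx
      (f := fun y => y ^ γ * h y)
      (f' := fun y => γ * y ^ (γ - 1) * h y + y ^ γ * deriv h y)
      (((hrc γ).mul hhc).mono (fun y hy => lt_of_lt_of_le hxs hy.1))
      (by
        intro y hy
        have hy0 : 0 < y := lt_trans hxs hy.1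
        have h1 : HasDerivAt (fun z : ℝ => z ^ γ) (γ * y ^ (γ - 1)) y :=
          Real.hasDerivAt_rpow_const (Or.inl hy0.ne')
        exact h1.mul (hder y hy.1))
      (by
        rw [intervalIntegrable_iff_integrableOn_Ioo_of_le hx]
        exact hint)
    rw [intervalIntegral.integral_of_le hx, MeasureTheory.integral_Ioc_eq_integral_Ioo] at this
    exact this
  have hI1 : ∫ y in Set.Ioo xs x, y ^ (γ - 1) * h y
      = (x ^ γ * h x - xs ^ γ * h xs - (∫ y in Set.Ioo xs x, y ^ γ * deriv h y)) / γ := by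
    have hsplit : ∫ y in Set.Ioo xs x, (γ * y ^ (γ - 1) * h y + y ^ γ * deriv h y)
        = γ * (∫ y in Set.Ioo xs x, y ^ (γ - 1) * h y)
          + ∫ y in Set.Ioo xs x, y ^ γ * deriv h y := by
      rw [MeasureTheory.integral_add (IntegrableOn.congr_fun (If0.const_mul γ)
        (fun y _ => by beta_reduce; ring) measurableSet_Ioo) If1]
      congr 1
      rw [← MeasureTheory.integral_const_mul]
      apply setIntegral_congr_fun measurableSet_Ioo
      intro y _; beta_reduce; ring
    rw [hsplit] at hftc1
    field_simp
    linarith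
  -- piecewise split of Ioo 0 x
  have hunion : Set.Ioo (0:ℝ) x = Set.Ioo 0 xs ∪ Set.Ico xs x := by
    ext y
    simp only [mem_Ioo, mem_union, mem_Ico]
    constructor
    · rintro ⟨h1, h2⟩
      by_cases hc : y < xs
      · exact Or.inl ⟨h1, hc⟩
      · exact Or.inr ⟨not_lt.1 hc, h2⟩
    · rintro (⟨h1, h2⟩ | ⟨h1, h2⟩)
      · exact ⟨h1, lt_of_lt_of_le h2 hx⟩
      · exact ⟨lt_of_lt_of_le hxs h1, h2⟩
  have hdisj : Disjoint (Set.Ioo (0:ℝ) xs) (Set.Ico xs x) := by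
    apply Set.disjoint_left.2
    rintro y ⟨_, h2⟩ ⟨h3, _⟩
    exact absurd h3 (not_le.2 h2)
  -- integrability of first V-integral, in two pieces
  have IbV : IntegrableOn (fun y => y ^ β * V y * m' y) (Set.Ioo 0 xs) := by
    have base : IntegrableOn (fun y : ℝ => 2 / σ ^ 2 * h xs * y ^ (γ - 1)) (Set.Ioo 0 xs) :=
      ((intervalIntegral.integrableOn_Ioo_rpow_iff hxs).2 (by linarith)).const_mul _
    refine IntegrableOn.congr_fun base ?_ measurableSet_Ioo
    intro y hy
    beta_reduce
    rw [hV, if_pos hy.2.le]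
    exact (key0 y hy.1).symm
  have IcV : IntegrableOn (fun y => y ^ β * V y * m' y) (Set.Ico xs x) := by
    have hcont : ContinuousOn (fun y : ℝ => y ^ β * H y * m' y) (Set.Icc xs x) :=
      (((hrc β).mul hHcont).mul hm'c).mono (fun y hy => lt_of_lt_of_le hxs hy.1)
    have hi : IntegrableOn (fun y => y ^ β * H y * m' y) (Set.Icc xs x) :=
      hcont.integrableOn_compact isCompact_Icc
    refine IntegrableOn.congr_fun (hi.mono_set Ico_subset_Icc_self) ?_ measurableSet_Ico
    intro y hy
    beta_reduce
    rw [hVH y hy.1]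
  have goal1 : IntegrableOn (fun y => y ^ β * V y * m' y) (Set.Ioo 0 x) := by
    rw [hunion]; exact IbV.union IcV
  -- integrability of second V-integral (goal 2)
  have goal2 : IntegrableOn (fun y => y ^ α * V y * m' y) (Set.Ioi x) := by
    have base : IntegrableOn (fun y : ℝ => 2 / σ ^ 2 * (y ^ (-κ - 1) * h y)) (Set.Ioi x) :=
      (Ib.mono_set (Ioi_subset_Ioi hx)).const_mul _
    refine IntegrableOn.congr_fun base ?_ measurableSet_Ioi
    intro y hy
    have hyx : xs < y := lt_of_le_of_lt hx hy
    beta_reduce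
    rw [hVH y hyx.le]
    exact (key2 y (lt_trans hxs hyx)).symm
  have goal3 : IntegrableOn (fun y => y ^ (-κ) * deriv h y) (Set.Ioi x) :=
    Ia.mono_set (Ioi_subset_Ioi hx)
  -- compute first integral
  have hVeq1 : ∫ y in Set.Ioo (0:ℝ) xs, y ^ β * V y * m' y
      = 2 / σ ^ 2 * h xs * (xs ^ γ / γ) := by
    have e : ∫ y in Set.Ioo (0:ℝ) xs, y ^ β * V y * m' y
        = ∫ y in Set.Ioo (0:ℝ) xs, 2 / σ ^ 2 * h xs * y ^ (γ - 1) := by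
      apply setIntegral_congr_fun measurableSet_Ioo
      intro y hy
      beta_reduce
      rw [hV, if_pos hy.2.le]
      exact key0 y hy.1
    rw [e, MeasureTheory.integral_const_mul]
    congr 1
    have e2 : ∫ y in Set.Ioo (0:ℝ) xs, y ^ (γ - 1) = ∫ y in (0:ℝ)..xs, y ^ (γ - 1) := by
      rw [intervalIntegral.integral_of_le hxs.le, MeasureTheory.integral_Ioc_eq_integral_Ioo]
    rw [e2, integral_rpow (Or.inl (by linarith))]
    rw [show γ - 1 + 1 = γ by ring, Real.zero_rpow hγ0.ne']
    ring
  have hVeq2 : ∫ y in Set.Ico xs x, y ^ β * V y * m' y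
      = 2 / σ ^ 2 * ((x ^ γ * h x - xs ^ γ * h xs
          - (∫ y in Set.Ioo xs x, y ^ γ * deriv h y)) / γ) := by
    rw [MeasureTheory.integral_Ico_eq_integral_Ioo]
    have e : ∫ y in Set.Ioo xs x, y ^ β * V y * m' y
        = ∫ y in Set.Ioo xs x, 2 / σ ^ 2 * (y ^ (γ - 1) * h y) := by
      apply setIntegral_congr_fun measurableSet_Ioo
      intro y hy
      beta_reduce
      rw [hVH y hy.1.le]
      exact key1 y (lt_trans hxs hy.1)
    rw [e, MeasureTheory.integral_const_mul, hI1]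
  have E1 : ∫ y in Set.Ioo (0:ℝ) x, y ^ β * V y * m' y
      = 2 / σ ^ 2 / γ * (x ^ γ * h x - (∫ y in Set.Ioo xs x, y ^ γ * deriv h y)) := by
    rw [hunion, MeasureTheory.setIntegral_union hdisj measurableSet_Ico IbV IcV, hVeq1, hVeq2]
    field_simp
    ring
  -- improper FTC on (x, ∞)
  have hftc2 : ∫ y in Set.Ioi x, (-κ * y ^ (-κ - 1) * h y + y ^ (-κ) * deriv h y)
      = 0 - x ^ (-κ) * h x := by
    have hcont2 : ContinuousWithinAt (fun y : ℝ => y ^ (-κ) * h y) (Set.Ici x) x :=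
      (((hrc (-κ)).mul hhc) x hx0).mono (fun y (hy : y ∈ Set.Ici x) => lt_of_lt_of_le hx0 hy)
    have hder2 : ∀ y ∈ Set.Ioi x, HasDerivAt (fun y : ℝ => y ^ (-κ) * h y)
        (-κ * y ^ (-κ - 1) * h y + y ^ (-κ) * deriv h y) y := by
      intro y hy
      have hy0 : 0 < y := lt_trans hx0 hy
      have h1 : HasDerivAt (fun z : ℝ => z ^ (-κ)) (-κ * y ^ (-κ - 1)) y :=
        Real.hasDerivAt_rpow_const (Or.inl hy0.ne')
      exact h1.mul (hder y (lt_of_le_of_lt hx hy))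
    have hint3 : IntegrableOn (fun y => -κ * y ^ (-κ - 1) * h y + y ^ (-κ) * deriv h y)
        (Set.Ioi x) := by
      have h0 := ((Ib.mono_set (Ioi_subset_Ioi hx)).const_mul (-κ)).add goal3
      exact IntegrableOn.congr_fun h0 (fun y _ => by simp only [Pi.add_apply]; ring) measurableSet_Ioi
    exact MeasureTheory.integral_Ioi_of_hasDerivAt_of_tendsto hcont2 hder2 hint3 hlim
  have hI2 : ∫ y in Set.Ioi x, y ^ (-κ - 1) * h y
      = (x ^ (-κ) * h x + (∫ y in Set.Ioi x, y ^ (-κ) * deriv h y)) / κ := by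
    have hsplit : ∫ y in Set.Ioi x, (-κ * y ^ (-κ - 1) * h y + y ^ (-κ) * deriv h y)
        = -κ * (∫ y in Set.Ioi x, y ^ (-κ - 1) * h y)
          + ∫ y in Set.Ioi x, y ^ (-κ) * deriv h y := by
      rw [MeasureTheory.integral_add (IntegrableOn.congr_fun
        ((Ib.mono_set (Ioi_subset_Ioi hx)).const_mul (-κ))
        (fun y _ => by beta_reduce; ring) measurableSet_Ioi) goal3]
      congr 1
      rw [← MeasureTheory.integral_const_mul]
      apply setIntegral_congr_fun measurableSet_Ioi
      intro y _; beta_reduce; ring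
    rw [hsplit] at hftc2
    field_simp
    linarith
  have E2 : ∫ y in Set.Ioi x, y ^ α * V y * m' y
      = 2 / σ ^ 2 / κ * (x ^ (-κ) * h x + (∫ y in Set.Ioi x, y ^ (-κ) * deriv h y)) := by
    have e : ∫ y in Set.Ioi x, y ^ α * V y * m' y
        = ∫ y in Set.Ioi x, 2 / σ ^ 2 * (y ^ (-κ - 1) * h y) := by
      apply setIntegral_congr_fun measurableSet_Ioi
      intro y hy
      have hyx : xs < y := lt_of_le_of_lt hx hy
      beta_reduce
      rw [hVH y hyx.le]
      exact key2 y (lt_trans hxs hyx)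
    rw [e, MeasureTheory.integral_const_mul, hI2]
    field_simp
  refine ⟨goal1, goal2, goal3, If1, ?_⟩
  rw [hGV x, E1, E2, h2S]
  have e1 : x ^ α * x ^ γ = x ^ b := by
    rw [← Real.rpow_add hx0]; congr 1; rw [hα, hγ, hb]; ring
  have e2 : x ^ β * x ^ (-κ) = x ^ b := by
    rw [← Real.rpow_add hx0]; congr 1; rw [hβ, hκ, hb]; ring
  have eH : x ^ b * h x = H x := by
    rw [hh, Real.rpow_neg hx0.le]
    field_simp
  rw [← eH]
  exact final_algebra lam (σ ^ 2) γ κ (x ^ α) (x ^ β) (x ^ γ) (x ^ (-κ)) (x ^ b) (h x)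
    (∫ y in Set.Ioo xs x, y ^ γ * deriv h y) (∫ y in Set.Ioi x, y ^ (-κ) * deriv h y)
    hσ2.ne' hγ0.ne' hκ0.ne' hγκ0.ne' e1 e2 hγκ
end

section
/- In the setting described in the context, the function x ↦ λ(G V)(x) · x^{−b} is differentiable on (0,∞) and for every x > 0 its derivative equals (κγ/(κ+γ)) [ x^{κ−1} ∫_{max(x,x*)}^∞ y^{−κ} (d/dy)( H(y) y^{−b} ) dy + x^{−γ−1} ∫_{x*}^{max(x,x*)} y^{γ} (d/dy)( H(y) y^{−b} ) dy ], where (G V)(x) = (2S)^{-1}[ x^{α} ∫₀^x y^{β} V(y) m'(y) dy + x^{β} ∫_x^∞ y^{α} V(y) m'(y) dy ] with S = √(p² + 2(r+λ)/σ²) (so 2S = β − α). -/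
open Real Set MeasureTheory Filter

lemma rpow_le_add_endpoints {a b x q : ℝ} (ha : 0 < a) (hax : a ≤ x) (hxb : x ≤ b) :
    x ^ q ≤ a ^ q + b ^ q := by
  rcases le_total q 0 with hq | hq
  · have h1 : x ^ q ≤ a ^ q := Real.rpow_le_rpow_of_nonpos ha hax hq
    have h2 : (0:ℝ) ≤ b ^ q := Real.rpow_nonneg (le_trans ha.le (hax.trans hxb)) q
    linarith
  · have h1 : x ^ q ≤ b ^ q := Real.rpow_le_rpow (le_trans ha.le hax) hxb hq
    have h2 : (0:ℝ) ≤ a ^ q := Real.rpow_nonneg ha.le q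
    linarith

lemma meas_aux1 (c q : ℝ) : Measurable fun y : ℝ => c * y ^ q := by measurability
lemma meas_aux2 (a c q d : ℝ) : Measurable fun y : ℝ => a - c * y ^ q * d := by measurability
lemma meas_aux3 (q d : ℝ) : Measurable fun y : ℝ => y ^ q * d := by measurability

lemma psi_hasDerivAt {κ γ y x : ℝ} (hκ : 0 < κ) (hγ : 0 < γ) (hy : 0 < y) (hx : 0 < x) :
    HasDerivAt (fun x : ℝ => if x ≤ y then κ⁻¹ * x ^ κ * y ^ (-κ)
        else κ⁻¹ + γ⁻¹ - γ⁻¹ * y ^ γ * x ^ (-γ))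
      (if x ≤ y then x ^ (κ - 1) * y ^ (-κ) else y ^ γ * x ^ (-γ - 1)) x := by
  have hb1 : ∀ z : ℝ, z ≠ 0 → HasDerivAt (fun x : ℝ => κ⁻¹ * x ^ κ * y ^ (-κ))
      (z ^ (κ - 1) * y ^ (-κ)) z := by
    intro z hz
    have := ((Real.hasDerivAt_rpow_const (p := κ) (Or.inl hz)).const_mul κ⁻¹).mul_const
      (y ^ (-κ))
    refine this.congr_deriv ?_
    field_simp
  have hb2 : ∀ z : ℝ, z ≠ 0 → HasDerivAt (fun x : ℝ => κ⁻¹ + γ⁻¹ - γ⁻¹ * y ^ γ * x ^ (-γ))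
      (y ^ γ * z ^ (-γ - 1)) z := by
    intro z hz
    have := ((Real.hasDerivAt_rpow_const (p := -γ) (Or.inl hz)).const_mul
      (γ⁻¹ * y ^ γ)).const_sub (κ⁻¹ + γ⁻¹)
    refine this.congr_deriv ?_
    rw [show -γ - 1 = -γ - 1 from rfl]
    field_simp
  rcases lt_trichotomy x y with hxy | hxy | hxy
  · rw [if_pos hxy.le]
    refine (hb1 x hx.ne').congr_of_eventuallyEq ?_
    filter_upwards [Iio_mem_nhds hxy] with z hz
    rw [if_pos (le_of_lt hz)]
  · subst hxy
    rw [if_pos le_rfl]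
    have e1 : x ^ κ * x ^ (-κ) = 1 := by
      rw [← Real.rpow_add hx]; simp
    have e2 : x ^ γ * x ^ (-γ) = 1 := by
      rw [← Real.rpow_add hx]; simp
    have hval : x ^ (κ - 1) * x ^ (-κ) = x ^ γ * x ^ (-γ - 1) := by
      rw [← Real.rpow_add hx, ← Real.rpow_add hx]
      ring_nf
    have hjun : κ⁻¹ * x ^ κ * x ^ (-κ) = κ⁻¹ + γ⁻¹ - γ⁻¹ * x ^ γ * x ^ (-γ) := by
      rw [mul_assoc, e1, mul_assoc, e2]
      field_simp
      ring
    have hleft : HasDerivWithinAt (fun z : ℝ => if z ≤ x then κ⁻¹ * z ^ κ * x ^ (-κ)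
        else κ⁻¹ + γ⁻¹ - γ⁻¹ * x ^ γ * z ^ (-γ)) (x ^ (κ - 1) * x ^ (-κ)) (Iic x) x := by
      refine ((hb1 x hx.ne').hasDerivWithinAt).congr (fun z hz => ?_) ?_
      · rw [if_pos (mem_Iic.mp hz)]
      · rw [if_pos le_rfl]
    have hright : HasDerivWithinAt (fun z : ℝ => if z ≤ x then κ⁻¹ * z ^ κ * x ^ (-κ)
        else κ⁻¹ + γ⁻¹ - γ⁻¹ * x ^ γ * z ^ (-γ)) (x ^ (κ - 1) * x ^ (-κ)) (Ici x) x := by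
      rw [hval]
      refine ((hb2 x hx.ne').hasDerivWithinAt).congr (fun z hz => ?_) ?_
      · rcases eq_or_lt_of_le (mem_Ici.mp hz) with rfl | hzx
        · rw [if_pos le_rfl]
          exact hjun
        · rw [if_neg (not_le.mpr hzx)]
      · rw [if_pos le_rfl]
        exact hjun
    have := hleft.union hright
    rw [Iic_union_Ici] at this
    exact this.hasDerivAt (by simp)
  · rw [if_neg (not_le.mpr hxy)]
    refine (hb2 x hx.ne').congr_of_eventuallyEq ?_
    filter_upwards [Ioi_mem_nhds hxy] with z hz
    rw [if_neg (not_le.mpr hz)]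

set_option maxHeartbeats 4000000 in
/-- Derivative formula for the ratio `x ↦ λ(GV)(x) x^{−b}`, where `GV` is the Green-kernel
resolvent at rate `r+λ` of the value function `V` (a multiple of `y^b` below the threshold
`x*`, equal to `H` above). -/
theorem deriv_resolvent_ratio
    (μ σ r lam : ℝ) (hσ : 0 < σ) (hr : 0 < r) (hlam : 0 < lam)
    (p s S b β α κ γ : ℝ)
    (hp : p = 1 / 2 - μ / σ ^ 2)
    (hs : s = Real.sqrt (p ^ 2 + 2 * r / σ ^ 2))
    (hS : S = Real.sqrt (p ^ 2 + 2 * (r + lam) / σ ^ 2))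
    (hb : b = p + s) (hβ : β = p + S) (hα : α = p - S)
    (hκ : κ = S - s) (hγ : γ = S + s)
    (m' : ℝ → ℝ) (hm : ∀ y : ℝ, m' y = 2 / σ ^ 2 * y ^ (2 * μ / σ ^ 2 - 2))
    (xs : ℝ) (hxs : 0 < xs)
    (H : ℝ → ℝ)
    (hHcont : ContinuousOn H (Set.Ioi 0))
    (hHdiff : ContDiffOn ℝ 1 H (Set.Ici xs))
    (h : ℝ → ℝ) (hh : ∀ y : ℝ, h y = H y * y ^ (-b))
    (hint1 : IntegrableOn (fun y => y ^ (-κ) * |deriv h y|) (Set.Ioi xs))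
    (hlim : Tendsto (fun y => y ^ (-κ) * h y) atTop (nhds 0))
    (hint2 : IntegrableOn (fun y => y ^ α * |H y| * m' y) (Set.Ioi xs))
    (V : ℝ → ℝ)
    (hV : ∀ y : ℝ, V y = if y ≤ xs then H xs / xs ^ b * y ^ b else H y)
    (GV : ℝ → ℝ)
    (hGV : ∀ x : ℝ, GV x = (2 * S)⁻¹ *
      (x ^ α * (∫ y in Set.Ioo (0 : ℝ) x, y ^ β * V y * m' y)
        + x ^ β * (∫ y in Set.Ioi x, y ^ α * V y * m' y))) :
    ∀ x : ℝ, 0 < x →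
      HasDerivAt (fun z => lam * GV z * z ^ (-b))
        (κ * γ / (κ + γ) *
          (x ^ (κ - 1) * (∫ y in Set.Ioi (max x xs), y ^ (-κ) * deriv h y)
            + x ^ (-γ - 1) * ∫ y in Set.Ioo xs (max x xs), y ^ γ * deriv h y)) x := by
  -- basic positivity facts
  have hσ2 : (0:ℝ) < σ ^ 2 := by positivity
  have hs0 : 0 < s := by
    rw [hs]; exact Real.sqrt_pos.mpr (by positivity)
  have hS0 : 0 < S := by
    rw [hS]; exact Real.sqrt_pos.mpr (by positivity)
  have hsS : s < S := by
    rw [hs, hS]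
    apply Real.sqrt_lt_sqrt (by positivity)
    gcongr
    linarith
  have hκ0 : 0 < κ := by rw [hκ]; linarith
  have hγ0 : 0 < γ := by rw [hγ]; linarith
  have hsqs : s ^ 2 = p ^ 2 + 2 * r / σ ^ 2 := by
    rw [hs]; exact Real.sq_sqrt (by positivity)
  have hsqS : S ^ 2 = p ^ 2 + 2 * (r + lam) / σ ^ 2 := by
    rw [hS]; exact Real.sq_sqrt (by positivity)
  have hκγ : κ * γ = 2 * lam / σ ^ 2 := by
    have : S ^ 2 - s ^ 2 = 2 * lam / σ ^ 2 := by
      rw [hsqs, hsqS]; field_simp; ring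
    rw [hκ, hγ]; nlinarith [this]
  have hsum : κ + γ = 2 * S := by rw [hκ, hγ]; ring
  have hfactor : lam * (2 * S)⁻¹ * (2 / σ ^ 2) = κ * γ / (κ + γ) := by
    rw [hκγ, hsum]
    field_simp

  set c : ℝ := H xs / xs ^ b with hc
  -- exponent identities
  have k1 : ∀ y : ℝ, 0 < y → y ^ β * y ^ b * y ^ (2 * μ / σ ^ 2 - 2) = y ^ (γ - 1) := by
    intro y hy
    rw [← Real.rpow_add hy, ← Real.rpow_add hy]
    congr 1
    rw [hβ, hb, hγ, hp]
    field_simp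
    ring
  have k2 : ∀ y : ℝ, 0 < y → y ^ α * y ^ b * y ^ (2 * μ / σ ^ 2 - 2) = y ^ (-κ - 1) := by
    intro y hy
    rw [← Real.rpow_add hy, ← Real.rpow_add hy]
    congr 1
    rw [hα, hb, hκ, hp]
    field_simp
    ring
  -- h xs equals c
  have hxsne : xs ^ b ≠ 0 := (Real.rpow_pos_of_pos hxs b).ne'
  have hcxs : h xs = c := by
    rw [hh, hc, Real.rpow_neg hxs.le, div_eq_mul_inv]
  have hHy : ∀ y : ℝ, 0 < y → H y = h y * y ^ b := by
    intro y hy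
    rw [hh, mul_assoc, ← Real.rpow_add hy]
    simp
  -- integrand identities
  have idA : ∀ y : ℝ, 0 < y → y ≤ xs → y ^ β * V y * m' y = 2 / σ ^ 2 * c * y ^ (γ - 1) := by
    intro y hy hyxs
    rw [hV, if_pos hyxs, hm, ← k1 y hy]
    ring
  have idB : ∀ y : ℝ, xs < y → y ^ β * V y * m' y = 2 / σ ^ 2 * (y ^ (γ - 1) * h y) := by
    intro y hy
    have hy0 : 0 < y := hxs.trans hy
    rw [hV, if_neg (not_le.mpr hy), hm, hHy y hy0, ← k1 y hy0]
    ring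
  have idC : ∀ y : ℝ, 0 < y → y ≤ xs → y ^ α * V y * m' y = 2 / σ ^ 2 * c * y ^ (-κ - 1) := by
    intro y hy hyxs
    rw [hV, if_pos hyxs, hm, ← k2 y hy]
    ring
  have idD : ∀ y : ℝ, xs < y → y ^ α * V y * m' y = 2 / σ ^ 2 * (y ^ (-κ - 1) * h y) := by
    intro y hy
    have hy0 : 0 < y := hxs.trans hy
    rw [hV, if_neg (not_le.mpr hy), hm, hHy y hy0, ← k2 y hy0]
    ring
  have idD' : ∀ y : ℝ, xs < y →
      y ^ α * |H y| * m' y = 2 / σ ^ 2 * (y ^ (-κ - 1) * |h y|) := by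
    intro y hy
    have hy0 : 0 < y := hxs.trans hy
    have : |H y| = |h y| * y ^ b := by
      rw [hHy y hy0, abs_mul, abs_of_nonneg (Real.rpow_nonneg hy0.le b)]
    rw [this, hm, ← k2 y hy0]
    ring
  -- continuity and differentiability of h
  have hfun : h = fun y => H y * y ^ (-b) := funext hh
  have hcontH : ContinuousOn h (Ioi 0) := by
    rw [hfun]
    exact hHcont.mul (fun y hy =>
      (Real.continuousAt_rpow_const y (-b) (Or.inl (ne_of_gt hy))).continuousWithinAt)
  have hconthAt : ∀ y : ℝ, 0 < y → ContinuousAt h y := fun y hy =>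
    hcontH.continuousAt (Ioi_mem_nhds hy)
  have hdiffh : ∀ y : ℝ, xs < y → HasDerivAt h (deriv h y) y := by
    intro y hy
    have hy0 : 0 < y := hxs.trans hy
    have hH : DifferentiableAt ℝ H y :=
      (hHdiff.contDiffAt (Ici_mem_nhds hy)).differentiableAt one_ne_zero
    have : DifferentiableAt ℝ h y := by
      rw [hfun]
      exact hH.mul (DifferentiableAt.rpow_const differentiableAt_id (Or.inl hy0.ne'))
    exact this.hasDerivAt

  -- integrability facts
  have crp : ∀ q : ℝ, ContinuousOn (fun y : ℝ => y ^ q) (Ioi 0) := fun q y hy =>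
    (Real.continuousAt_rpow_const y q (Or.inl (ne_of_gt hy))).continuousWithinAt
  have hsub : Ioi xs ⊆ Ioi (0:ℝ) := Ioi_subset_Ioi hxs.le
  have hsub2 : ∀ M : ℝ, Ioc xs M ⊆ Ioi (0:ℝ) := fun M y hy => hxs.trans hy.1
  have g1 : IntegrableOn (fun y => y ^ (-κ) * deriv h y) (Ioi xs) := by
    have meas : AEStronglyMeasurable (fun y => y ^ (-κ) * deriv h y)
        (volume.restrict (Ioi xs)) :=
      (((crp (-κ)).mono hsub).aestronglyMeasurable measurableSet_Ioi).mul
        (measurable_deriv h).aestronglyMeasurable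
    refine hint1.mono' meas ?_
    refine (ae_restrict_iff' measurableSet_Ioi).2 (Filter.Eventually.of_forall fun y hy => ?_)
    have hy0 : 0 < y := hxs.trans hy
    rw [Real.norm_eq_abs, abs_mul, abs_of_nonneg (Real.rpow_nonneg hy0.le _)]
  have g2abs : IntegrableOn (fun y => y ^ (-κ - 1) * |h y|) (Ioi xs) := by
    refine IntegrableOn.congr_fun (hint2.const_mul (σ ^ 2 / 2)) (fun y hy => ?_)
      measurableSet_Ioi
    rw [idD' y hy]
    field_simp
  have g2 : IntegrableOn (fun y => y ^ (-κ - 1) * h y) (Ioi xs) := by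
    have meas : AEStronglyMeasurable (fun y => y ^ (-κ - 1) * h y)
        (volume.restrict (Ioi xs)) := by
      apply ContinuousOn.aestronglyMeasurable _ measurableSet_Ioi
      exact ((crp (-κ - 1)).mono hsub).mul (hcontH.mono hsub)
    refine g2abs.mono' meas ?_
    refine (ae_restrict_iff' measurableSet_Ioi).2 (Filter.Eventually.of_forall fun y hy => ?_)
    have hy0 : 0 < y := hxs.trans hy
    rw [Real.norm_eq_abs, abs_mul, abs_of_nonneg (Real.rpow_nonneg hy0.le _)]
  have gpow : ∀ M : ℝ, ∀ q : ℝ, IntegrableOn (fun y => y ^ q * deriv h y) (Ioc xs M) := by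
    intro M q
    have meas : AEStronglyMeasurable (fun y => y ^ q * deriv h y)
        (volume.restrict (Ioc xs M)) :=
      (((crp q).mono (hsub2 M)).aestronglyMeasurable measurableSet_Ioc).mul
        (measurable_deriv h).aestronglyMeasurable
    refine Integrable.mono' (((hint1.mono_set Ioc_subset_Ioi_self).const_mul
      (xs ^ (q + κ) + M ^ (q + κ)))) meas ?_
    refine (ae_restrict_iff' measurableSet_Ioc).2 (Filter.Eventually.of_forall fun y hy => ?_)
    have hy0 : 0 < y := hxs.trans hy.1
    have key : y ^ q ≤ (xs ^ (q + κ) + M ^ (q + κ)) * y ^ (-κ) := by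
      have h1 : y ^ (q + κ) ≤ xs ^ (q + κ) + M ^ (q + κ) :=
        rpow_le_add_endpoints hxs hy.1.le hy.2
      have h2 : y ^ q = y ^ (q + κ) * y ^ (-κ) := by
        rw [← Real.rpow_add hy0]; ring_nf
      rw [h2]
      exact mul_le_mul_of_nonneg_right h1 (Real.rpow_nonneg hy0.le _)
    rw [Real.norm_eq_abs, abs_mul]
    calc |y ^ q| * |deriv h y| = y ^ q * |deriv h y| := by
          rw [abs_of_nonneg (Real.rpow_nonneg hy0.le _)]
      _ ≤ (xs ^ (q + κ) + M ^ (q + κ)) * y ^ (-κ) * |deriv h y| :=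
          mul_le_mul_of_nonneg_right key (abs_nonneg _)
      _ = (xs ^ (q + κ) + M ^ (q + κ)) * (y ^ (-κ) * |deriv h y|) := by ring
  have gder : ∀ M : ℝ, IntegrableOn (deriv h) (Ioc xs M) := by
    intro M
    refine (gpow M 0).congr_fun (fun y hy => ?_) measurableSet_Ioc
    simp only [Real.rpow_zero, one_mul]
  -- integration by parts on the tail
  have P1 : ∀ a : ℝ, xs ≤ a →
      ∫ y in Ioi a, y ^ (-κ) * deriv h y
        = -(a ^ (-κ) * h a) + κ * ∫ y in Ioi a, y ^ (-κ - 1) * h y := by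
    intro a ha
    have ha0 : 0 < a := lt_of_lt_of_le hxs ha
    have ia : IntegrableOn (fun y => -κ * (y ^ (-κ - 1) * h y)) (Ioi a) :=
      (g2.mono_set (Ioi_subset_Ioi ha)).const_mul (-κ)
    have ib : IntegrableOn (fun y => y ^ (-κ) * deriv h y) (Ioi a) :=
      g1.mono_set (Ioi_subset_Ioi ha)
    have hder : ∀ y ∈ Ioi a, HasDerivAt (fun y : ℝ => y ^ (-κ) * h y)
        (-κ * (y ^ (-κ - 1) * h y) + y ^ (-κ) * deriv h y) y := by
      intro y hy
      have hy0 : 0 < y := ha0.trans hy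
      have := (Real.hasDerivAt_rpow_const (x := y) (p := -κ) (Or.inl hy0.ne')).mul
        (hdiffh y (lt_of_le_of_lt ha hy))
      refine this.congr_deriv ?_
      ring
    have hcont : ContinuousWithinAt (fun y : ℝ => y ^ (-κ) * h y) (Ici a) a :=
      ((Real.continuousAt_rpow_const a (-κ) (Or.inl ha0.ne')).mul
        (hconthAt a ha0)).continuousWithinAt
    have key := integral_Ioi_of_hasDerivAt_of_tendsto hcont hder (ia.add ib) hlim
    rw [integral_add ia ib, integral_const_mul] at key
    linarith [key]
  -- fundamental theorem of calculus on finite pieces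
  have P2' : ∀ M : ℝ, xs ≤ M → ∫ y in Ioo xs M, deriv h y = h M - h xs := by
    intro M hM
    have key := intervalIntegral.integral_eq_sub_of_hasDeriv_right_of_le hM
      (hcontH.mono (fun y hy => lt_of_lt_of_le hxs hy.1))
      (fun y hy => (hdiffh y hy.1).hasDerivWithinAt)
      ((intervalIntegrable_iff_integrableOn_Ioc_of_le hM).2 (gder M))
    rw [← integral_Ioc_eq_integral_Ioo, ← intervalIntegral.integral_of_le hM]
    exact key
  have P2 : ∀ M : ℝ, xs ≤ M →
      ∫ y in Ioo xs M, y ^ γ * deriv h y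
        = M ^ γ * h M - xs ^ γ * h xs - γ * ∫ y in Ioo xs M, y ^ (γ - 1) * h y := by
    intro M hM
    have hIccsub : Icc xs M ⊆ Ioi (0:ℝ) := fun y hy => lt_of_lt_of_le hxs hy.1
    have c1 : ContinuousOn (fun y : ℝ => γ * (y ^ (γ - 1) * h y)) (Icc xs M) :=
      (((crp (γ - 1)).mono hIccsub).mul (hcontH.mono hIccsub)).const_smul γ
    have i1 : IntegrableOn (fun y : ℝ => γ * (y ^ (γ - 1) * h y)) (Ioo xs M) :=
      (c1.integrableOn_Icc).mono_set Ioo_subset_Icc_self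
    have i2 : IntegrableOn (fun y : ℝ => y ^ γ * deriv h y) (Ioo xs M) :=
      (gpow M γ).mono_set Ioo_subset_Ioc_self
    have key := intervalIntegral.integral_eq_sub_of_hasDeriv_right_of_le hM
      (f := fun y : ℝ => y ^ γ * h y)
      (f' := fun y : ℝ => γ * (y ^ (γ - 1) * h y) + y ^ γ * deriv h y)
      (((crp γ).mono hIccsub).mul (hcontH.mono hIccsub))
      (fun y hy => by
        have hy0 : 0 < y := hxs.trans hy.1
        have := (Real.hasDerivAt_rpow_const (x := y) (p := γ) (Or.inl hy0.ne')).mul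
          (hdiffh y hy.1)
        have e : γ * y ^ (γ - 1) * h y + y ^ γ * deriv h y
            = γ * (y ^ (γ - 1) * h y) + y ^ γ * deriv h y := by ring
        rw [e] at this
        exact this.hasDerivWithinAt)
      ((c1.intervalIntegrable_of_Icc hM).add
        ((intervalIntegrable_iff_integrableOn_Ioc_of_le hM).2 (gpow M γ)))
    rw [intervalIntegral.integral_of_le hM, integral_Ioc_eq_integral_Ioo,
      integral_add i1 i2, integral_const_mul] at key
    have key' : γ * (∫ y in Ioo xs M, y ^ (γ - 1) * h y)
        + (∫ y in Ioo xs M, y ^ γ * deriv h y)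
        = M ^ γ * h M - xs ^ γ * h xs := key
    linarith [key']
  -- power integrals
  have Q1 : ∀ a : ℝ, 0 < a → ∫ y in Ioo (0:ℝ) a, y ^ (γ - 1) = a ^ γ / γ := by
    intro a ha
    have key : ∫ y in (0:ℝ)..a, y ^ (γ - 1)
        = (a ^ (γ - 1 + 1) - (0:ℝ) ^ (γ - 1 + 1)) / (γ - 1 + 1) :=
      integral_rpow (Or.inl (by linarith))
    rw [intervalIntegral.integral_of_le ha.le, integral_Ioc_eq_integral_Ioo] at key
    rw [key, show γ - 1 + 1 = γ by ring, Real.zero_rpow hγ0.ne', sub_zero]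
  have Q2 : ∀ a M : ℝ, 0 < a → a ≤ M →
      ∫ y in Ioo a M, y ^ (-κ - 1) = (a ^ (-κ) - M ^ (-κ)) / κ := by
    intro a M ha haM
    have hM0 : 0 < M := lt_of_lt_of_le ha haM
    have key : ∫ y in a..M, y ^ (-κ - 1)
        = (M ^ (-κ - 1 + 1) - a ^ (-κ - 1 + 1)) / (-κ - 1 + 1) :=
      integral_rpow (Or.inr ⟨by intro hcon; exact hκ0.ne' (by linarith),
        Set.notMem_uIcc_of_lt ha hM0⟩)
    rw [intervalIntegral.integral_of_le haM, integral_Ioc_eq_integral_Ioo] at key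
    rw [key, show -κ - 1 + 1 = -κ by ring, div_neg, ← neg_div, neg_sub]
  -- splitting integrals
  have splitIoi : ∀ (f : ℝ → ℝ) (x M : ℝ), x ≤ M → IntegrableOn f (Ioc x M) →
      IntegrableOn f (Ioi M) →
      ∫ y in Ioi x, f y = (∫ y in Ioc x M, f y) + ∫ y in Ioi M, f y := by
    intro f x M hxM h1 h2
    rw [← Ioc_union_Ioi_eq_Ioi hxM,
      setIntegral_union (Ioc_disjoint_Ioi le_rfl) measurableSet_Ioi h1 h2]
  have splitIoc : ∀ (f : ℝ → ℝ) (x M N : ℝ), x ≤ M → M ≤ N →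
      IntegrableOn f (Ioc x M) → IntegrableOn f (Ioc M N) →
      ∫ y in Ioc x N, f y = (∫ y in Ioc x M, f y) + ∫ y in Ioc M N, f y := by
    intro f x M N hxM hMN h1 h2
    rw [← Ioc_union_Ioc_eq_Ioc hxM hMN,
      setIntegral_union (Ioc_disjoint_Ioc_of_le le_rfl) measurableSet_Ioc h1 h2]
  -- the master pointwise identity
  have L : ∀ z : ℝ, 0 < z →
      lam * GV z * z ^ (-b) = κ * γ / (κ + γ) * (c * (κ⁻¹ + γ⁻¹) +
        ∫ y in Ioi xs, (if z ≤ y then κ⁻¹ * z ^ κ * y ^ (-κ)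
          else κ⁻¹ + γ⁻¹ - γ⁻¹ * y ^ γ * z ^ (-γ)) * deriv h y) := by
    intro z hz
    have r1 : z ^ α * z ^ (-b) * z ^ γ = 1 := by
      rw [← Real.rpow_add hz, ← Real.rpow_add hz, show α + -b + γ = 0 by
        rw [hα, hb, hγ]; ring, Real.rpow_zero]
    have r2 : z ^ β * z ^ (-b) = z ^ κ := by
      rw [← Real.rpow_add hz]; congr 1; rw [hβ, hb, hκ]; ring
    have zinvκ : z ^ (-κ) = (z ^ κ)⁻¹ := Real.rpow_neg hz.le κ
    have zinvγ : z ^ (-γ) = (z ^ γ)⁻¹ := Real.rpow_neg hz.le γ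
    have hzκ0 : (0:ℝ) < z ^ κ := Real.rpow_pos_of_pos hz κ
    have hzγ0 : (0:ℝ) < z ^ γ := Real.rpow_pos_of_pos hz γ
    rcases le_or_gt z xs with hzxs | hzxs
    · -- z below the threshold
      have ER : (∫ y in Ioi xs, (if z ≤ y then κ⁻¹ * z ^ κ * y ^ (-κ)
            else κ⁻¹ + γ⁻¹ - γ⁻¹ * y ^ γ * z ^ (-γ)) * deriv h y)
          = κ⁻¹ * z ^ κ * (-(xs ^ (-κ) * h xs) + κ * ∫ y in Ioi xs, y ^ (-κ - 1) * h y) := by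
        rw [← P1 xs le_rfl, ← integral_const_mul]
        refine setIntegral_congr_fun measurableSet_Ioi (fun y hy => ?_)
        rw [if_pos (hzxs.trans (le_of_lt hy))]
        ring
      have EI1 : (∫ y in Ioo (0:ℝ) z, y ^ β * V y * m' y) = 2 / σ ^ 2 * c * (z ^ γ / γ) := by
        rw [← Q1 z hz, ← integral_const_mul]
        refine setIntegral_congr_fun measurableSet_Ioo (fun y hy => ?_)
        exact idA y hy.1 (hy.2.le.trans hzxs)
      have iA : IntegrableOn (fun y => y ^ α * V y * m' y) (Ioc z xs) := by
        have hIcc : Icc z xs ⊆ Ioi (0:ℝ) := fun y hy => lt_of_lt_of_le hz hy.1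
        refine IntegrableOn.congr_fun
          (((((crp (-κ - 1)).mono hIcc).integrableOn_Icc).mono_set
            Ioc_subset_Icc_self).const_mul (2 / σ ^ 2 * c)) (fun y hy => ?_) measurableSet_Ioc
        exact (idC y (hz.trans hy.1) hy.2).symm
      have iB : IntegrableOn (fun y => y ^ α * V y * m' y) (Ioi xs) :=
        IntegrableOn.congr_fun (g2.const_mul (2 / σ ^ 2))
          (fun y hy => (idD y hy).symm) measurableSet_Ioi
      have EI2 : (∫ y in Ioi z, y ^ α * V y * m' y)
          = 2 / σ ^ 2 * c * ((z ^ (-κ) - xs ^ (-κ)) / κ)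
            + 2 / σ ^ 2 * ∫ y in Ioi xs, y ^ (-κ - 1) * h y := by
        rw [splitIoi _ z xs hzxs iA iB]
        congr 1
        · rw [integral_Ioc_eq_integral_Ioo, ← Q2 z xs hz hzxs, ← integral_const_mul]
          refine setIntegral_congr_fun measurableSet_Ioo (fun y hy => ?_)
          exact idC y (hz.trans hy.1) hy.2.le
        · rw [← integral_const_mul]
          refine setIntegral_congr_fun measurableSet_Ioi (fun y hy => idD y hy)
      rw [hGV z, ER, EI1, EI2, hcxs]
      have expand : lam * ((2 * S)⁻¹ * (z ^ α * (2 / σ ^ 2 * c * (z ^ γ / γ))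
            + z ^ β * (2 / σ ^ 2 * c * ((z ^ (-κ) - xs ^ (-κ)) / κ)
              + 2 / σ ^ 2 * ∫ y in Ioi xs, y ^ (-κ - 1) * h y))) * z ^ (-b)
          = lam * (2 * S)⁻¹ * (2 / σ ^ 2) * ((z ^ α * z ^ (-b) * z ^ γ) * (c / γ)
            + (z ^ β * z ^ (-b)) * (c * ((z ^ (-κ) - xs ^ (-κ)) / κ)
              + ∫ y in Ioi xs, y ^ (-κ - 1) * h y)) := by ring
      rw [expand, hfactor, r1, r2, zinvκ]
      field_simp
      ring
    · -- z above the threshold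
      have hxz : xs ≤ z := hzxs.le
      have hIccsub : Icc xs z ⊆ Ioi (0:ℝ) := fun y hy => lt_of_lt_of_le hxs hy.1
      have r1' : z ^ α * z ^ (-b) = (z ^ γ)⁻¹ := by
        rw [inv_eq_one_div, eq_div_iff hzγ0.ne']
        exact r1
      have phiEq : ∀ y ∈ Ioc xs z, (if z ≤ y then κ⁻¹ * z ^ κ * y ^ (-κ)
          else κ⁻¹ + γ⁻¹ - γ⁻¹ * y ^ γ * z ^ (-γ)) = κ⁻¹ + γ⁻¹ - γ⁻¹ * y ^ γ * z ^ (-γ) := by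
        intro y hy
        rcases lt_or_eq_of_le hy.2 with hlt | heq
        · rw [if_neg (not_le.mpr hlt)]
        · subst heq
          rw [if_pos le_rfl, zinvκ, zinvγ]
          field_simp
          ring
      have iPa : IntegrableOn (fun y => (κ⁻¹ + γ⁻¹) * deriv h y) (Ioc xs z) :=
        (gder z).const_mul _
      have iPb : IntegrableOn (fun y => -(γ⁻¹ * z ^ (-γ)) * (y ^ γ * deriv h y)) (Ioc xs z) :=
        (gpow z γ).const_mul _
      have iP : IntegrableOn (fun y => (κ⁻¹ + γ⁻¹) * deriv h y
          + -(γ⁻¹ * z ^ (-γ)) * (y ^ γ * deriv h y)) (Ioc xs z) := iPa.add iPb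
      have iPhi1 : IntegrableOn (fun y => (if z ≤ y then κ⁻¹ * z ^ κ * y ^ (-κ)
          else κ⁻¹ + γ⁻¹ - γ⁻¹ * y ^ γ * z ^ (-γ)) * deriv h y) (Ioc xs z) := by
        refine iP.congr_fun (fun y hy => ?_) measurableSet_Ioc
        rw [phiEq y hy]
        ring
      have iPhi2 : IntegrableOn (fun y => (if z ≤ y then κ⁻¹ * z ^ κ * y ^ (-κ)
          else κ⁻¹ + γ⁻¹ - γ⁻¹ * y ^ γ * z ^ (-γ)) * deriv h y) (Ioi z) := by
        refine IntegrableOn.congr_fun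
          ((g1.mono_set (Ioi_subset_Ioi hxz)).const_mul (κ⁻¹ * z ^ κ))
          (fun y hy => ?_) measurableSet_Ioi
        rw [if_pos (le_of_lt hy)]
        ring
      have ERsplit := splitIoi _ xs z hxz iPhi1 iPhi2
      have Epiece1 : (∫ y in Ioc xs z, (if z ≤ y then κ⁻¹ * z ^ κ * y ^ (-κ)
            else κ⁻¹ + γ⁻¹ - γ⁻¹ * y ^ γ * z ^ (-γ)) * deriv h y)
          = (κ⁻¹ + γ⁻¹) * (h z - h xs) + -(γ⁻¹ * z ^ (-γ)) *
              (z ^ γ * h z - xs ^ γ * h xs - γ * ∫ y in Ioo xs z, y ^ (γ - 1) * h y) := by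
        rw [integral_Ioc_eq_integral_Ioo]
        calc (∫ y in Ioo xs z, (if z ≤ y then κ⁻¹ * z ^ κ * y ^ (-κ)
              else κ⁻¹ + γ⁻¹ - γ⁻¹ * y ^ γ * z ^ (-γ)) * deriv h y)
            = ∫ y in Ioo xs z, ((κ⁻¹ + γ⁻¹) * deriv h y
                + -(γ⁻¹ * z ^ (-γ)) * (y ^ γ * deriv h y)) :=
              setIntegral_congr_fun measurableSet_Ioo (fun y hy => by
                rw [phiEq y (Ioo_subset_Ioc_self hy)]; ring)
          _ = (κ⁻¹ + γ⁻¹) * (∫ y in Ioo xs z, deriv h y)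
                + -(γ⁻¹ * z ^ (-γ)) * ∫ y in Ioo xs z, y ^ γ * deriv h y := by
              rw [integral_add (iPa.mono_set Ioo_subset_Ioc_self)
                (iPb.mono_set Ioo_subset_Ioc_self), integral_const_mul, integral_const_mul]
          _ = (κ⁻¹ + γ⁻¹) * (h z - h xs) + -(γ⁻¹ * z ^ (-γ)) *
                (z ^ γ * h z - xs ^ γ * h xs - γ * ∫ y in Ioo xs z, y ^ (γ - 1) * h y) := by
              rw [P2' z hxz, P2 z hxz]
      have Epiece2 : (∫ y in Ioi z, (if z ≤ y then κ⁻¹ * z ^ κ * y ^ (-κ)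
            else κ⁻¹ + γ⁻¹ - γ⁻¹ * y ^ γ * z ^ (-γ)) * deriv h y)
          = κ⁻¹ * z ^ κ * (-(z ^ (-κ) * h z) + κ * ∫ y in Ioi z, y ^ (-κ - 1) * h y) := by
        rw [← P1 z hxz, ← integral_const_mul]
        exact setIntegral_congr_fun measurableSet_Ioi (fun y hy => by
          rw [if_pos (le_of_lt hy)]; ring)
      have iI1a : IntegrableOn (fun y => y ^ β * V y * m' y) (Ioc 0 xs) := by
        refine IntegrableOn.congr_fun
          (((intervalIntegrable_iff_integrableOn_Ioc_of_le hxs.le).1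
            (intervalIntegral.intervalIntegrable_rpow' (r := γ - 1) (a := 0) (b := xs)
              (by linarith))).const_mul
            (2 / σ ^ 2 * c)) (fun y hy => ?_) measurableSet_Ioc
        exact (idA y hy.1 hy.2).symm
      have iI1b : IntegrableOn (fun y => y ^ β * V y * m' y) (Ioc xs z) := by
        refine IntegrableOn.congr_fun
          (((((crp (γ - 1)).mono hIccsub).mul (hcontH.mono hIccsub)).integrableOn_Icc.mono_set
            Ioc_subset_Icc_self).const_mul (2 / σ ^ 2)) (fun y hy => ?_) measurableSet_Ioc
        exact (idB y hy.1).symm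
      have EI1 : (∫ y in Ioo (0:ℝ) z, y ^ β * V y * m' y)
          = 2 / σ ^ 2 * c * (xs ^ γ / γ)
            + 2 / σ ^ 2 * ∫ y in Ioo xs z, y ^ (γ - 1) * h y := by
        rw [← integral_Ioc_eq_integral_Ioo, splitIoc _ 0 xs z hxs.le hxz iI1a iI1b]
        congr 1
        · rw [integral_Ioc_eq_integral_Ioo, ← Q1 xs hxs, ← integral_const_mul]
          exact setIntegral_congr_fun measurableSet_Ioo (fun y hy => idA y hy.1 hy.2.le)
        · rw [integral_Ioc_eq_integral_Ioo, ← integral_const_mul]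
          exact setIntegral_congr_fun measurableSet_Ioo (fun y hy => idB y hy.1)
      have EI2 : (∫ y in Ioi z, y ^ α * V y * m' y)
          = 2 / σ ^ 2 * ∫ y in Ioi z, y ^ (-κ - 1) * h y := by
        rw [← integral_const_mul]
        exact setIntegral_congr_fun measurableSet_Ioi
          (fun y hy => idD y (lt_of_le_of_lt hxz hy))
      rw [hGV z, ERsplit, Epiece1, Epiece2, EI1, EI2, hcxs]
      have expand : lam * ((2 * S)⁻¹ * (z ^ α * (2 / σ ^ 2 * c * (xs ^ γ / γ)
            + 2 / σ ^ 2 * ∫ y in Ioo xs z, y ^ (γ - 1) * h y)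
            + z ^ β * (2 / σ ^ 2 * ∫ y in Ioi z, y ^ (-κ - 1) * h y))) * z ^ (-b)
          = lam * (2 * S)⁻¹ * (2 / σ ^ 2) * ((z ^ α * z ^ (-b)) * (c * (xs ^ γ / γ)
            + ∫ y in Ioo xs z, y ^ (γ - 1) * h y)
            + (z ^ β * z ^ (-b)) * ∫ y in Ioi z, y ^ (-κ - 1) * h y) := by ring
      rw [expand, hfactor, r1', r2, zinvκ, zinvγ]
      field_simp
      ring

  -- now the derivative computation at a fixed point x
  intro x hx
  have hMxs : xs ≤ max x xs := le_max_right _ _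
  have hM0 : 0 < max x xs := lt_of_lt_of_le hxs hMxs
  have hε : (0:ℝ) < x / 2 := by linarith
  have hballmem : ∀ w ∈ Metric.ball x (x / 2), x / 2 < w ∧ w < 3 * x / 2 := by
    intro w hw
    rw [Real.ball_eq_Ioo] at hw
    exact ⟨by linarith [hw.1], by linarith [hw.2]⟩
  -- measurability of the integrands
  have Fmeas : ∀ w : ℝ, AEStronglyMeasurable
      (fun y => (if w ≤ y then κ⁻¹ * w ^ κ * y ^ (-κ)
        else κ⁻¹ + γ⁻¹ - γ⁻¹ * y ^ γ * w ^ (-γ)) * deriv h y)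
      (volume.restrict (Ioi xs)) := by
    intro w
    apply Measurable.aestronglyMeasurable
    apply Measurable.mul _ (measurable_deriv h)
    exact Measurable.ite (measurableSet_Ici (a := w)) (meas_aux1 (κ⁻¹ * w ^ κ) (-κ))
      (by simpa using meas_aux2 (κ⁻¹ + γ⁻¹) γ⁻¹ γ (w ^ (-γ)))
  have F'meas : ∀ w : ℝ, AEStronglyMeasurable
      (fun y => (if w ≤ y then w ^ (κ - 1) * y ^ (-κ)
        else y ^ γ * w ^ (-γ - 1)) * deriv h y)
      (volume.restrict (Ioi xs)) := by
    intro w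
    apply Measurable.aestronglyMeasurable
    apply Measurable.mul _ (measurable_deriv h)
    exact Measurable.ite (measurableSet_Ici (a := w)) (meas_aux1 (w ^ (κ - 1)) (-κ))
      (meas_aux3 γ (w ^ (-γ - 1)))
  -- integrability of F x
  have hFint : Integrable (fun y => (if x ≤ y then κ⁻¹ * x ^ κ * y ^ (-κ)
      else κ⁻¹ + γ⁻¹ - γ⁻¹ * y ^ γ * x ^ (-γ)) * deriv h y)
      (volume.restrict (Ioi xs)) := by
    refine (hint1.const_mul ((κ⁻¹ + γ⁻¹) * x ^ κ)).mono' (Fmeas x) ?_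
    refine (ae_restrict_iff' measurableSet_Ioi).2 (Filter.Eventually.of_forall fun y hy => ?_)
    have hy0 : 0 < y := hxs.trans hy
    have hyκ : (0:ℝ) < y ^ κ := Real.rpow_pos_of_pos hy0 κ
    have hxκ : (0:ℝ) < x ^ κ := Real.rpow_pos_of_pos hx κ
    have hyinv : y ^ (-κ) = (y ^ κ)⁻¹ := Real.rpow_neg hy0.le κ
    have hΦb : |if x ≤ y then κ⁻¹ * x ^ κ * y ^ (-κ)
        else κ⁻¹ + γ⁻¹ - γ⁻¹ * y ^ γ * x ^ (-γ)| ≤ (κ⁻¹ + γ⁻¹) * x ^ κ * y ^ (-κ) := by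
      split_ifs with hc
      · rw [abs_of_nonneg (by positivity)]
        have : (0:ℝ) ≤ x ^ κ * y ^ (-κ) := by positivity
        have hκγinv : κ⁻¹ ≤ κ⁻¹ + γ⁻¹ := by
          have : (0:ℝ) ≤ γ⁻¹ := by positivity
          linarith
        calc κ⁻¹ * x ^ κ * y ^ (-κ) = κ⁻¹ * (x ^ κ * y ^ (-κ)) := by ring
          _ ≤ (κ⁻¹ + γ⁻¹) * (x ^ κ * y ^ (-κ)) := mul_le_mul_of_nonneg_right hκγinv this
          _ = (κ⁻¹ + γ⁻¹) * x ^ κ * y ^ (-κ) := by ring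
      · push_neg at hc
        have hyx : y ≤ x := hc.le
        have hxγ : (0:ℝ) < x ^ γ := Real.rpow_pos_of_pos hx γ
        have h1 : γ⁻¹ * y ^ γ * x ^ (-γ) ≤ γ⁻¹ := by
          have hyγ : y ^ γ ≤ x ^ γ := Real.rpow_le_rpow hy0.le hyx hγ0.le
          have hle1 : y ^ γ * (x ^ γ)⁻¹ ≤ 1 := by
            rw [← div_eq_mul_inv, div_le_one hxγ]
            exact hyγ
          calc γ⁻¹ * y ^ γ * x ^ (-γ) = γ⁻¹ * (y ^ γ * (x ^ γ)⁻¹) := by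
                rw [Real.rpow_neg hx.le γ]; ring
            _ ≤ γ⁻¹ * 1 := mul_le_mul_of_nonneg_left hle1 (by positivity)
            _ = γ⁻¹ := mul_one _
        have hκinv : (0:ℝ) ≤ κ⁻¹ := by positivity
        have h2 : (0:ℝ) ≤ γ⁻¹ * y ^ γ * x ^ (-γ) := by positivity
        have h3 : 1 ≤ x ^ κ * y ^ (-κ) := by
          rw [hyinv, ← div_eq_mul_inv, le_div_iff₀ hyκ, one_mul]
          exact Real.rpow_le_rpow hy0.le hyx hκ0.le
        rw [abs_of_nonneg (by linarith)]
        calc κ⁻¹ + γ⁻¹ - γ⁻¹ * y ^ γ * x ^ (-γ) ≤ κ⁻¹ + γ⁻¹ := by linarith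
          _ = (κ⁻¹ + γ⁻¹) * 1 := (mul_one _).symm
          _ ≤ (κ⁻¹ + γ⁻¹) * (x ^ κ * y ^ (-κ)) := by
              refine mul_le_mul_of_nonneg_left h3 (by positivity)
          _ = (κ⁻¹ + γ⁻¹) * x ^ κ * y ^ (-κ) := by ring
    rw [Real.norm_eq_abs, abs_mul]
    calc |if x ≤ y then κ⁻¹ * x ^ κ * y ^ (-κ)
          else κ⁻¹ + γ⁻¹ - γ⁻¹ * y ^ γ * x ^ (-γ)| * |deriv h y|
        ≤ (κ⁻¹ + γ⁻¹) * x ^ κ * y ^ (-κ) * |deriv h y| :=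
          mul_le_mul_of_nonneg_right hΦb (abs_nonneg _)
      _ = (κ⁻¹ + γ⁻¹) * x ^ κ * (y ^ (-κ) * |deriv h y|) := by ring
  -- the uniform bound on the derivative
  have hbound : ∀ᵐ y ∂(volume.restrict (Ioi xs)), ∀ w ∈ Metric.ball x (x / 2),
      ‖(if w ≤ y then w ^ (κ - 1) * y ^ (-κ) else y ^ γ * w ^ (-γ - 1)) * deriv h y‖
        ≤ ((x / 2) ^ (κ - 1) + (3 * x / 2) ^ (κ - 1)) * (y ^ (-κ) * |deriv h y|) := by
    refine (ae_restrict_iff' measurableSet_Ioi).2 (Filter.Eventually.of_forall fun y hy => ?_)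
    intro w hw
    obtain ⟨hw1, hw2⟩ := hballmem w hw
    have hw0 : 0 < w := lt_trans hε hw1
    have hy0 : 0 < y := hxs.trans hy
    have hwb : w ^ (κ - 1) ≤ (x / 2) ^ (κ - 1) + (3 * x / 2) ^ (κ - 1) :=
      rpow_le_add_endpoints hε hw1.le hw2.le
    have hKb : (if w ≤ y then w ^ (κ - 1) * y ^ (-κ) else y ^ γ * w ^ (-γ - 1))
        ≤ w ^ (κ - 1) * y ^ (-κ) ∧
        0 ≤ (if w ≤ y then w ^ (κ - 1) * y ^ (-κ) else y ^ γ * w ^ (-γ - 1)) := by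
      split_ifs with hc
      · exact ⟨le_rfl, by positivity⟩
      · push_neg at hc
        constructor
        · have e1 : y ^ γ = y ^ (γ + κ) * y ^ (-κ) := by
            rw [← Real.rpow_add hy0]; ring_nf
          have e2 : w ^ (γ + κ) * w ^ (-γ - 1) = w ^ (κ - 1) := by
            rw [← Real.rpow_add hw0]; ring_nf
          have h1 : y ^ (γ + κ) ≤ w ^ (γ + κ) :=
            Real.rpow_le_rpow hy0.le hc.le (by linarith)
          calc y ^ γ * w ^ (-γ - 1) = y ^ (γ + κ) * w ^ (-γ - 1) * y ^ (-κ) := by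
                rw [e1]; ring
            _ ≤ w ^ (γ + κ) * w ^ (-γ - 1) * y ^ (-κ) := by
                have : (0:ℝ) ≤ w ^ (-γ - 1) * y ^ (-κ) := by positivity
                nlinarith [Real.rpow_nonneg hw0.le (-γ - 1), Real.rpow_nonneg hy0.le (-κ),
                  Real.rpow_nonneg hy0.le (γ + κ), h1]
            _ = w ^ (κ - 1) * y ^ (-κ) := by rw [e2]
        · positivity
    rw [Real.norm_eq_abs, abs_mul, abs_of_nonneg hKb.2]
    calc (if w ≤ y then w ^ (κ - 1) * y ^ (-κ) else y ^ γ * w ^ (-γ - 1)) * |deriv h y|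
        ≤ w ^ (κ - 1) * y ^ (-κ) * |deriv h y| :=
          mul_le_mul_of_nonneg_right hKb.1 (abs_nonneg _)
      _ ≤ ((x / 2) ^ (κ - 1) + (3 * x / 2) ^ (κ - 1)) * y ^ (-κ) * |deriv h y| := by
          have : (0:ℝ) ≤ y ^ (-κ) * |deriv h y| := by positivity
          nlinarith [Real.rpow_nonneg hy0.le (-κ), abs_nonneg (deriv h y)]
      _ = ((x / 2) ^ (κ - 1) + (3 * x / 2) ^ (κ - 1)) * (y ^ (-κ) * |deriv h y|) := by ring
  -- differentiability in the parameter
  have hdiffw : ∀ᵐ y ∂(volume.restrict (Ioi xs)), ∀ w ∈ Metric.ball x (x / 2),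
      HasDerivAt (fun w => (if w ≤ y then κ⁻¹ * w ^ κ * y ^ (-κ)
        else κ⁻¹ + γ⁻¹ - γ⁻¹ * y ^ γ * w ^ (-γ)) * deriv h y)
      ((if w ≤ y then w ^ (κ - 1) * y ^ (-κ) else y ^ γ * w ^ (-γ - 1)) * deriv h y) w := by
    refine (ae_restrict_iff' measurableSet_Ioi).2 (Filter.Eventually.of_forall fun y hy => ?_)
    intro w hw
    have hw0 : 0 < w := lt_trans hε (hballmem w hw).1
    exact (psi_hasDerivAt hκ0 hγ0 (hxs.trans hy) hw0).mul_const (deriv h y)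
  have mainkey := hasDerivAt_integral_of_dominated_loc_of_deriv_le (Metric.ball_mem_nhds x hε)
    (Filter.Eventually.of_forall fun w => Fmeas w) hFint (F'meas x) hbound
    ((hint1.const_mul ((x / 2) ^ (κ - 1) + (3 * x / 2) ^ (κ - 1)))) hdiffw
  have hIF' := mainkey.1
  have hD := mainkey.2
  -- assemble everything
  have hD2 : HasDerivAt (fun w => κ * γ / (κ + γ) * (c * (κ⁻¹ + γ⁻¹) +
      ∫ y in Ioi xs, (if w ≤ y then κ⁻¹ * w ^ κ * y ^ (-κ)
        else κ⁻¹ + γ⁻¹ - γ⁻¹ * y ^ γ * w ^ (-γ)) * deriv h y))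
      (κ * γ / (κ + γ) * ∫ y in Ioi xs,
        (if x ≤ y then x ^ (κ - 1) * y ^ (-κ) else y ^ γ * x ^ (-γ - 1)) * deriv h y) x := by
    have := ((hasDerivAt_const x (c * (κ⁻¹ + γ⁻¹))).add hD).const_mul (κ * γ / (κ + γ))
    simpa using this
  have heq : (fun w => lam * GV w * w ^ (-b)) =ᶠ[nhds x] (fun w => κ * γ / (κ + γ) *
      (c * (κ⁻¹ + γ⁻¹) + ∫ y in Ioi xs, (if w ≤ y then κ⁻¹ * w ^ κ * y ^ (-κ)
        else κ⁻¹ + γ⁻¹ - γ⁻¹ * y ^ γ * w ^ (-γ)) * deriv h y)) := by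
    filter_upwards [Ioi_mem_nhds hx] with w hw
    exact L w hw
  have hDfinal : HasDerivAt (fun z => lam * GV z * z ^ (-b))
      (κ * γ / (κ + γ) * ∫ y in Ioi xs,
        (if x ≤ y then x ^ (κ - 1) * y ^ (-κ) else y ^ γ * x ^ (-γ - 1)) * deriv h y) x :=
    hD2.congr_of_eventuallyEq heq
  have iK1 : IntegrableOn (fun y => (if x ≤ y then x ^ (κ - 1) * y ^ (-κ)
      else y ^ γ * x ^ (-γ - 1)) * deriv h y) (Ioc xs (max x xs)) :=
    IntegrableOn.mono_set hIF' Ioc_subset_Ioi_self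
  have iK2 : IntegrableOn (fun y => (if x ≤ y then x ^ (κ - 1) * y ^ (-κ)
      else y ^ γ * x ^ (-γ - 1)) * deriv h y) (Ioi (max x xs)) :=
    IntegrableOn.mono_set hIF' (Ioi_subset_Ioi hMxs)
  have Eval : (∫ y in Ioi xs, (if x ≤ y then x ^ (κ - 1) * y ^ (-κ)
        else y ^ γ * x ^ (-γ - 1)) * deriv h y)
      = x ^ (κ - 1) * (∫ y in Ioi (max x xs), y ^ (-κ) * deriv h y)
        + x ^ (-γ - 1) * ∫ y in Ioo xs (max x xs), y ^ γ * deriv h y := by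
    rw [splitIoi _ xs (max x xs) hMxs iK1 iK2, add_comm]
    congr 1
    · rw [← integral_const_mul]
      refine setIntegral_congr_fun measurableSet_Ioi (fun y hy => ?_)
      have hxy : x ≤ y := le_trans (le_max_left x xs) (le_of_lt hy)
      rw [if_pos hxy]
      ring
    · rw [integral_Ioc_eq_integral_Ioo, ← integral_const_mul]
      refine setIntegral_congr_fun measurableSet_Ioo (fun y hy => ?_)
      have hylt : y < x := by
        rcases lt_max_iff.mp hy.2 with hlt | hlt
        · exact hlt
        · exact absurd hy.1 (not_lt.mpr hlt.le)
      rw [if_neg (not_le.mpr hylt)]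
      ring
  rw [Eval] at hDfinal
  exact hDfinal
end

section
/- Let μ ∈ ℝ, σ > 0, r > 0 and λ > 0. Set p = 1/2 − μ/σ², b = p + √(p² + 2r/σ²), β = p + √(p² + 2(r+λ)/σ²), α = p − √(p² + 2(r+λ)/σ²), B = β − α, and m'(y) = (2/σ²) y^{2μ/σ² − 2}. Let f : (0,∞) → [0,∞) be continuous and such that for every x > 0 the integrals ∫₀^x y^{β} f(y) m'(y) dy, ∫_x^∞ y^{α} f(y) m'(y) dy and ∫₀^x y^{b} f(y) m'(y) dy are finite, and define (G f)(x) = B^{-1}[ x^{α} ∫₀^x y^{β} f(y) m'(y) dy + x^{β} ∫_x^∞ y^{α} f(y) m'(y) dy ]. If λ(G f)(x) ≤ f(x) for all x > 0, then the function x ↦ λ(G f)(x) · x^{−b} is non-increasing on (0,∞). -/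
open Real Set MeasureTheory Filter

lemma ftc_Ioo (g : ℝ → ℝ) (hg : ∀ x : ℝ, 0 < x → IntegrableOn g (Set.Ioo 0 x))
    (hc : ContinuousOn g (Set.Ioi 0)) {x : ℝ} (hx : 0 < x) :
    HasDerivAt (fun t => ∫ y in Set.Ioo (0:ℝ) t, g y) (g x) x := by
  have key : ∀ a c : ℝ, 0 < a → a ≤ c →
      (∫ y in Set.Ioo (0:ℝ) c, g y) = (∫ y in Set.Ioo (0:ℝ) a, g y) + ∫ y in a..c, g y := by
    intro a c ha hac
    have hsplit : (∫ y in Set.Ioo (0:ℝ) c, g y)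
        = (∫ y in Set.Ioo (0:ℝ) a, g y) + ∫ y in Set.Ico a c, g y := by
      rw [← setIntegral_union (Set.disjoint_left.2 fun y hy hy' => absurd hy.2 (not_lt.2 hy'.1))
        measurableSet_Ico (hg a ha)
        ((hg (c+1) (by linarith)).mono_set (fun y hy => ⟨lt_of_lt_of_le ha hy.1, by
          rcases hy with ⟨h1, h2⟩; linarith⟩)), Set.Ioo_union_Ico_eq_Ioo ha hac]
    rw [hsplit, intervalIntegral.integral_of_le hac, integral_Ioc_eq_integral_Ioo,
      integral_Ico_eq_integral_Ioo]
  have hmeas := ContinuousOn.stronglyMeasurableAtFilter (μ := volume) isOpen_Ioi hc x hx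
  have hii : IntervalIntegrable g volume x x := by simp [intervalIntegrable_iff]
  have hd : HasDerivAt (fun t => (∫ y in Set.Ioo (0:ℝ) x, g y) + ∫ y in x..t, g y) (g x) x :=
    (intervalIntegral.integral_hasDerivAt_right hii hmeas
      (hc.continuousAt (Ioi_mem_nhds hx))).const_add (∫ y in Set.Ioo (0:ℝ) x, g y)
  apply hd.congr_of_eventuallyEq
  filter_upwards [Ioi_mem_nhds hx] with t ht
  rcases le_total x t with h | h
  · exact key x t hx h
  · have := key t x ht h
    rw [intervalIntegral.integral_symm]
    linarith [this]

lemma ftc_Ioi (g : ℝ → ℝ) (hg : ∀ x : ℝ, 0 < x → IntegrableOn g (Set.Ioi x))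
    (hc : ContinuousOn g (Set.Ioi 0)) {x : ℝ} (hx : 0 < x) :
    HasDerivAt (fun t => ∫ y in Set.Ioi t, g y) (-(g x)) x := by
  have key : ∀ a c : ℝ, 0 < a → a ≤ c →
      (∫ y in Set.Ioi a, g y) = (∫ y in a..c, g y) + ∫ y in Set.Ioi c, g y := by
    intro a c ha hac
    have h2 : (∫ y in Set.Ioc a c ∪ Set.Ioi c, g y)
        = (∫ y in Set.Ioc a c, g y) + ∫ y in Set.Ioi c, g y :=
      setIntegral_union (Set.disjoint_left.2 fun y hy hy' => absurd hy.2 (not_le.2 hy'))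
        measurableSet_Ioi ((hg a ha).mono_set Set.Ioc_subset_Ioi_self)
        (hg c (lt_of_lt_of_le ha hac))
    rw [Set.Ioc_union_Ioi_eq_Ioi hac] at h2
    rw [h2, intervalIntegral.integral_of_le hac]
  have hmeas := ContinuousOn.stronglyMeasurableAtFilter (μ := volume) isOpen_Ioi hc x hx
  have hii : IntervalIntegrable g volume x x := by simp [intervalIntegrable_iff]
  have hd : HasDerivAt (fun t => (∫ y in Set.Ioi x, g y) - ∫ y in x..t, g y) (-(g x)) x := by
    simpa using ((intervalIntegral.integral_hasDerivAt_right hii hmeas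
      (hc.continuousAt (Ioi_mem_nhds hx))).const_sub (∫ y in Set.Ioi x, g y))
  apply hd.congr_of_eventuallyEq
  filter_upwards [Ioi_mem_nhds hx] with t ht
  rcases le_total x t with h | h
  · have := key x t hx h
    linarith [this]
  · have := key t x ht h
    rw [intervalIntegral.integral_symm]
    linarith [this]

lemma rpow_tendsto_zero {c : ℝ} (hc : 0 < c) :
    Tendsto (fun x : ℝ => x ^ c) (nhdsWithin 0 (Set.Ioi 0)) (nhds 0) := by
  have h := (Real.continuousAt_rpow_const 0 c (Or.inr hc.le)).tendsto
  rw [Real.zero_rpow (ne_of_gt hc)] at h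
  exact h.mono_left nhdsWithin_le_nhds

lemma lim1 {φ : ℝ → ℝ} {b β : ℝ} (hbβ : b < β) (hφ : ∀ y ∈ Set.Ioo (0:ℝ) 1, 0 ≤ φ y)
    (hbint : IntegrableOn (fun y => y ^ b * φ y) (Set.Ioo 0 1))
    (hβmeas : AEStronglyMeasurable (fun y => y ^ β * φ y) (volume.restrict (Set.Ioo (0:ℝ) 1))) :
    Tendsto (fun x => x ^ (b - β) * ∫ y in Set.Ioo (0:ℝ) x, y ^ β * φ y)
      (nhdsWithin 0 (Set.Ioi 0)) (nhds 0) := by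
  have key : Tendsto (fun x => ∫ y in Set.Ioo (0:ℝ) 1,
      (Set.Iio x).indicator (fun y => x ^ (b - β) * (y ^ β * φ y)) y)
      (nhdsWithin 0 (Set.Ioi 0)) (nhds (∫ _ in Set.Ioo (0:ℝ) 1, (0:ℝ))) := by
    apply tendsto_integral_filter_of_dominated_convergence (bound := fun y => y ^ b * φ y)
    · filter_upwards with x
      exact (hβmeas.const_mul _).indicator measurableSet_Iio
    · filter_upwards [self_mem_nhdsWithin] with x hx
      refine (ae_restrict_iff' measurableSet_Ioo).2 (Filter.Eventually.of_forall ?_)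
      intro y hy
      by_cases hyx : y ∈ Set.Iio x
      · rw [Set.indicator_of_mem hyx]
        have hy0 : (0:ℝ) < y := hy.1
        have hφy := hφ y hy
        have h1 : x ^ (b - β) ≤ y ^ (b - β) :=
          Real.rpow_le_rpow_of_nonpos hy0 (le_of_lt hyx) (by linarith)
        have h2 : (0:ℝ) ≤ y ^ β * φ y := mul_nonneg (Real.rpow_pos_of_pos hy0 β).le hφy
        have h3 : x ^ (b - β) * (y ^ β * φ y) ≤ y ^ (b - β) * (y ^ β * φ y) :=
          mul_le_mul_of_nonneg_right h1 h2
        rw [Real.norm_eq_abs, abs_of_nonneg (mul_nonneg (Real.rpow_nonneg (le_of_lt (mem_Ioi.1 hx)) _) h2)]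
        calc x ^ (b - β) * (y ^ β * φ y) ≤ y ^ (b - β) * (y ^ β * φ y) := h3
          _ = y ^ b * φ y := by
              rw [← mul_assoc, ← Real.rpow_add hy0]; ring_nf
      · rw [Set.indicator_of_notMem hyx]
        simpa using mul_nonneg (Real.rpow_pos_of_pos hy.1 b).le (hφ y hy)
    · exact hbint
    · refine (ae_restrict_iff' measurableSet_Ioo).2 (Filter.Eventually.of_forall ?_)
      intro y hy
      have : ∀ᶠ x in nhdsWithin 0 (Set.Ioi 0),
          (Set.Iio x).indicator (fun z => x ^ (b - β) * (z ^ β * φ z)) y = 0 := by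
        filter_upwards [Ioo_mem_nhdsGT_of_mem (Set.left_mem_Ico.2 hy.1)] with x hx
        exact Set.indicator_of_notMem (by simp [Set.mem_Iio]; linarith [hx.2]) _
      exact Tendsto.congr' (this.mono fun x hx => hx.symm) tendsto_const_nhds
  rw [integral_zero] at key
  apply key.congr'
  filter_upwards [Ioo_mem_nhdsGT_of_mem (Set.left_mem_Ico.2 one_pos)] with x hx
  rw [setIntegral_indicator measurableSet_Iio, Set.Ioo_inter_Iio,
    min_eq_right hx.2.le, MeasureTheory.integral_const_mul]

lemma lim2 {φ : ℝ → ℝ} {b α : ℝ} (hαb : α < b) (hφ : ∀ y ∈ Set.Ioo (0:ℝ) 1, 0 ≤ φ y)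
    (hbint : IntegrableOn (fun y => y ^ b * φ y) (Set.Ioo 0 1))
    (hαmeas : AEStronglyMeasurable (fun y => y ^ α * φ y) (volume.restrict (Set.Ioo (0:ℝ) 1)))
    (hJ : ∀ x : ℝ, 0 < x → IntegrableOn (fun y => y ^ α * φ y) (Set.Ioi x)) :
    Tendsto (fun x => x ^ (b - α) * ∫ y in Set.Ioi x, y ^ α * φ y)
      (nhdsWithin 0 (Set.Ioi 0)) (nhds 0) := by
  have hsplit : ∀ x : ℝ, 0 < x → x ≤ 1 → (∫ y in Set.Ioi x, y ^ α * φ y)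
      = (∫ y in Set.Ioc x 1, y ^ α * φ y) + ∫ y in Set.Ioi (1:ℝ), y ^ α * φ y := by
    intro x hx hx1
    have h2 := setIntegral_union (f := fun y => y ^ α * φ y) (μ := volume)
      (s := Set.Ioc x 1) (t := Set.Ioi (1:ℝ))
      (Set.disjoint_left.2 fun y hy hy' => absurd hy.2 (not_le.2 hy'))
      measurableSet_Ioi ((hJ x hx).mono_set Set.Ioc_subset_Ioi_self) (hJ 1 one_pos)
    rw [Set.Ioc_union_Ioi_eq_Ioi hx1] at h2
    exact h2
  have key1 : Tendsto (fun x => ∫ y in Set.Ioo (0:ℝ) 1,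
      (Set.Ioi x).indicator (fun y => x ^ (b - α) * (y ^ α * φ y)) y)
      (nhdsWithin 0 (Set.Ioi 0)) (nhds (∫ _ in Set.Ioo (0:ℝ) 1, (0:ℝ))) := by
    apply tendsto_integral_filter_of_dominated_convergence (bound := fun y => y ^ b * φ y)
    · filter_upwards with x
      exact (hαmeas.const_mul _).indicator measurableSet_Ioi
    · filter_upwards [self_mem_nhdsWithin] with x hx
      refine (ae_restrict_iff' measurableSet_Ioo).2 (Filter.Eventually.of_forall ?_)
      intro y hy
      by_cases hyx : y ∈ Set.Ioi x
      · rw [Set.indicator_of_mem hyx]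
        have hy0 : (0:ℝ) < y := hy.1
        have hx0 : (0:ℝ) < x := mem_Ioi.1 hx
        have hφy := hφ y hy
        have h1 : x ^ (b - α) ≤ y ^ (b - α) :=
          Real.rpow_le_rpow hx0.le (le_of_lt hyx) (by linarith)
        have h2 : (0:ℝ) ≤ y ^ α * φ y := mul_nonneg (Real.rpow_pos_of_pos hy0 α).le hφy
        rw [Real.norm_eq_abs, abs_of_nonneg (mul_nonneg (Real.rpow_nonneg hx0.le _) h2)]
        calc x ^ (b - α) * (y ^ α * φ y) ≤ y ^ (b - α) * (y ^ α * φ y) :=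
              mul_le_mul_of_nonneg_right h1 h2
          _ = y ^ b * φ y := by
              rw [← mul_assoc, ← Real.rpow_add hy0]; ring_nf
      · rw [Set.indicator_of_notMem hyx]
        simpa using mul_nonneg (Real.rpow_pos_of_pos hy.1 b).le (hφ y hy)
    · exact hbint
    · refine (ae_restrict_iff' measurableSet_Ioo).2 (Filter.Eventually.of_forall ?_)
      intro y hy
      have hcong : ∀ᶠ x in nhdsWithin 0 (Set.Ioi 0),
          (Set.Ioi x).indicator (fun z => x ^ (b - α) * (z ^ α * φ z)) y
            = x ^ (b - α) * (y ^ α * φ y) := by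
        filter_upwards [Ioo_mem_nhdsGT_of_mem (Set.left_mem_Ico.2 hy.1)] with x hx
        exact Set.indicator_of_mem (Set.mem_Ioi.2 hx.2) _
      have hlim : Tendsto (fun x : ℝ => x ^ (b - α) * (y ^ α * φ y))
          (nhdsWithin 0 (Set.Ioi 0)) (nhds 0) := by
        simpa using (rpow_tendsto_zero (by linarith : (0:ℝ) < b - α)).mul_const (y ^ α * φ y)
      exact Tendsto.congr' (hcong.mono fun x hx => hx.symm) hlim
  rw [integral_zero] at key1
  have key2 : Tendsto (fun x : ℝ => x ^ (b - α) * ∫ y in Set.Ioi (1:ℝ), y ^ α * φ y)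
      (nhdsWithin 0 (Set.Ioi 0)) (nhds 0) := by
    simpa using (rpow_tendsto_zero (by linarith : (0:ℝ) < b - α)).mul_const
      (∫ y in Set.Ioi (1:ℝ), y ^ α * φ y)
  have := key1.add key2
  rw [add_zero] at this
  apply this.congr'
  filter_upwards [Ioo_mem_nhdsGT_of_mem (Set.left_mem_Ico.2 one_pos)] with x hx
  rw [setIntegral_indicator measurableSet_Ioi, Set.Ioo_inter_Ioi, max_eq_right hx.1.le,
    MeasureTheory.integral_const_mul, hsplit x hx.1 hx.2.le,
    integral_Ioc_eq_integral_Ioo, mul_add]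

set_option maxHeartbeats 2000000 in
/-- For geometric Brownian motion, if `f` is continuous, nonnegative and satisfies
`λ(Gf) ≤ f` (as holds for `r`-excessive functions), where `G` is the Green-kernel resolvent
at rate `r+λ`, then the ratio `x ↦ λ(Gf)(x) / x^b` is non-increasing on `(0,∞)`. -/
theorem resolvent_ratio_antitone
    (μ σ r lam : ℝ) (hσ : 0 < σ) (hr : 0 < r) (hlam : 0 < lam)
    (p b β α B : ℝ)
    (hp : p = 1 / 2 - μ / σ ^ 2)
    (hb : b = p + Real.sqrt (p ^ 2 + 2 * r / σ ^ 2))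
    (hβ : β = p + Real.sqrt (p ^ 2 + 2 * (r + lam) / σ ^ 2))
    (hα : α = p - Real.sqrt (p ^ 2 + 2 * (r + lam) / σ ^ 2))
    (hB : B = β - α)
    (m' : ℝ → ℝ) (hm : ∀ y : ℝ, m' y = 2 / σ ^ 2 * y ^ (2 * μ / σ ^ 2 - 2))
    (f : ℝ → ℝ)
    (hfcont : ContinuousOn f (Set.Ioi 0))
    (hfnonneg : ∀ x : ℝ, 0 < x → 0 ≤ f x)
    (hint : ∀ x : ℝ, 0 < x →
      IntegrableOn (fun y => y ^ β * f y * m' y) (Set.Ioo 0 x)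
      ∧ IntegrableOn (fun y => y ^ α * f y * m' y) (Set.Ioi x)
      ∧ IntegrableOn (fun y => y ^ b * f y * m' y) (Set.Ioo 0 x))
    (G : ℝ → ℝ)
    (hG : ∀ x : ℝ, G x = B⁻¹ *
      (x ^ α * (∫ y in Set.Ioo (0 : ℝ) x, y ^ β * f y * m' y)
        + x ^ β * (∫ y in Set.Ioi x, y ^ α * f y * m' y)))
    (hle : ∀ x : ℝ, 0 < x → lam * G x ≤ f x) :
    AntitoneOn (fun x => lam * G x * x ^ (-b)) (Set.Ioi 0) := by
  have hσ2 : (0:ℝ) < σ ^ 2 := by positivity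
  have hs2pos : 0 < Real.sqrt (p ^ 2 + 2 * (r + lam) / σ ^ 2) :=
    Real.sqrt_pos.2 (by positivity)
  have hsbpos : 0 < Real.sqrt (p ^ 2 + 2 * r / σ ^ 2) := Real.sqrt_pos.2 (by positivity)
  have hsblt : Real.sqrt (p ^ 2 + 2 * r / σ ^ 2)
      < Real.sqrt (p ^ 2 + 2 * (r + lam) / σ ^ 2) := by
    apply Real.sqrt_lt_sqrt (by positivity)
    have : 2 * r / σ ^ 2 < 2 * (r + lam) / σ ^ 2 := by
      gcongr
      linarith
    linarith
  have hbα : α < b := by rw [hb, hα]; linarith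
  have hβb : b < β := by rw [hb, hβ]; linarith
  have hBpos : 0 < B := by rw [hB, hβ, hα]; linarith
  have hprod : (β - b) * (b - α) = 2 * lam / σ ^ 2 := by
    have e1 : Real.sqrt (p ^ 2 + 2 * (r + lam) / σ ^ 2) ^ 2
        = p ^ 2 + 2 * (r + lam) / σ ^ 2 := Real.sq_sqrt (by positivity)
    have e2 : Real.sqrt (p ^ 2 + 2 * r / σ ^ 2) ^ 2
        = p ^ 2 + 2 * r / σ ^ 2 := Real.sq_sqrt (by positivity)
    rw [hb, hβ, hα]
    have hd : 2 * (r + lam) / σ ^ 2 - 2 * r / σ ^ 2 = 2 * lam / σ ^ 2 := by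
      field_simp; ring
    nlinarith [e1, e2]
  have hαβsum : α + β = 1 - 2 * μ / σ ^ 2 := by
    rw [hα, hβ, hp]; ring
  -- continuity facts
  have hrpow : ∀ c : ℝ, ContinuousOn (fun y : ℝ => y ^ c) (Set.Ioi 0) := fun c y hy =>
    (Real.continuousAt_rpow_const y c (Or.inl (ne_of_gt hy))).continuousWithinAt
  have hmcont : ContinuousOn m' (Set.Ioi 0) := by
    refine (continuousOn_const.mul (hrpow (2 * μ / σ ^ 2 - 2))).congr fun y _ => hm y
  have hgcont : ∀ c : ℝ, ContinuousOn (fun y => y ^ c * f y * m' y) (Set.Ioi 0) := fun c =>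
    ((hrpow c).mul hfcont).mul hmcont
  have hmnonneg : ∀ y : ℝ, 0 < y → 0 ≤ m' y := fun y hy => by
    rw [hm y]; positivity
  set I : ℝ → ℝ := fun t => ∫ y in Set.Ioo (0:ℝ) t, y ^ β * f y * m' y with hI
  set J : ℝ → ℝ := fun t => ∫ y in Set.Ioi t, y ^ α * f y * m' y with hJ
  have hIderiv : ∀ x : ℝ, 0 < x → HasDerivAt I (x ^ β * f x * m' x) x := fun x hx =>
    ftc_Ioo _ (fun t ht => (hint t ht).1) (hgcont β) hx
  have hJderiv : ∀ x : ℝ, 0 < x → HasDerivAt J (-(x ^ α * f x * m' x)) x := fun x hx =>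
    ftc_Ioi _ (fun t ht => (hint t ht).2.1) (hgcont α) hx
  have hGx : ∀ z : ℝ, G z = B⁻¹ * (z ^ α * I z + z ^ β * J z) := fun z => hG z
  set W : ℝ → ℝ := fun t => (α - b) * t ^ (b - β) * I t + (β - b) * t ^ (b - α) * J t with hW
  have hWderiv : ∀ x : ℝ, 0 < x →
      HasDerivAt W (B * (2 / σ ^ 2) * x ^ (b - 1 - (α + β)) * (lam * G x - f x)) x := by
    intro x hx
    have hxne : x ≠ 0 := ne_of_gt hx
    have h1 : HasDerivAt (fun t : ℝ => (α - b) * t ^ (b - β) * I t)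
        ((α - b) * ((b - β) * x ^ (b - β - 1)) * I x
          + (α - b) * x ^ (b - β) * (x ^ β * f x * m' x)) x :=
      (((Real.hasDerivAt_rpow_const (p := b - β) (Or.inl hxne)).const_mul (α - b)).mul
        (hIderiv x hx))
    have h2 : HasDerivAt (fun t : ℝ => (β - b) * t ^ (b - α) * J t)
        ((β - b) * ((b - α) * x ^ (b - α - 1)) * J x
          + (β - b) * x ^ (b - α) * -(x ^ α * f x * m' x)) x :=
      (((Real.hasDerivAt_rpow_const (p := b - α) (Or.inl hxne)).const_mul (β - b)).mul
        (hJderiv x hx))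
    have hsum := h1.add h2
    have heq : (α - b) * ((b - β) * x ^ (b - β - 1)) * I x
          + (α - b) * x ^ (b - β) * (x ^ β * f x * m' x)
          + ((β - b) * ((b - α) * x ^ (b - α - 1)) * J x
          + (β - b) * x ^ (b - α) * -(x ^ α * f x * m' x))
        = B * (2 / σ ^ 2) * x ^ (b - 1 - (α + β)) * (lam * G x - f x) := by
      have hm'x : m' x = 2 / σ ^ 2 * x ^ (-1 - (α + β)) := by
        rw [hm x, show 2 * μ / σ ^ 2 - 2 = -1 - (α + β) by linarith]
      rw [hGx x, hm'x]
      have hXα : (0:ℝ) < x ^ α := Real.rpow_pos_of_pos hx α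
      have hXβ : (0:ℝ) < x ^ β := Real.rpow_pos_of_pos hx β
      have F1 : x ^ (b - β - 1) = x ^ b / x ^ β / x := by
        rw [Real.rpow_sub hx, Real.rpow_sub hx, Real.rpow_one]
      have F2 : x ^ (b - β) = x ^ b / x ^ β := by rw [Real.rpow_sub hx]
      have F3 : x ^ (b - α - 1) = x ^ b / x ^ α / x := by
        rw [Real.rpow_sub hx, Real.rpow_sub hx, Real.rpow_one]
      have F4 : x ^ (b - α) = x ^ b / x ^ α := by rw [Real.rpow_sub hx]
      have F5 : x ^ (b - 1 - (α + β)) = x ^ b / x / (x ^ α * x ^ β) := by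
        rw [Real.rpow_sub hx, Real.rpow_sub hx, Real.rpow_one, Real.rpow_add hx]
      have F6 : x ^ (-1 - (α + β)) = x⁻¹ / (x ^ α * x ^ β) := by
        rw [Real.rpow_sub hx, Real.rpow_add hx, Real.rpow_neg_one]
      rw [F1, F2, F3, F4, F5, F6]
      have hc1 : (α - b) * (b - β) = 2 * lam / σ ^ 2 := by nlinarith [hprod]
      have hc2 : B * B⁻¹ = 1 := mul_inv_cancel₀ (ne_of_gt hBpos)
      have hP : (β - b) * (b - α) * σ ^ 2 = 2 * lam := by
        rw [hprod]; field_simp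
      field_simp
      linear_combination (I x * x ^ α + x ^ β * J x) * hP + 2 * f x * hB
    exact heq ▸ hsum
  -- W is antitone on (0, ∞)
  have hWcont : ContinuousOn W (Set.Ioi 0) := fun x hx =>
    ((hWderiv x hx).continuousAt).continuousWithinAt
  have hWanti : AntitoneOn W (Set.Ioi 0) := by
    apply antitoneOn_of_deriv_nonpos (convex_Ioi 0) hWcont
    · rw [interior_Ioi]
      exact fun x hx => ((hWderiv x hx).differentiableAt).differentiableWithinAt
    · rw [interior_Ioi]
      intro x hx
      rw [(hWderiv x hx).deriv]
      apply mul_nonpos_of_nonneg_of_nonpos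
      · have := Real.rpow_pos_of_pos hx (b - 1 - (α + β))
        positivity
      · linarith [hle x hx]
  -- W tends to 0 at 0+
  have hWlim : Tendsto W (nhdsWithin 0 (Set.Ioi 0)) (nhds 0) := by
    have hφ : ∀ y ∈ Set.Ioo (0:ℝ) 1, 0 ≤ f y * m' y := fun y hy =>
      mul_nonneg (hfnonneg y hy.1) (hmnonneg y hy.1)
    have hbint : IntegrableOn (fun y => y ^ b * (f y * m' y)) (Set.Ioo 0 1) :=
      ((hint 1 one_pos).2.2).congr_fun (fun y _ => by ring) measurableSet_Ioo
    have hJint : ∀ x : ℝ, 0 < x → IntegrableOn (fun y => y ^ α * (f y * m' y)) (Set.Ioi x) :=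
      fun x hx => ((hint x hx).2.1).congr_fun (fun y _ => by ring) measurableSet_Ioi
    have hβmeas : AEStronglyMeasurable (fun y => y ^ β * (f y * m' y))
        (volume.restrict (Set.Ioo (0:ℝ) 1)) :=
      (((hgcont β).mono (Set.Ioo_subset_Ioi_self)).aestronglyMeasurable
        measurableSet_Ioo).congr (Filter.Eventually.of_forall fun y => by ring)
    have hαmeas : AEStronglyMeasurable (fun y => y ^ α * (f y * m' y))
        (volume.restrict (Set.Ioo (0:ℝ) 1)) :=
      (((hgcont α).mono (Set.Ioo_subset_Ioi_self)).aestronglyMeasurable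
        measurableSet_Ioo).congr (Filter.Eventually.of_forall fun y => by ring)
    have l1 := (lim1 hβb hφ hbint hβmeas).const_mul (α - b)
    have l2 := (lim2 hbα hφ hbint hαmeas hJint).const_mul (β - b)
    have lsum := l1.add l2
    rw [mul_zero, mul_zero, add_zero] at lsum
    apply lsum.congr
    intro x
    simp only [hW, hI, hJ]
    have e1 : (∫ y in Set.Ioo (0:ℝ) x, y ^ β * (f y * m' y))
        = ∫ y in Set.Ioo (0:ℝ) x, y ^ β * f y * m' y :=
      setIntegral_congr_fun measurableSet_Ioo fun y _ => by ring
    have e2 : (∫ y in Set.Ioi x, y ^ α * (f y * m' y))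
        = ∫ y in Set.Ioi x, y ^ α * f y * m' y :=
      setIntegral_congr_fun measurableSet_Ioi fun y _ => by ring
    rw [e1, e2]; ring
  -- W ≤ 0 on (0, ∞)
  have hWle : ∀ x : ℝ, 0 < x → W x ≤ 0 := by
    intro x hx
    refine ge_of_tendsto hWlim ?_
    filter_upwards [Ioo_mem_nhdsGT_of_mem (Set.left_mem_Ico.2 hx)] with t ht
    exact hWanti ht.1 hx ht.2.le
  -- derivative of the target ratio
  have hTderiv : ∀ x : ℝ, 0 < x → HasDerivAt (fun t => lam * G t * t ^ (-b))
      (lam * B⁻¹ * x ^ (α + β - 2 * b - 1) * W x) x := by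
    intro x hx
    have hxne : x ≠ 0 := ne_of_gt hx
    have h1 : HasDerivAt (fun t : ℝ => t ^ α * I t + t ^ β * J t)
        (α * x ^ (α - 1) * I x + x ^ α * (x ^ β * f x * m' x)
          + (β * x ^ (β - 1) * J x + x ^ β * -(x ^ α * f x * m' x))) x :=
      ((Real.hasDerivAt_rpow_const (p := α) (Or.inl hxne)).mul (hIderiv x hx)).add
        ((Real.hasDerivAt_rpow_const (p := β) (Or.inl hxne)).mul (hJderiv x hx))
    have h3 := ((h1.const_mul B⁻¹).const_mul lam).mul
      (Real.hasDerivAt_rpow_const (p := -b) (Or.inl hxne))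
    have heq : lam * (B⁻¹ * (α * x ^ (α - 1) * I x + x ^ α * (x ^ β * f x * m' x)
          + (β * x ^ (β - 1) * J x + x ^ β * -(x ^ α * f x * m' x)))) * x ^ (-b)
          + lam * (B⁻¹ * (x ^ α * I x + x ^ β * J x)) * (-b * x ^ (-b - 1))
        = lam * B⁻¹ * x ^ (α + β - 2 * b - 1) * W x := by
      have hXb : (0:ℝ) < x ^ b := Real.rpow_pos_of_pos hx b
      have F1 : x ^ (α - 1) = x ^ α / x := by rw [Real.rpow_sub hx, Real.rpow_one]
      have F2 : x ^ (β - 1) = x ^ β / x := by rw [Real.rpow_sub hx, Real.rpow_one]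
      have F3 : x ^ (-b) = (x ^ b)⁻¹ := Real.rpow_neg hx.le b
      have F4 : x ^ (-b - 1) = (x ^ b)⁻¹ / x := by
        rw [Real.rpow_sub hx, Real.rpow_one, Real.rpow_neg hx.le]
      have F5 : x ^ (α + β - 2 * b - 1) = x ^ α * x ^ β / (x ^ b * x ^ b) / x := by
        rw [Real.rpow_sub hx (α + β - 2 * b) 1, Real.rpow_one,
          Real.rpow_sub hx (α + β) (2 * b), Real.rpow_add hx α β,
          show (2:ℝ) * b = b + b by ring, Real.rpow_add hx b b]
      have F6 : x ^ (b - β) = x ^ b / x ^ β := by rw [Real.rpow_sub hx]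
      have F7 : x ^ (b - α) = x ^ b / x ^ α := by rw [Real.rpow_sub hx]
      simp only [hW]
      rw [F1, F2, F3, F4, F5, F6, F7]
      have hXα : (0:ℝ) < x ^ α := Real.rpow_pos_of_pos hx α
      have hXβ : (0:ℝ) < x ^ β := Real.rpow_pos_of_pos hx β
      field_simp
      ring
    exact (heq ▸ h3).congr_of_eventuallyEq <| by
      filter_upwards [Ioi_mem_nhds hx] with t ht
      rw [hGx t]; rfl
  apply antitoneOn_of_deriv_nonpos (convex_Ioi 0)
  · exact fun x hx => (hTderiv x hx).continuousAt.continuousWithinAt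
  · rw [interior_Ioi]
    exact fun x hx => (hTderiv x hx).differentiableAt.differentiableWithinAt
  · rw [interior_Ioi]
    intro x hx
    rw [(hTderiv x hx).deriv]
    exact mul_nonpos_of_nonneg_of_nonpos
      (mul_nonneg (mul_nonneg hlam.le (inv_nonneg.2 hBpos.le))
        (Real.rpow_pos_of_pos hx _).le)
      (hWle x hx)
end
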